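/- arXiv:1701.00254 — 5 statements merged into one kernel-verified Lean document; each statement's English description precedes it below -/
import Mathlib

section
/- Assume p is a prime not dividing D. Let S2 be a finite subset of M(Δ) and let Q1, ..., Qk be points of M(Δ) whose weights w(Qi) are integers. Let S1 be the multiset obtained as the disjoint union of S2 with the k translates □^Int + Q1, ..., □^Int + Qk of the lattice points of the fundamental parallelogram. Then h2(S1) = h2(S2). -/
open Finset

noncomputable section

/-- The weight of a lattice point `P`: `w(P) = ((b1-b2)*x + (a2-a1)*y) / D`
where `D = a2*b1 - a1*b2`. -/
def wt (a1 b1 a2 b2 : ℤ) (P : ℤ × ℤ) : ℚ :=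
  (((b1 - b2) * P.1 + (a2 - a1) * P.2 : ℤ) : ℚ) / ((a2 * b1 - a1 * b2 : ℤ) : ℚ)

/-- The lattice points of the cone spanned by the triangle with vertices
`O`, `P1 = (a1,b1)`, `P2 = (a2,b2)`. -/
def MDelta (a1 b1 a2 b2 : ℤ) : Set (ℤ × ℤ) :=
  {P | ∃ s t : ℚ, 0 ≤ s ∧ 0 ≤ t ∧
    (P.1 : ℚ) = s * a1 + t * a2 ∧ (P.2 : ℚ) = s * b1 + t * b2}

/-- The lattice generated by `P1` and `P2`. -/
def Lambda (a1 b1 a2 b2 : ℤ) : Set (ℤ × ℤ) :=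
  {P | ∃ m n : ℤ, P = (m * a1 + n * a2, m * b1 + n * b2)}

/-- The lattice points of the fundamental parallelogram
`{s*P1 + t*P2 : 0 ≤ s,t < 1}`. -/
def squareInt (a1 b1 a2 b2 : ℤ) : Set (ℤ × ℤ) :=
  {P | ∃ s t : ℚ, 0 ≤ s ∧ s < 1 ∧ 0 ≤ t ∧ t < 1 ∧
    (P.1 : ℚ) = s * a1 + t * a2 ∧ (P.2 : ℚ) = s * b1 + t * b2}

/-- `h(S, τ) = Σ_{P ∈ S} ⌈w(p·τ(P) - P)⌉` for a multiset indexed by `f` and a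
permutation `τ` of the indices. -/
def hTau (p a1 b1 a2 b2 : ℤ) {n : ℕ} (f : Fin n → ℤ × ℤ)
    (τ : Equiv.Perm (Fin n)) : ℤ :=
  ∑ i, ⌈wt a1 b1 a2 b2 (p • f (τ i) - f i)⌉

/-- `h2(S, τ) = Σ_{P ∈ S} R(w(p·τ(P) - P))` where `R(r) = ⌈r⌉ - r`. -/
def h2Tau (p a1 b1 a2 b2 : ℤ) {n : ℕ} (f : Fin n → ℤ × ℤ)
    (τ : Equiv.Perm (Fin n)) : ℚ :=
  ∑ i, ((⌈wt a1 b1 a2 b2 (p • f (τ i) - f i)⌉ : ℚ)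
        - wt a1 b1 a2 b2 (p • f (τ i) - f i))

/-- A canonical indexing of a multiset. -/
def listFn (S : Multiset (ℤ × ℤ)) : Fin S.toList.length → ℤ × ℤ := S.toList.get

/-- `h(S)`: the minimum of `h(S,τ)` over all permutations `τ` of `S`. -/
def hMin (p a1 b1 a2 b2 : ℤ) (S : Multiset (ℤ × ℤ)) : ℤ :=
  Finset.univ.inf' (Finset.univ_nonempty_iff.mpr ⟨1⟩)
    fun τ : Equiv.Perm (Fin S.toList.length) => hTau p a1 b1 a2 b2 (listFn S) τ

/-- `h2(S)`: the minimum of `h2(S,τ)` over all permutations `τ` of `S`. -/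
def h2Min (p a1 b1 a2 b2 : ℤ) (S : Multiset (ℤ × ℤ)) : ℚ :=
  Finset.univ.inf' (Finset.univ_nonempty_iff.mpr ⟨1⟩)
    fun τ : Equiv.Perm (Fin S.toList.length) => h2Tau p a1 b1 a2 b2 (listFn S) τ


namespace St3Aux

/-- min cost of a matching between `a` and `b` with cost `Int.fract (a i - b j)`. -/
def mc (ι : Type) [Fintype ι] [DecidableEq ι] (a b : ι → ℚ) : ℚ :=
  Finset.univ.inf' (Finset.univ_nonempty_iff.mpr ⟨1⟩)
    (fun τ : Equiv.Perm ι => ∑ i, Int.fract (a i - b (τ i)))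

theorem mc_le (ι : Type) [Fintype ι] [DecidableEq ι] (a b : ι → ℚ) (τ : Equiv.Perm ι) :
    mc ι a b ≤ ∑ i, Int.fract (a i - b (τ i)) :=
  Finset.inf'_le _ (Finset.mem_univ τ)

theorem le_mc (ι : Type) [Fintype ι] [DecidableEq ι] (a b : ι → ℚ) (c : ℚ)
    (h : ∀ τ : Equiv.Perm ι, c ≤ ∑ i, Int.fract (a i - b (τ i))) : c ≤ mc ι a b :=
  Finset.le_inf' _ _ fun τ _ => h τ

theorem mc_transfer {ι κ : Type} [Fintype ι] [DecidableEq ι] [Fintype κ] [DecidableEq κ]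
    (e : ι ≃ κ) (a b : κ → ℚ) : mc κ a b = mc ι (a ∘ e) (b ∘ e) := by
  apply le_antisymm
  · apply le_mc
    intro τ
    calc mc κ a b ≤ ∑ k, Int.fract (a k - b (((e.symm.trans τ).trans e) k)) := mc_le _ _ _ _
      _ = ∑ i, Int.fract ((a ∘ e) i - (b ∘ e) (τ i)) :=
          (Fintype.sum_equiv e _ _ (fun i => by simp [Equiv.trans_apply])).symm
  · apply le_mc
    intro τ
    calc mc ι (a ∘ e) (b ∘ e)
        ≤ ∑ i, Int.fract ((a ∘ e) i - (b ∘ e) (((e.trans τ).trans e.symm) i)) := mc_le _ _ _ _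
      _ = ∑ k, Int.fract (a k - b (τ k)) := by
          refine Fintype.sum_equiv e _ _ (fun i => ?_)
          simp [Equiv.trans_apply]

theorem mc_reindex (ι : Type) [Fintype ι] [DecidableEq ι] (a b : ι → ℚ) (σ : Equiv.Perm ι) :
    mc ι a (b ∘ σ) = mc ι a b := by
  apply le_antisymm
  · apply le_mc
    intro τ
    calc mc ι a (b ∘ σ) ≤ ∑ i, Int.fract (a i - (b ∘ σ) ((τ.trans σ.symm) i)) := mc_le _ _ _ _
      _ = ∑ i, Int.fract (a i - b (τ i)) := by
          refine Finset.sum_congr rfl fun i _ => ?_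
          simp [Equiv.trans_apply]
  · apply le_mc
    intro τ
    calc mc ι a b ≤ ∑ i, Int.fract (a i - b ((τ.trans σ) i)) := mc_le _ _ _ _
      _ = ∑ i, Int.fract (a i - (b ∘ σ) (τ i)) := by
          refine Finset.sum_congr rfl fun i _ => ?_
          simp [Equiv.trans_apply]

theorem mc_congr (ι : Type) [Fintype ι] [DecidableEq ι] (a a' b b' : ι → ℚ)
    (ha : ∀ i, Int.fract (a i) = Int.fract (a' i))
    (hb : ∀ i, Int.fract (b i) = Int.fract (b' i)) : mc ι a b = mc ι a' b' := by
  unfold mc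
  congr 1
  funext τ
  refine Finset.sum_congr rfl fun i _ => ?_
  obtain ⟨za, hza⟩ := Int.fract_eq_fract.mp (ha i)
  obtain ⟨zb, hzb⟩ := Int.fract_eq_fract.mp (hb (τ i))
  have h : a i - b (τ i) = (a' i - b' (τ i)) + ((za - zb : ℤ) : ℚ) := by push_cast; linarith
  rw [h, Int.fract_add_intCast]

theorem mc_option {ι : Type} [Fintype ι] [DecidableEq ι] (a b : Option ι → ℚ)
    (hz : a none = b none) :
    mc (Option ι) a b = mc ι (a ∘ some) (b ∘ some) := by
  have key : ∀ τ : Equiv.Perm (Option ι), τ none = none →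
      mc ι (a ∘ some) (b ∘ some) ≤ ∑ i, Int.fract (a i - b (τ i)) := by
    intro τ hτ
    have hs : ∀ x : ι, τ (some x) = some (τ.removeNone x) := by
      intro x
      refine (Equiv.removeNone_some τ ?_).symm
      rcases hc : τ (some x) with _ | y
      · exact absurd (τ.injective (hc.trans hτ.symm)) (by simp)
      · exact ⟨y, rfl⟩
    calc mc ι (a ∘ some) (b ∘ some)
        ≤ ∑ x, Int.fract ((a ∘ some) x - (b ∘ some) (τ.removeNone x)) := mc_le _ _ _ _
      _ = ∑ i, Int.fract (a i - b (τ i)) := by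
          rw [Fintype.sum_option (f := fun i => Int.fract (a i - b (τ i)))]
          rw [hτ, hz, sub_self, Int.fract_zero, zero_add]
          refine Finset.sum_congr rfl fun x _ => ?_
          rw [hs x]
          rfl
  apply le_antisymm
  · apply le_mc
    intro τ
    calc mc (Option ι) a b ≤ ∑ i, Int.fract (a i - b (τ.optionCongr i)) := mc_le _ _ _ _
      _ = ∑ i, Int.fract ((a ∘ some) i - (b ∘ some) (τ i)) := by
          rw [Fintype.sum_option (f := fun i => Int.fract (a i - b (τ.optionCongr i)))]
          simp only [Equiv.optionCongr_apply, Option.map_none, Option.map_some, hz, sub_self,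
            Int.fract_zero, zero_add]
          rfl
  · apply le_mc
    intro τ
    by_cases h0 : τ none = none
    · exact key τ h0
    · have hjne : (none : Option ι) ≠ τ.symm none := by
        intro hjn
        apply h0
        have h2 := congrArg τ hjn
        rwa [Equiv.apply_symm_apply] at h2
      set j := τ.symm none with hj
      set τ' := (Equiv.swap none j).trans τ with hτ'
      have hτ'none : τ' none = none := by
        simp only [hτ', Equiv.trans_apply, Equiv.swap_apply_left, hj, Equiv.apply_symm_apply]
      refine (key τ' hτ'none).trans ?_
      have hτj : τ j = none := by rw [hj, Equiv.apply_symm_apply]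
      have hτ'j : τ' j = τ none := by
        simp only [hτ', Equiv.trans_apply, Equiv.swap_apply_right]
      have hsplit : ∑ i, Int.fract (a i - b (τ i)) - ∑ i, Int.fract (a i - b (τ' i))
          = ∑ i ∈ ({none, j} : Finset (Option ι)),
              (Int.fract (a i - b (τ i)) - Int.fract (a i - b (τ' i))) := by
        rw [← Finset.sum_sub_distrib]
        refine (Finset.sum_subset (Finset.subset_univ _) ?_).symm
        intro i _ hi
        simp only [Finset.mem_insert, Finset.mem_singleton, not_or] at hi
        have hii : τ' i = τ i := by
          simp only [hτ', Equiv.trans_apply, Equiv.swap_apply_of_ne_of_ne hi.1 hi.2]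
        rw [hii, sub_self]
      have hpair : ∑ i ∈ ({none, j} : Finset (Option ι)),
          (Int.fract (a i - b (τ i)) - Int.fract (a i - b (τ' i)))
          = (Int.fract (a none - b (τ none)) - Int.fract (a none - b (τ' none)))
            + (Int.fract (a j - b (τ j)) - Int.fract (a j - b (τ' j))) :=
        Finset.sum_pair hjne
      have htri : Int.fract (a j - b (τ none)) ≤
          Int.fract (a j - b none) + Int.fract (a none - b (τ none)) := by
        have hcomb : a j - b (τ none) = (a j - b none) + (a none - b (τ none)) := by
          rw [hz]; ring
        rw [hcomb]
        exact Int.fract_add_le _ _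
      have hzero : Int.fract (a none - b (τ' none)) = 0 := by
        rw [hτ'none, hz, sub_self, Int.fract_zero]
      rw [hτj, hτ'j] at hpair
      linarith [hsplit, hpair, htri, Int.fract_nonneg (a none - b (τ none))]

/-- auxiliary equiv for the induction in `mc_sum`. -/
def optSum (ι : Type) (t : ℕ) : Option (ι ⊕ Fin t) ≃ (ι ⊕ Fin (t + 1)) where
  toFun o := match o with
    | none => Sum.inr 0
    | some (Sum.inl i) => Sum.inl i
    | some (Sum.inr k) => Sum.inr k.succ
  invFun s := match s with
    | Sum.inl i => some (Sum.inl i)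
    | Sum.inr j => Fin.cases none (fun k => some (Sum.inr k)) j
  left_inv o := by rcases o with _ | (i | k) <;> simp
  right_inv s := by
    rcases s with i | j
    · rfl
    · exact Fin.cases rfl (fun k => by simp) j

theorem mc_sum (t : ℕ) : ∀ (ι : Type) [Fintype ι] [DecidableEq ι] (a b : ι → ℚ)
    (c : Fin t → ℚ),
    mc (ι ⊕ Fin t) (Sum.elim a c) (Sum.elim b c) = mc ι a b := by
  induction t with
  | zero =>
      intro ι _ _ a b c
      rw [mc_transfer (Equiv.sumEmpty ι (Fin 0)).symm]
      congr 1
  | succ t ih =>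
      intro ι _ _ a b c
      rw [mc_transfer (optSum ι t)]
      have ha : (Sum.elim a c) ∘ (optSum ι t) =
          fun o => Option.elim o (c 0) (Sum.elim a (c ∘ Fin.succ)) := by
        funext o; rcases o with _ | (i | k) <;> rfl
      have hb : (Sum.elim b c) ∘ (optSum ι t) =
          fun o => Option.elim o (c 0) (Sum.elim b (c ∘ Fin.succ)) := by
        funext o; rcases o with _ | (i | k) <;> rfl
      rw [ha, hb, mc_option (fun o => Option.elim o (c 0) (Sum.elim a (c ∘ Fin.succ)))
        (fun o => Option.elim o (c 0) (Sum.elim b (c ∘ Fin.succ))) rfl]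
      have ha2 : ((fun o => Option.elim o (c 0) (Sum.elim a (c ∘ Fin.succ))) ∘ some)
          = Sum.elim a (c ∘ Fin.succ) := by funext s; rfl
      have hb2 : ((fun o => Option.elim o (c 0) (Sum.elim b (c ∘ Fin.succ))) ∘ some)
          = Sum.elim b (c ∘ Fin.succ) := by funext s; rfl
      rw [ha2, hb2, ih]

/-- the permutation swapping the first two indices. -/
def swap01 (n : ℕ) : Fin (n + 2) ≃ Fin (n + 2) where
  toFun i := ⟨if i.val = 0 then 1 else if i.val = 1 then 0 else i.val, by
    rcases i with ⟨v, hv⟩; dsimp; split_ifs <;> omega⟩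
  invFun i := ⟨if i.val = 0 then 1 else if i.val = 1 then 0 else i.val, by
    rcases i with ⟨v, hv⟩; dsimp; split_ifs <;> omega⟩
  left_inv i := by rcases i with ⟨(_ | _ | v), hv⟩ <;> rfl
  right_inv i := by rcases i with ⟨(_ | _ | v), hv⟩ <;> rfl

theorem perm_get_equiv {α : Type*} {l l' : List α} (h : l.Perm l') :
    ∃ e : Fin l.length ≃ Fin l'.length, ∀ i, l'.get (e i) = l.get i := by
  induction h with
  | nil => exact ⟨Equiv.refl _, fun i => i.elim0⟩
  | @cons x l₁ l₂ h ih =>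
      obtain ⟨e, he⟩ := ih
      refine ⟨(finSuccEquiv _).trans ((Equiv.optionCongr e).trans (finSuccEquiv _).symm),
        fun i => ?_⟩
      refine Fin.cases ?_ (fun j => ?_) i
      · simp [Equiv.trans_apply]
      · simp only [Equiv.trans_apply, finSuccEquiv_succ, Equiv.optionCongr_apply,
          Option.map_some, finSuccEquiv_symm_some]
        simp [List.get_eq_getElem]
        exact he j
  | @swap x y l =>
      refine ⟨swap01 l.length, fun i => ?_⟩
      rcases i with ⟨(_ | _ | k), hk⟩ <;> rfl
  | @trans l₁ l₂ l₃ h1 h2 ih1 ih2 =>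
      obtain ⟨e1, he1⟩ := ih1
      obtain ⟨e2, he2⟩ := ih2
      exact ⟨e1.trans e2, fun i => by rw [Equiv.trans_apply, he2, he1]⟩


section Geometry

variable (a1 b1 a2 b2 : ℤ)

def Dq : ℚ := ((a2 * b1 - a1 * b2 : ℤ) : ℚ)

def sC (P : ℤ × ℤ) : ℚ := ((P.2 * a2 - P.1 * b2 : ℤ) : ℚ) / Dq a1 b1 a2 b2

def tC (P : ℤ × ℤ) : ℚ := ((P.1 * b1 - P.2 * a1 : ℤ) : ℚ) / Dq a1 b1 a2 b2

def inL (u : ℤ × ℤ) : Prop := ∃ m n : ℤ, u = (m * a1 + n * a2, m * b1 + n * b2)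

variable {a1 b1 a2 b2}

theorem Dq_ne (hD : 0 < a2 * b1 - a1 * b2) : Dq a1 b1 a2 b2 ≠ 0 := by
  unfold Dq
  exact_mod_cast hD.ne'

theorem coord_repr (hD : 0 < a2 * b1 - a1 * b2) (P : ℤ × ℤ) :
    (P.1 : ℚ) = sC a1 b1 a2 b2 P * a1 + tC a1 b1 a2 b2 P * a2 ∧
    (P.2 : ℚ) = sC a1 b1 a2 b2 P * b1 + tC a1 b1 a2 b2 P * b2 := by
  have h := Dq_ne hD
  unfold sC tC Dq at *
  push_cast at *
  constructor <;> (rw [div_mul_eq_mul_div, div_mul_eq_mul_div, ← add_div, eq_div_iff h]; ring)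

theorem coords_eq (hD : 0 < a2 * b1 - a1 * b2) {P : ℤ × ℤ} {s t : ℚ} (h1 : (P.1 : ℚ) = s * a1 + t * a2)
    (h2 : (P.2 : ℚ) = s * b1 + t * b2) :
    s = sC a1 b1 a2 b2 P ∧ t = tC a1 b1 a2 b2 P := by
  have h := Dq_ne hD
  constructor
  · unfold sC
    rw [eq_div_iff h]
    unfold Dq
    push_cast
    linear_combination (b2 : ℚ) * h1 - (a2 : ℚ) * h2
  · unfold tC
    rw [eq_div_iff h]
    unfold Dq
    push_cast
    linear_combination (a1 : ℚ) * h2 - (b1 : ℚ) * h1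

theorem mem_square_iff (hD : 0 < a2 * b1 - a1 * b2) {P : ℤ × ℤ} :
    P ∈ squareInt a1 b1 a2 b2 ↔
      0 ≤ sC a1 b1 a2 b2 P ∧ sC a1 b1 a2 b2 P < 1 ∧
      0 ≤ tC a1 b1 a2 b2 P ∧ tC a1 b1 a2 b2 P < 1 := by
  constructor
  · rintro ⟨s, t, hs0, hs1, ht0, ht1, hx, hy⟩
    obtain ⟨hs, ht⟩ := coords_eq hD hx hy
    rw [← hs, ← ht]
    exact ⟨hs0, hs1, ht0, ht1⟩
  · rintro ⟨hs0, hs1, ht0, ht1⟩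
    exact ⟨_, _, hs0, hs1, ht0, ht1, (coord_repr hD P).1, (coord_repr hD P).2⟩

theorem sC_sub (P R : ℤ × ℤ) :
    sC a1 b1 a2 b2 (P - R) = sC a1 b1 a2 b2 P - sC a1 b1 a2 b2 R := by
  unfold sC
  rw [Prod.fst_sub, Prod.snd_sub, ← sub_div]
  congr 1
  push_cast
  ring

theorem tC_sub (P R : ℤ × ℤ) :
    tC a1 b1 a2 b2 (P - R) = tC a1 b1 a2 b2 P - tC a1 b1 a2 b2 R := by
  unfold tC
  rw [Prod.fst_sub, Prod.snd_sub, ← sub_div]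
  congr 1
  push_cast
  ring

theorem inL_iff (hD : 0 < a2 * b1 - a1 * b2) {u : ℤ × ℤ} :
    inL a1 b1 a2 b2 u ↔
      (∃ m : ℤ, sC a1 b1 a2 b2 u = m) ∧ (∃ n : ℤ, tC a1 b1 a2 b2 u = n) := by
  constructor
  · rintro ⟨m, n, rfl⟩
    have h1 : (((m * a1 + n * a2, m * b1 + n * b2) : ℤ × ℤ).1 : ℚ)
        = (m : ℚ) * a1 + (n : ℚ) * a2 := by push_cast; ring
    have h2 : (((m * a1 + n * a2, m * b1 + n * b2) : ℤ × ℤ).2 : ℚ)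
        = (m : ℚ) * b1 + (n : ℚ) * b2 := by push_cast; ring
    obtain ⟨hs, ht⟩ := coords_eq hD h1 h2
    exact ⟨⟨m, hs.symm⟩, ⟨n, ht.symm⟩⟩
  · rintro ⟨⟨m, hm⟩, ⟨n, hn⟩⟩
    refine ⟨m, n, ?_⟩
    have h1 := (coord_repr hD u).1
    have h2 := (coord_repr hD u).2
    rw [hm, hn] at h1 h2
    have h1' : u.1 = m * a1 + n * a2 := by exact_mod_cast h1
    have h2' : u.2 = m * b1 + n * b2 := by exact_mod_cast h2
    exact Prod.ext h1' h2'

theorem rep_exists (hD : 0 < a2 * b1 - a1 * b2) (P : ℤ × ℤ) :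
    ∃ v, v ∈ squareInt a1 b1 a2 b2 ∧ inL a1 b1 a2 b2 (P - v) := by
  refine ⟨P - (⌊sC a1 b1 a2 b2 P⌋ * a1 + ⌊tC a1 b1 a2 b2 P⌋ * a2,
      ⌊sC a1 b1 a2 b2 P⌋ * b1 + ⌊tC a1 b1 a2 b2 P⌋ * b2), ?_,
    ⟨⌊sC a1 b1 a2 b2 P⌋, ⌊tC a1 b1 a2 b2 P⌋, (sub_sub_cancel P _)⟩⟩
  refine ⟨Int.fract (sC a1 b1 a2 b2 P), Int.fract (tC a1 b1 a2 b2 P),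
    Int.fract_nonneg _, Int.fract_lt_one _, Int.fract_nonneg _, Int.fract_lt_one _, ?_, ?_⟩
  · have h1 := (coord_repr hD P).1
    rw [Prod.fst_sub, ← Int.self_sub_floor, ← Int.self_sub_floor]
    push_cast
    linear_combination h1
  · have h2 := (coord_repr hD P).2
    rw [Prod.snd_sub, ← Int.self_sub_floor, ← Int.self_sub_floor]
    push_cast
    linear_combination h2

theorem rep_unique (hD : 0 < a2 * b1 - a1 * b2) {v v' : ℤ × ℤ}
    (hv : v ∈ squareInt a1 b1 a2 b2) (hv' : v' ∈ squareInt a1 b1 a2 b2)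
    (h : inL a1 b1 a2 b2 (v - v')) : v = v' := by
  rw [mem_square_iff hD] at hv hv'
  obtain ⟨⟨m, hm⟩, ⟨n, hn⟩⟩ := (inL_iff hD).mp h
  rw [sC_sub] at hm
  rw [tC_sub] at hn
  obtain ⟨hs0, hs1, ht0, ht1⟩ := hv
  obtain ⟨hs0', hs1', ht0', ht1'⟩ := hv'
  have hm0 : m = 0 := by
    have l1 : (m : ℚ) < 1 := by linarith
    have l2 : (-1 : ℚ) < (m : ℚ) := by linarith
    have l1' : m < 1 := by exact_mod_cast l1
    have l2' : -1 < m := by exact_mod_cast l2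
    omega
  have hn0 : n = 0 := by
    have l1 : (n : ℚ) < 1 := by linarith
    have l2 : (-1 : ℚ) < (n : ℚ) := by linarith
    have l1' : n < 1 := by exact_mod_cast l1
    have l2' : -1 < n := by exact_mod_cast l2
    omega
  rw [hm0] at hm
  rw [hn0] at hn
  push_cast at hm hn
  have hseq : sC a1 b1 a2 b2 v = sC a1 b1 a2 b2 v' := by linarith
  have hteq : tC a1 b1 a2 b2 v = tC a1 b1 a2 b2 v' := by linarith
  have h1 := (coord_repr hD v).1
  have h2 := (coord_repr hD v).2
  rw [hseq, hteq] at h1 h2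
  have h1' := (coord_repr hD v').1
  have h2' := (coord_repr hD v').2
  have e1 : v.1 = v'.1 := by exact_mod_cast h1.trans h1'.symm
  have e2 : v.2 = v'.2 := by exact_mod_cast h2.trans h2'.symm
  exact Prod.ext e1 e2

theorem int_coord (hD : 0 < a2 * b1 - a1 * b2) {p : ℤ} (hp : Prime p)
    (hpD : ¬ p ∣ (a2 * b1 - a1 * b2)) {K m : ℤ}
    (h : (p : ℚ) * ((K : ℚ) / Dq a1 b1 a2 b2) = (m : ℚ)) :
    ∃ c : ℤ, (K : ℚ) / Dq a1 b1 a2 b2 = (c : ℚ) := by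
  have hq := Dq_ne hD
  have hint : p * K = m * (a2 * b1 - a1 * b2) := by
    have h2 : (p : ℚ) * (K : ℚ) = (m : ℚ) * Dq a1 b1 a2 b2 := by
      field_simp at h
      linarith [h]
    unfold Dq at h2
    exact_mod_cast h2
  have hcop : IsCoprime (a2 * b1 - a1 * b2) p := (hp.coprime_iff_not_dvd.mpr hpD).symm
  have hdvd : (a2 * b1 - a1 * b2) ∣ p * K := ⟨m, by rw [hint]; ring⟩
  obtain ⟨c, hc⟩ := hcop.dvd_of_dvd_mul_left hdvd
  refine ⟨c, ?_⟩
  rw [hc]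
  unfold Dq
  push_cast
  rw [mul_comm]
  exact mul_div_cancel_right₀ _ (by exact_mod_cast hD.ne')

theorem sC_smul (p : ℤ) (u : ℤ × ℤ) :
    sC a1 b1 a2 b2 (p • u) = (p : ℚ) * sC a1 b1 a2 b2 u := by
  unfold sC
  rw [Prod.smul_fst, Prod.smul_snd, smul_eq_mul, smul_eq_mul, ← mul_div_assoc]
  congr 1
  push_cast
  ring

theorem tC_smul (p : ℤ) (u : ℤ × ℤ) :
    tC a1 b1 a2 b2 (p • u) = (p : ℚ) * tC a1 b1 a2 b2 u := by
  unfold tC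
  rw [Prod.smul_fst, Prod.smul_snd, smul_eq_mul, smul_eq_mul, ← mul_div_assoc]
  congr 1
  push_cast
  ring

theorem inL_of_smul (hD : 0 < a2 * b1 - a1 * b2) {p : ℤ} (hp : Prime p)
    (hpD : ¬ p ∣ (a2 * b1 - a1 * b2)) {u : ℤ × ℤ}
    (h : inL a1 b1 a2 b2 (p • u)) : inL a1 b1 a2 b2 u := by
  rw [inL_iff hD] at h ⊢
  obtain ⟨⟨m, hm⟩, ⟨n, hn⟩⟩ := h
  rw [sC_smul] at hm
  rw [tC_smul] at hn
  exact ⟨int_coord hD hp hpD hm, int_coord hD hp hpD hn⟩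

theorem wt_eq_coords (P : ℤ × ℤ) :
    wt a1 b1 a2 b2 P = sC a1 b1 a2 b2 P + tC a1 b1 a2 b2 P := by
  unfold wt sC tC Dq
  rw [← add_div]
  congr 1
  push_cast
  ring

theorem wt_int_of_inL (hD : 0 < a2 * b1 - a1 * b2) {u : ℤ × ℤ}
    (h : inL a1 b1 a2 b2 u) : ∃ z : ℤ, wt a1 b1 a2 b2 u = (z : ℚ) := by
  obtain ⟨⟨m, hm⟩, ⟨n, hn⟩⟩ := (inL_iff hD).mp h
  exact ⟨m + n, by rw [wt_eq_coords, hm, hn]; push_cast; ring⟩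

theorem wt_smul_sub (p : ℤ) (R P : ℤ × ℤ) :
    wt a1 b1 a2 b2 (p • R - P) = (p : ℚ) * wt a1 b1 a2 b2 R - wt a1 b1 a2 b2 P := by
  unfold wt
  rw [Prod.fst_sub, Prod.snd_sub, Prod.smul_fst, Prod.smul_snd, smul_eq_mul, smul_eq_mul,
    ← mul_div_assoc, ← sub_div]
  congr 1
  push_cast
  ring

theorem wt_add (P R : ℤ × ℤ) :
    wt a1 b1 a2 b2 (P + R) = wt a1 b1 a2 b2 P + wt a1 b1 a2 b2 R := by
  unfold wt
  rw [Prod.fst_add, Prod.snd_add, ← add_div]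
  congr 1
  push_cast
  ring

end Geometry

theorem get_append_left {α : Type*} (l1 l2 : List α) (i : Fin l1.length)
    (h : (i : ℕ) < (l1 ++ l2).length) :
    (l1 ++ l2).get ⟨(i : ℕ), h⟩ = l1.get i := by
  simp [List.get_eq_getElem, List.getElem_append_left i.isLt]

theorem get_append_right {α : Type*} (l1 l2 : List α) (j : Fin l2.length)
    (h : l1.length + (j : ℕ) < (l1 ++ l2).length) :
    (l1 ++ l2).get ⟨l1.length + (j : ℕ), h⟩ = l2.get j := by
  have h2 : l1.length ≤ l1.length + (j : ℕ) := Nat.le_add_right _ _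
  simp [List.get_eq_getElem, List.getElem_append_right h2]

theorem get_map' {α β : Type*} (f : α → β) (l : List α) (i : Fin (l.map f).length) :
    (l.map f).get i = f (l.get ⟨(i : ℕ), by simpa using i.isLt⟩) := by
  simp [List.get_eq_getElem]

theorem h2Min_eq_mc (p a1 b1 a2 b2 : ℤ) (S : Multiset (ℤ × ℤ)) :
    h2Min p a1 b1 a2 b2 S = mc (Fin S.toList.length)
      (fun i => wt a1 b1 a2 b2 (listFn S i))
      (fun i => (p : ℚ) * wt a1 b1 a2 b2 (listFn S i)) := by
  unfold h2Min mc
  congr 1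
  funext τ
  unfold h2Tau
  refine Finset.sum_congr rfl fun i _ => ?_
  rw [wt_smul_sub]
  rw [show wt a1 b1 a2 b2 (listFn S i) - (p : ℚ) * wt a1 b1 a2 b2 (listFn S (τ i))
      = -((p : ℚ) * wt a1 b1 a2 b2 (listFn S (τ i)) - wt a1 b1 a2 b2 (listFn S i)) from by ring]
  rw [← Int.self_sub_floor, Int.floor_neg]
  push_cast
  ring

end St3Aux

/-- For a prime `p ∤ D`, a finite subset `S2` of `M(Δ)` and points
`Q1, ..., Qk` of `M(Δ)` with integer weights, the multiset
`S1 = S2 ⊎ (□^Int + Q1) ⊎ ... ⊎ (□^Int + Qk)` satisfies `h2(S1) = h2(S2)`. -/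
theorem statement3 (p a1 b1 a2 b2 : ℤ)
    (ha1 : 0 ≤ a1) (hb1 : 0 ≤ b1) (ha2 : 0 ≤ a2) (hb2 : 0 ≤ b2)
    (hD : 0 < a2 * b1 - a1 * b2)
    (hp : Prime p) (hpD : ¬ p ∣ (a2 * b1 - a1 * b2))
    (B : Finset (ℤ × ℤ)) (hB : (B : Set (ℤ × ℤ)) = squareInt a1 b1 a2 b2)
    (S2 : Finset (ℤ × ℤ)) (hS2 : (S2 : Set (ℤ × ℤ)) ⊆ MDelta a1 b1 a2 b2)
    (k : ℕ) (Q : Fin k → ℤ × ℤ)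
    (hQmem : ∀ i, Q i ∈ MDelta a1 b1 a2 b2)
    (hQw : ∀ i, ∃ z : ℤ, wt a1 b1 a2 b2 (Q i) = z) :
    h2Min p a1 b1 a2 b2 (S2.val + ∑ i : Fin k, B.val.map (fun P => P + Q i)) =
      h2Min p a1 b1 a2 b2 S2.val := by
  classical
  have hBsq : ∀ x : ℤ × ℤ, x ∈ B ↔ x ∈ squareInt a1 b1 a2 b2 := by
    intro x
    rw [← Finset.mem_coe, hB]
  obtain ⟨rep, hrepB, hrepL⟩ : ∃ rep : ℤ × ℤ → ℤ × ℤ, (∀ P, rep P ∈ B) ∧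
      (∀ P, St3Aux.inL a1 b1 a2 b2 (P - rep P)) := by
    choose rep h1 h2 using fun P => St3Aux.rep_exists hD P
    exact ⟨rep, fun P => (hBsq _).mpr (h1 P), h2⟩
  set ψ : {x // x ∈ B} → {x // x ∈ B} := fun v => ⟨rep (p • (v : ℤ × ℤ)), hrepB _⟩ with hψ
  have hψinj : Function.Injective ψ := by
    intro v v' hvv
    have h1 := hrepL (p • (v : ℤ × ℤ))
    have h2 := hrepL (p • (v' : ℤ × ℤ))
    have heq : rep (p • (v : ℤ × ℤ)) = rep (p • (v' : ℤ × ℤ)) := congrArg Subtype.val hvv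
    rw [heq] at h1
    have hd : St3Aux.inL a1 b1 a2 b2 (p • ((v : ℤ × ℤ) - (v' : ℤ × ℤ))) := by
      obtain ⟨m1, n1, e1⟩ := h1
      obtain ⟨m2, n2, e2⟩ := h2
      refine ⟨m1 - m2, n1 - n2, ?_⟩
      have hrw : p • ((v : ℤ × ℤ) - (v' : ℤ × ℤ))
          = (p • (v : ℤ × ℤ) - rep (p • (v' : ℤ × ℤ)))
            - (p • (v' : ℤ × ℤ) - rep (p • (v' : ℤ × ℤ))) := by
        rw [smul_sub]; abel
      rw [hrw, e1, e2]
      refine Prod.ext ?_ ?_ <;> (show _ - _ = _; dsimp; ring)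
    have hid := St3Aux.inL_of_smul hD hp hpD hd
    exact Subtype.ext (St3Aux.rep_unique hD ((hBsq _).mp v.2) ((hBsq _).mp v'.2) hid)
  have hψbij := Finite.injective_iff_bijective.mp hψinj
  set φ := (Equiv.ofBijective ψ hψbij).symm with hφdef
  have hφ : ∀ v : {x // x ∈ B},
      Int.fract ((p : ℚ) * wt a1 b1 a2 b2 ((φ v : ℤ × ℤ)))
        = Int.fract (wt a1 b1 a2 b2 (v : ℤ × ℤ)) := by
    intro v
    have h1 : ψ (φ v) = v := (Equiv.ofBijective ψ hψbij).apply_symm_apply v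
    have h2 := hrepL (p • ((φ v : ℤ × ℤ)))
    have h3 : (ψ (φ v) : ℤ × ℤ) = rep (p • ((φ v : ℤ × ℤ))) := rfl
    rw [← h3, h1] at h2
    obtain ⟨z, hz⟩ := St3Aux.wt_int_of_inL hD h2
    rw [St3Aux.wt_smul_sub] at hz
    exact Int.fract_eq_fract.mpr ⟨z, hz⟩
  have hM' : B.val.map (fun v => Int.fract (wt a1 b1 a2 b2 v))
      = B.val.map (fun v => Int.fract ((p : ℚ) * wt a1 b1 a2 b2 v)) := by
    set g : ℤ × ℤ → ℤ × ℤ := fun v => if h : v ∈ B then (φ ⟨v, h⟩ : ℤ × ℤ) else v with hg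
    have hgmap : B.val.map g = B.val := by
      have hinj : ∀ x ∈ B.val, ∀ y ∈ B.val, g x = g y → x = y := by
        intro x hx y hy hxy
        have hx' : x ∈ B := hx
        have hy' : y ∈ B := hy
        rw [hg] at hxy
        simp only [dif_pos hx', dif_pos hy'] at hxy
        have := φ.injective (Subtype.ext hxy)
        exact congrArg Subtype.val this
      have hnd : (B.val.map g).Nodup := Multiset.Nodup.map_on hinj B.nodup
      refine (Multiset.Nodup.ext hnd B.nodup).mpr ?_
      intro x
      constructor
      · intro hx
        obtain ⟨v, hv, rfl⟩ := Multiset.mem_map.mp hx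
        have hv' : v ∈ B := hv
        rw [hg]
        simp only [dif_pos hv']
        exact (φ ⟨v, hv'⟩).2
      · intro hx
        have hx' : x ∈ B := hx
        refine Multiset.mem_map.mpr ⟨(φ.symm ⟨x, hx'⟩ : ℤ × ℤ), (φ.symm ⟨x, hx'⟩).2, ?_⟩
        rw [hg]
        simp only [dif_pos (φ.symm ⟨x, hx'⟩).2]
        have : (⟨(φ.symm ⟨x, hx'⟩ : ℤ × ℤ), (φ.symm ⟨x, hx'⟩).2⟩ : {x // x ∈ B})
            = φ.symm ⟨x, hx'⟩ := Subtype.ext rfl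
        rw [this, Equiv.apply_symm_apply]
    calc B.val.map (fun v => Int.fract (wt a1 b1 a2 b2 v))
        = B.val.map ((fun v => Int.fract ((p : ℚ) * wt a1 b1 a2 b2 v)) ∘ g) := by
          refine Multiset.map_congr rfl fun v hv => ?_
          have hv' : v ∈ B := hv
          show Int.fract (wt a1 b1 a2 b2 v)
              = Int.fract ((p : ℚ) * wt a1 b1 a2 b2 (g v))
          rw [hg]
          simp only [dif_pos hv']
          exact (hφ ⟨v, hv'⟩).symm
      _ = (B.val.map g).map (fun v => Int.fract ((p : ℚ) * wt a1 b1 a2 b2 v)) :=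
          (Multiset.map_map _ _ _).symm
      _ = B.val.map (fun v => Int.fract ((p : ℚ) * wt a1 b1 a2 b2 v)) := by rw [hgmap]
  set T : Multiset (ℤ × ℤ) := ∑ i : Fin k, B.val.map (fun P => P + Q i) with hT
  have hM : T.map (fun v => Int.fract (wt a1 b1 a2 b2 v))
      = T.map (fun v => Int.fract ((p : ℚ) * wt a1 b1 a2 b2 v)) := by
    have e1 : ∀ F : ℤ × ℤ → ℚ,
        Multiset.map F T = ∑ i : Fin k, Multiset.map F (B.val.map (fun P => P + Q i)) := by
      intro F
      rw [hT, ← Multiset.coe_mapAddMonoidHom]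
      exact map_sum (Multiset.mapAddMonoidHom F) _ _
    rw [e1, e1]
    refine Finset.sum_congr rfl fun i _ => ?_
    rw [Multiset.map_map, Multiset.map_map]
    obtain ⟨z, hz⟩ := hQw i
    have hA : ((fun v => Int.fract (wt a1 b1 a2 b2 v)) ∘ (fun P => P + Q i))
        = fun v => Int.fract (wt a1 b1 a2 b2 v) := by
      funext v
      show Int.fract (wt a1 b1 a2 b2 (v + Q i)) = Int.fract (wt a1 b1 a2 b2 v)
      rw [St3Aux.wt_add, hz, Int.fract_add_intCast]
    have hB2 : ((fun v => Int.fract ((p : ℚ) * wt a1 b1 a2 b2 v)) ∘ (fun P => P + Q i))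
        = fun v => Int.fract ((p : ℚ) * wt a1 b1 a2 b2 v) := by
      funext v
      show Int.fract ((p : ℚ) * wt a1 b1 a2 b2 (v + Q i))
          = Int.fract ((p : ℚ) * wt a1 b1 a2 b2 v)
      rw [St3Aux.wt_add, hz]
      rw [show (p : ℚ) * (wt a1 b1 a2 b2 v + (z : ℚ))
          = (p : ℚ) * wt a1 b1 a2 b2 v + ((p * z : ℤ) : ℚ) from by push_cast; ring]
      rw [Int.fract_add_intCast]
    rw [hA, hB2, hM']
  -- list level
  have hperm : (S2.val.toList ++ T.toList).Perm ((S2.val + T).toList) := by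
    rw [← Multiset.coe_eq_coe, Multiset.coe_toList, ← Multiset.coe_add,
      Multiset.coe_toList, Multiset.coe_toList]
  obtain ⟨e1, he1⟩ := St3Aux.perm_get_equiv hperm
  rw [St3Aux.h2Min_eq_mc, St3Aux.h2Min_eq_mc]
  rw [St3Aux.mc_transfer e1]
  have hA1 : ((fun i => wt a1 b1 a2 b2 (listFn (S2.val + T) i)) ∘ e1)
      = fun i => wt a1 b1 a2 b2 ((S2.val.toList ++ T.toList).get i) := by
    funext i
    show wt a1 b1 a2 b2 ((S2.val + T).toList.get (e1 i)) = _
    rw [he1 i]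
  have hB1 : ((fun i => (p : ℚ) * wt a1 b1 a2 b2 (listFn (S2.val + T) i)) ∘ e1)
      = fun i => (p : ℚ) * wt a1 b1 a2 b2 ((S2.val.toList ++ T.toList).get i) := by
    funext i
    show (p : ℚ) * wt a1 b1 a2 b2 ((S2.val + T).toList.get (e1 i)) = _
    rw [he1 i]
  rw [hA1, hB1]
  have hlen : S2.val.toList.length + T.toList.length = (S2.val.toList ++ T.toList).length :=
    (List.length_append).symm
  set E : (Fin S2.val.toList.length ⊕ Fin T.toList.length)
      ≃ Fin (S2.val.toList ++ T.toList).length :=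
    finSumFinEquiv.trans (finCongr hlen) with hE
  rw [St3Aux.mc_transfer E]
  have hgetl : ∀ i : Fin S2.val.toList.length,
      (S2.val.toList ++ T.toList).get (E (Sum.inl i)) = S2.val.toList.get i := by
    intro i
    have hisLt := i.isLt
    have hlt : (i : ℕ) < (S2.val.toList ++ T.toList).length := by
      rw [List.length_append]; omega
    have hv : ((E (Sum.inl i)) : ℕ) = (i : ℕ) := by
      simp [hE, finSumFinEquiv_apply_left]
    rw [show E (Sum.inl i) = ⟨(i : ℕ), hlt⟩ from Fin.ext hv]
    exact St3Aux.get_append_left _ _ _ _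
  have hgetr : ∀ j : Fin T.toList.length,
      (S2.val.toList ++ T.toList).get (E (Sum.inr j)) = T.toList.get j := by
    intro j
    have hisLt := j.isLt
    have hlt : S2.val.toList.length + (j : ℕ) < (S2.val.toList ++ T.toList).length := by
      rw [List.length_append]; omega
    have hv : ((E (Sum.inr j)) : ℕ) = S2.val.toList.length + (j : ℕ) := by
      simp [hE, finSumFinEquiv_apply_right]
    rw [show E (Sum.inr j) = ⟨S2.val.toList.length + (j : ℕ), hlt⟩ from Fin.ext hv]
    exact St3Aux.get_append_right _ _ _ _
  have hA2 : ((fun i => wt a1 b1 a2 b2 ((S2.val.toList ++ T.toList).get i)) ∘ E)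
      = Sum.elim (fun i => wt a1 b1 a2 b2 (S2.val.toList.get i))
          (fun j => wt a1 b1 a2 b2 (T.toList.get j)) := by
    funext s
    rcases s with i | j
    · show wt a1 b1 a2 b2 ((S2.val.toList ++ T.toList).get (E (Sum.inl i))) = _
      rw [hgetl]
      rfl
    · show wt a1 b1 a2 b2 ((S2.val.toList ++ T.toList).get (E (Sum.inr j))) = _
      rw [hgetr]
      rfl
  have hB2 : ((fun i => (p : ℚ) * wt a1 b1 a2 b2 ((S2.val.toList ++ T.toList).get i)) ∘ E)
      = Sum.elim (fun i => (p : ℚ) * wt a1 b1 a2 b2 (S2.val.toList.get i))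
          (fun j => (p : ℚ) * wt a1 b1 a2 b2 (T.toList.get j)) := by
    funext s
    rcases s with i | j
    · show (p : ℚ) * wt a1 b1 a2 b2 ((S2.val.toList ++ T.toList).get (E (Sum.inl i))) = _
      rw [hgetl]
      rfl
    · show (p : ℚ) * wt a1 b1 a2 b2 ((S2.val.toList ++ T.toList).get (E (Sum.inr j))) = _
      rw [hgetr]
      rfl
  rw [hA2, hB2]
  -- permutation on the T part
  have hpermT : (T.toList.map (fun v => Int.fract (wt a1 b1 a2 b2 v))).Perm
      (T.toList.map (fun v => Int.fract ((p : ℚ) * wt a1 b1 a2 b2 v))) := by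
    rw [← Multiset.coe_eq_coe, ← Multiset.map_coe, ← Multiset.map_coe, Multiset.coe_toList]
    exact hM
  obtain ⟨e2, he2⟩ := St3Aux.perm_get_equiv hpermT
  have hl1 : (T.toList.map (fun v => Int.fract (wt a1 b1 a2 b2 v))).length
      = T.toList.length := List.length_map _
  have hl2 : (T.toList.map (fun v => Int.fract ((p : ℚ) * wt a1 b1 a2 b2 v))).length
      = T.toList.length := List.length_map _
  set σ : Equiv.Perm (Fin T.toList.length) :=
    (finCongr hl1.symm).trans (e2.trans (finCongr hl2)) with hσ
  have hσp : ∀ j, Int.fract ((p : ℚ) * wt a1 b1 a2 b2 (T.toList.get (σ j)))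
      = Int.fract (wt a1 b1 a2 b2 (T.toList.get j)) := by
    intro j
    have h3 := he2 ((finCongr hl1.symm) j)
    rw [St3Aux.get_map', St3Aux.get_map'] at h3
    exact h3
  rw [← St3Aux.mc_reindex _
      (Sum.elim (fun i => wt a1 b1 a2 b2 (S2.val.toList.get i))
        (fun j => wt a1 b1 a2 b2 (T.toList.get j)))
      (Sum.elim (fun i => (p : ℚ) * wt a1 b1 a2 b2 (S2.val.toList.get i))
        (fun j => (p : ℚ) * wt a1 b1 a2 b2 (T.toList.get j)))
      (Equiv.sumCongr (Equiv.refl (Fin S2.val.toList.length)) σ)]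
  have hcomp : ((Sum.elim (fun i => (p : ℚ) * wt a1 b1 a2 b2 (S2.val.toList.get i))
      (fun j => (p : ℚ) * wt a1 b1 a2 b2 (T.toList.get j)))
        ∘ (Equiv.sumCongr (Equiv.refl (Fin S2.val.toList.length)) σ))
      = Sum.elim (fun i => (p : ℚ) * wt a1 b1 a2 b2 (S2.val.toList.get i))
          (fun j => (p : ℚ) * wt a1 b1 a2 b2 (T.toList.get (σ j))) := by
    funext s
    rcases s with i | j <;> rfl
  rw [hcomp]
  rw [St3Aux.mc_congr _
      (Sum.elim (fun i => wt a1 b1 a2 b2 (S2.val.toList.get i))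
        (fun j => wt a1 b1 a2 b2 (T.toList.get j)))
      (Sum.elim (fun i => wt a1 b1 a2 b2 (S2.val.toList.get i))
        (fun j => wt a1 b1 a2 b2 (T.toList.get j)))
      (Sum.elim (fun i => (p : ℚ) * wt a1 b1 a2 b2 (S2.val.toList.get i))
        (fun j => (p : ℚ) * wt a1 b1 a2 b2 (T.toList.get (σ j))))
      (Sum.elim (fun i => (p : ℚ) * wt a1 b1 a2 b2 (S2.val.toList.get i))
        (fun j => wt a1 b1 a2 b2 (T.toList.get j)))
      (fun _ => rfl)
      (by
        intro s
        rcases s with i | j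
        · rfl
        · exact hσp j)]
  rw [St3Aux.mc_sum]
  rfl
end
end

section
/- Assume p is a prime not dividing D. Let S2 be a finite subset of M(Δ) and let Q1, ..., Qk be points of M(Δ) whose weights w(Qi) are integers. Then the multiset S1 := (S2 + Q1) ⊎ (S2 + Q2) ⊎ ... ⊎ (S2 + Qk) (disjoint multiset union of the k translates of S2) satisfies h2(S1) = k*h2(S2). -/
open Finset

noncomputable section

section GminAux
set_option linter.unusedSectionVars false
variable {X : Type*} [DecidableEq X]

def gcost (c : X → X → ℚ) {ι : Type*} [Fintype ι] (f : ι → X) (σ : Equiv.Perm ι) : ℚ :=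
  ∑ i, c (f i) (f (σ i))

def gmin (c : X → X → ℚ) {ι : Type*} [Fintype ι] [DecidableEq ι] (f : ι → X) : ℚ :=
  Finset.univ.inf' (Finset.univ_nonempty_iff.mpr ⟨1⟩) (gcost c f)

lemma gmin_le (c : X → X → ℚ) {ι : Type*} [Fintype ι] [DecidableEq ι] (f : ι → X)
    (σ : Equiv.Perm ι) : gmin c f ≤ gcost c f σ :=
  Finset.inf'_le _ (mem_univ σ)

lemma exists_gmin (c : X → X → ℚ) {ι : Type*} [Fintype ι] [DecidableEq ι] (f : ι → X) :
    ∃ σ : Equiv.Perm ι, gmin c f = gcost c f σ := by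
  obtain ⟨σ, -, h⟩ := Finset.exists_mem_eq_inf' (Finset.univ_nonempty_iff.mpr ⟨1⟩) (gcost c f)
  exact ⟨σ, h⟩

lemma gmin_comp_le (c : X → X → ℚ) {ι κ : Type*} [Fintype ι] [DecidableEq ι]
    [Fintype κ] [DecidableEq κ] (g : κ → X) (e : ι ≃ κ) :
    gmin c (g ∘ e) ≤ gmin c g := by
  apply Finset.le_inf'
  intro τ _
  have h : gcost c (g ∘ e) (e.symm.permCongr τ) = gcost c g τ := by
    unfold gcost
    rw [← Equiv.sum_comp e (fun j => c (g j) (g (τ j)))]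
    apply Finset.sum_congr rfl
    intro i _
    simp [Equiv.permCongr_apply, Function.comp]
  exact h ▸ gmin_le c (g ∘ e) (e.symm.permCongr τ)

lemma gmin_comp (c : X → X → ℚ) {ι κ : Type*} [Fintype ι] [DecidableEq ι]
    [Fintype κ] [DecidableEq κ] (g : κ → X) (e : ι ≃ κ) :
    gmin c (g ∘ e) = gmin c g := by
  refine le_antisymm (gmin_comp_le c g e) ?_
  have := gmin_comp_le c (g ∘ e) e.symm
  have h2 : (g ∘ e) ∘ e.symm = g := by funext j; simp
  rwa [h2] at this

/-- equal index multisets give an index equivalence -/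
lemma exists_equiv_of_map_eq {ι κ : Type*} [Fintype ι] [Fintype κ]
    (f : ι → X) (g : κ → X)
    (h : Multiset.map f Finset.univ.val = Multiset.map g Finset.univ.val) :
    ∃ e : ι ≃ κ, ∀ i, f i = g (e i) := by
  have hcard : ∀ x, Fintype.card {i // f i = x} = Fintype.card {j // g j = x} := by
    intro x
    have hh := congrArg (Multiset.count x) h
    rw [Multiset.count_map, Multiset.count_map] at hh
    simpa [Fintype.card_subtype, Finset.filter, eq_comm] using hh
  have e' : ∀ x, {i // f i = x} ≃ {j // g j = x} := fun x => Fintype.equivOfCardEq (hcard x)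
  refine ⟨(Equiv.sigmaFiberEquiv f).symm.trans
    ((Equiv.sigmaCongrRight e').trans (Equiv.sigmaFiberEquiv g)), ?_⟩
  intro i
  simp only [Equiv.trans_apply]
  have : (Equiv.sigmaFiberEquiv f).symm i = ⟨f i, i, rfl⟩ := by
    apply (Equiv.sigmaFiberEquiv f).injective
    simp [Equiv.sigmaFiberEquiv]
  rw [this]
  exact ((e' (f i)) ⟨i, rfl⟩).2.symm

lemma gmin_eq_of_map_eq (c : X → X → ℚ) {ι κ : Type*} [Fintype ι] [DecidableEq ι]
    [Fintype κ] [DecidableEq κ] (f : ι → X) (g : κ → X)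
    (h : Multiset.map f Finset.univ.val = Multiset.map g Finset.univ.val) :
    gmin c f = gmin c g := by
  obtain ⟨e, he⟩ := exists_equiv_of_map_eq f g h
  have : f = g ∘ e := funext he
  rw [this, gmin_comp]


/-- Key combinatorial lemma: if `A` is a matrix of naturals with all row and
column sums equal to `k`, and `m` is a lower bound for all permutation sums of
the cost `c`, then `k*m` bounds the `A`-weighted cost. -/
lemma hall_bound {ι : Type*} [Fintype ι] [DecidableEq ι] (c : ι → ι → ℚ) (m : ℚ)
    (hm : ∀ σ : Equiv.Perm ι, m ≤ ∑ a, c a (σ a)) :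
    ∀ (k : ℕ) (A : ι → ι → ℕ), (∀ a, ∑ b, A a b = k) → (∀ b, ∑ a, A a b = k) →
    (k : ℚ) * m ≤ ∑ a, ∑ b, (A a b : ℚ) * c a b := by
  intro k
  induction k with
  | zero =>
    intro A hr _
    have hz : ∀ a b, A a b = 0 := by
      intro a b
      have := hr a
      exact Finset.sum_eq_zero_iff.mp this b (mem_univ b)
    simp [hz]
  | succ k ih =>
    intro A hr hc
    -- Hall's condition for T a = {b | A a b ≠ 0}
    set T : ι → Finset ι := fun a => univ.filter (fun b => A a b ≠ 0) with hT
    have hall : ∀ S : Finset ι, S.card ≤ (S.biUnion T).card := by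
      intro S
      have key : (k+1) * S.card ≤ (k+1) * (S.biUnion T).card := by
        calc (k+1) * S.card = ∑ a ∈ S, (k+1) := by rw [Finset.sum_const, smul_eq_mul, mul_comm]
        _ = ∑ a ∈ S, ∑ b ∈ S.biUnion T, A a b := by
            apply Finset.sum_congr rfl
            intro a ha
            rw [← hr a]
            apply (Finset.sum_subset (Finset.subset_univ _) ?_).symm
            intro b _ hb
            by_contra hne
            exact hb (Finset.mem_biUnion.mpr ⟨a, ha, by simp [hT, hne]⟩)
        _ ≤ ∑ a : ι, ∑ b ∈ S.biUnion T, A a b := by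
            apply Finset.sum_le_sum_of_subset (Finset.subset_univ S)
        _ = ∑ b ∈ S.biUnion T, ∑ a : ι, A a b := Finset.sum_comm
        _ = ∑ b ∈ S.biUnion T, (k+1) := by
            apply Finset.sum_congr rfl; intro b _; exact hc b
        _ = (k+1) * (S.biUnion T).card := by rw [Finset.sum_const, smul_eq_mul, mul_comm]
      exact Nat.le_of_mul_le_mul_left key (Nat.succ_pos k)
    obtain ⟨π0, hinj, hmem⟩ :=
      (Finset.all_card_le_biUnion_card_iff_exists_injective T).mp hall
    have hbij : Function.Bijective π0 := Finite.injective_iff_bijective.mp hinj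
    set π : Equiv.Perm ι := Equiv.ofBijective π0 hbij with hπ
    have hπ0 : ∀ a, π a = π0 a := fun a => rfl
    have hpos : ∀ a, 1 ≤ A a (π a) := by
      intro a
      have h1 := hmem a
      rw [hT] at h1
      simp only [Finset.mem_filter] at h1
      have h2 : π a = π0 a := rfl
      rw [h2]
      omega
    set A' : ι → ι → ℕ := fun a b => A a b - (if b = π a then 1 else 0) with hA'
    have hsplit : ∀ a b, A a b = A' a b + (if b = π a then 1 else 0) := by
      intro a b
      by_cases h : b = π a
      · subst h; have := hpos a; simp [hA']; omega
      · simp [hA', h]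
    have hr' : ∀ a, ∑ b, A' a b = k := by
      intro a
      have e1 : ∑ b, A a b = (∑ b, A' a b) + 1 := by
        rw [Finset.sum_congr rfl (fun b _ => hsplit a b), Finset.sum_add_distrib,
          Finset.sum_ite_eq' univ (π a) (fun _ => 1)]
        simp
      have := hr a
      omega
    have hc' : ∀ b, ∑ a, A' a b = k := by
      intro b
      have hiteq : ∀ a : ι, (if b = π a then (1:ℕ) else 0) = (if a = π.symm b then 1 else 0) := by
        intro a
        by_cases h : a = π.symm b
        · subst h; simp
        · have hne : b ≠ π a := by
            intro hb; exact h (by rw [hb]; simp)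
          simp [h, hne]
      have e2 : ∑ x : ι, (if b = π x then (1:ℕ) else 0) = 1 := by
        rw [Finset.sum_congr rfl (fun a _ => hiteq a),
          Finset.sum_ite_eq' univ (π.symm b) (fun _ => 1)]
        simp
      have e1 : ∑ a, A a b = (∑ a, A' a b) + 1 := by
        rw [Finset.sum_congr rfl (fun a _ => hsplit a b), Finset.sum_add_distrib, e2]
      have := hc b
      omega
    have ihA := ih A' hr' hc'
    have hcost : ∑ a, ∑ b, (A a b : ℚ) * c a b
        = (∑ a, ∑ b, (A' a b : ℚ) * c a b) + ∑ a, c a (π a) := by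
      rw [← Finset.sum_add_distrib]
      apply Finset.sum_congr rfl
      intro a _
      have hterm : ∀ b, (A a b : ℚ) * c a b
          = (A' a b : ℚ) * c a b + (if b = π a then c a b else 0) := by
        intro b
        rw [hsplit a b]
        push_cast
        by_cases h : b = π a <;> simp [h] <;> ring
      calc ∑ b, (A a b : ℚ) * c a b
          = ∑ b, ((A' a b : ℚ) * c a b + (if b = π a then c a b else 0)) :=
            Finset.sum_congr rfl (fun b _ => hterm b)
        _ = (∑ b, (A' a b : ℚ) * c a b) + ∑ b, (if b = π a then c a b else 0) :=
            Finset.sum_add_distrib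
        _ = (∑ b, (A' a b : ℚ) * c a b) + c a (π a) := by
            rw [Finset.sum_ite_eq' univ (π a) (fun b => c a b)]
            simp
    rw [hcost]
    push_cast
    calc ((k : ℚ) + 1) * m = (k : ℚ) * m + m := by ring
    _ ≤ (∑ a, ∑ b, (A' a b : ℚ) * c a b) + ∑ a, c a (π a) := add_le_add ihA (hm π)

set_option maxHeartbeats 1000000 in
lemma gmin_prod (c : X → X → ℚ) {k n : ℕ} (g : Fin n → X) (F : Fin k × Fin n → X)
    (hF : ∀ x y : Fin k × Fin n, c (F x) (F y) = c (g x.2) (g y.2)) :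
    gmin c F = (k : ℚ) * gmin c g := by
  refine le_antisymm ?_ ?_
  · -- upper bound: block permutation
    obtain ⟨τ, hτ⟩ := exists_gmin c g
    have key : gcost c F ((Equiv.refl (Fin k)).prodCongr τ) = (k : ℚ) * gcost c g τ := by
      unfold gcost
      rw [Fintype.sum_prod_type]
      have h1 : ∀ j : Fin k, ∑ i : Fin n, c (F (j, i)) (F ((Equiv.refl (Fin k)).prodCongr τ (j, i)))
          = ∑ i : Fin n, c (g i) (g (τ i)) := by
        intro j
        apply Finset.sum_congr rfl
        intro i _
        rw [hF]
        simp
      rw [Finset.sum_congr rfl (fun j _ => h1 j), Finset.sum_const]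
      simp [mul_comm]
    calc gmin c F ≤ gcost c F ((Equiv.refl (Fin k)).prodCongr τ) := gmin_le c F _
      _ = (k : ℚ) * gcost c g τ := key
      _ = (k : ℚ) * gmin c g := by rw [hτ]
  · -- lower bound via hall_bound
    obtain ⟨σ, hσ⟩ := exists_gmin c F
    set c2 : Fin n → Fin n → ℚ := fun a b => c (g a) (g b) with hc2
    set A : Fin n → Fin n → ℕ := fun a b =>
      (univ.filter (fun x : Fin k × Fin n => x.2 = a ∧ (σ x).2 = b)).card with hA
    have hfib : ∀ a : Fin n, (univ.filter (fun x : Fin k × Fin n => x.2 = a)).card = k := by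
      intro a
      have h2 : univ.filter (fun x : Fin k × Fin n => x.2 = a) = univ ×ˢ ({a} : Finset (Fin n)) := by
        ext x
        simp only [mem_filter, mem_univ, true_and, Finset.mem_product, Finset.mem_singleton]
      rw [h2, Finset.card_product]
      simp
    have hrow : ∀ a, ∑ b, A a b = k := by
      intro a
      rw [← hfib a]
      rw [Finset.card_eq_sum_card_fiberwise (f := fun x => (σ x).2)
        (t := univ) (fun x _ => mem_univ _)]
      apply Finset.sum_congr rfl
      intro b _
      show (univ.filter (fun x : Fin k × Fin n => x.2 = a ∧ (σ x).2 = b)).card = _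
      rw [Finset.filter_filter]
    have hcol : ∀ b, ∑ a, A a b = k := by
      intro b
      have h1 : (univ.filter (fun x : Fin k × Fin n => (σ x).2 = b)).card
          = (univ.filter (fun x : Fin k × Fin n => x.2 = b)).card := by
        apply Finset.card_bij (fun x _ => σ x)
        · intro x hx; simp only [mem_filter, mem_univ, true_and] at hx ⊢; exact hx
        · intro x _ y _ h; exact σ.injective h
        · intro y hy
          simp only [mem_filter, mem_univ, true_and] at hy ⊢
          exact ⟨σ.symm y, by simp [hy], by simp⟩
      have h2 : (univ.filter (fun x : Fin k × Fin n => (σ x).2 = b)).card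
          = ∑ a, ((univ.filter (fun x : Fin k × Fin n => (σ x).2 = b)).filter
              (fun x => x.2 = a)).card :=
        Finset.card_eq_sum_card_fiberwise (f := fun x : Fin k × Fin n => x.2) (t := univ) (fun x _ => mem_univ _)
      have h3 : ∀ a, A a b = ((univ.filter (fun x : Fin k × Fin n => (σ x).2 = b)).filter
          (fun x => x.2 = a)).card := by
        intro a
        show (univ.filter (fun x : Fin k × Fin n => x.2 = a ∧ (σ x).2 = b)).card = _
        rw [Finset.filter_filter]
        congr 1
        apply Finset.filter_congr
        intro x _
        exact and_comm
      rw [Finset.sum_congr rfl (fun a _ => h3 a), ← h2, h1, hfib b]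
    have hcosteq : gcost c F σ = ∑ a, ∑ b, (A a b : ℚ) * c2 a b := by
      have e0 : gcost c F σ = ∑ x : Fin k × Fin n, c2 x.2 ((σ x).2) :=
        Finset.sum_congr rfl (fun x _ => hF x (σ x))
      have e1 : ∑ x : Fin k × Fin n, c2 x.2 ((σ x).2)
          = ∑ y ∈ (univ ×ˢ univ : Finset (Fin n × Fin n)),
              ∑ x ∈ univ.filter (fun x : Fin k × Fin n => (x.2, (σ x).2) = y),
                c2 x.2 ((σ x).2) :=
        (Finset.sum_fiberwise_of_maps_to (fun x _ => mem_univ _) _).symm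
      have e2 : ∀ y : Fin n × Fin n,
          ∑ x ∈ univ.filter (fun x : Fin k × Fin n => (x.2, (σ x).2) = y),
            c2 x.2 ((σ x).2) = (A y.1 y.2 : ℚ) * c2 y.1 y.2 := by
        intro y
        have efil : univ.filter (fun x : Fin k × Fin n => (x.2, (σ x).2) = y)
            = univ.filter (fun x : Fin k × Fin n => x.2 = y.1 ∧ (σ x).2 = y.2) := by
          apply Finset.filter_congr
          intro x _
          rw [Prod.ext_iff]
        rw [efil]
        rw [Finset.sum_congr rfl (fun x hx => by
          simp only [mem_filter] at hx
          rw [hx.2.1, hx.2.2])]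
        rw [Finset.sum_const, hA, nsmul_eq_mul]
      rw [e0, e1, Finset.sum_congr rfl (fun y _ => e2 y), Finset.sum_product]
    have hm : ∀ τ : Equiv.Perm (Fin n), gmin c g ≤ ∑ a, c2 a (τ a) :=
      fun τ => gmin_le c g τ
    have := hall_bound c2 (gmin c g) hm k A hrow hcol
    rw [hσ, hcosteq]
    exact this

end GminAux



lemma wt_add (a1 b1 a2 b2 : ℤ) (P R : ℤ × ℤ) :
    wt a1 b1 a2 b2 (P + R) = wt a1 b1 a2 b2 P + wt a1 b1 a2 b2 R := by
  unfold wt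
  rw [Prod.fst_add, Prod.snd_add]
  push_cast
  ring

lemma wt_smul (a1 b1 a2 b2 : ℤ) (z : ℤ) (P : ℤ × ℤ) :
    wt a1 b1 a2 b2 (z • P) = (z : ℚ) * wt a1 b1 a2 b2 P := by
  unfold wt
  rw [Prod.smul_fst, Prod.smul_snd, smul_eq_mul, smul_eq_mul]
  push_cast
  ring

lemma cost_shift (p a1 b1 a2 b2 : ℤ) (u v Qa Qb : ℤ × ℤ) (z z' : ℤ)
    (hz : wt a1 b1 a2 b2 Qa = z) (hz' : wt a1 b1 a2 b2 Qb = z') :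
    (⌈wt a1 b1 a2 b2 (p • (v + Qb) - (u + Qa))⌉ : ℚ)
      - wt a1 b1 a2 b2 (p • (v + Qb) - (u + Qa))
    = (⌈wt a1 b1 a2 b2 (p • v - u)⌉ : ℚ) - wt a1 b1 a2 b2 (p • v - u) := by
  have hsplit : p • (v + Qb) - (u + Qa) = (p • v - u) + (p • Qb - Qa) := by
    rw [smul_add]; abel
  have hwt2 : wt a1 b1 a2 b2 (p • Qb - Qa) = ((p * z' - z : ℤ) : ℚ) := by
    have : p • Qb - Qa = p • Qb + (-1 : ℤ) • Qa := by
      rw [neg_one_zsmul]; abel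
    rw [this, wt_add, wt_smul, wt_smul, hz, hz']
    push_cast
    ring
  have hwt : wt a1 b1 a2 b2 (p • (v + Qb) - (u + Qa))
      = wt a1 b1 a2 b2 (p • v - u) + ((p * z' - z : ℤ) : ℚ) := by
    rw [hsplit, wt_add, hwt2]
  rw [hwt, Int.ceil_add_intCast]
  push_cast
  ring

lemma map_listFn (S : Multiset (ℤ × ℤ)) :
    Multiset.map (listFn S) Finset.univ.val = S := by
  have h1 : (Finset.univ : Finset (Fin S.toList.length)).val
      = ↑(List.finRange S.toList.length) := by
    rw [Fin.univ_def]
  rw [h1, Multiset.map_coe]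
  rw [← List.ofFn_eq_map]
  rw [show List.ofFn (listFn S) = S.toList from List.ofFn_get S.toList]
  exact Multiset.coe_toList S

lemma map_univ_eq_sum_singleton {ι : Type*} [Fintype ι] (f : ι → ℤ × ℤ) :
    Multiset.map f Finset.univ.val = ∑ i : ι, ({f i} : Multiset (ℤ × ℤ)) := by
  rw [Finset.sum_eq_multiset_sum]
  rw [show Multiset.map (fun i => ({f i} : Multiset (ℤ × ℤ))) Finset.univ.val
    = Multiset.map (fun x => ({x} : Multiset (ℤ × ℤ))) (Multiset.map f Finset.univ.val) from
    (Multiset.map_map _ _ _).symm]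
  exact (Multiset.sum_map_singleton _).symm

/-- For a prime `p ∤ D`, a finite subset `S2` of `M(Δ)` and points
`Q1, ..., Qk` of `M(Δ)` with integer weights, the multiset
`S1 = (S2+Q1) ⊎ ... ⊎ (S2+Qk)` satisfies `h2(S1) = k·h2(S2)`. -/
theorem statement4 (p a1 b1 a2 b2 : ℤ)
    (ha1 : 0 ≤ a1) (hb1 : 0 ≤ b1) (ha2 : 0 ≤ a2) (hb2 : 0 ≤ b2)
    (hD : 0 < a2 * b1 - a1 * b2)
    (hp : Prime p) (hpD : ¬ p ∣ (a2 * b1 - a1 * b2))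
    (S2 : Finset (ℤ × ℤ)) (hS2 : (S2 : Set (ℤ × ℤ)) ⊆ MDelta a1 b1 a2 b2)
    (k : ℕ) (Q : Fin k → ℤ × ℤ)
    (hQmem : ∀ i, Q i ∈ MDelta a1 b1 a2 b2)
    (hQw : ∀ i, ∃ z : ℤ, wt a1 b1 a2 b2 (Q i) = z) :
    h2Min p a1 b1 a2 b2 (∑ i : Fin k, S2.val.map (fun P => P + Q i)) =
      (k : ℚ) * h2Min p a1 b1 a2 b2 S2.val := by
  classical
  set c : (ℤ × ℤ) → (ℤ × ℤ) → ℚ := fun u v =>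
    (⌈wt a1 b1 a2 b2 (p • v - u)⌉ : ℚ) - wt a1 b1 a2 b2 (p • v - u) with hc
  set g : Fin S2.val.toList.length → ℤ × ℤ := listFn S2.val with hg
  set F : Fin k × Fin S2.val.toList.length → ℤ × ℤ := fun x => g x.2 + Q x.1 with hFdef
  have hF : ∀ x y : Fin k × Fin S2.val.toList.length,
      c (F x) (F y) = c (g x.2) (g y.2) := by
    intro x y
    obtain ⟨z, hz⟩ := hQw x.1
    obtain ⟨z', hz'⟩ := hQw y.1
    exact cost_shift p a1 b1 a2 b2 (g x.2) (g y.2) (Q x.1) (Q y.1) z z' hz hz'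
  have hB : (∑ i : Fin k, S2.val.map (fun P => P + Q i))
      = Multiset.map F Finset.univ.val := by
    have step1 : ∀ j : Fin k, S2.val.map (fun P => P + Q j)
        = Multiset.map (fun i => g i + Q j) Finset.univ.val := by
      intro j
      conv_lhs => rw [← map_listFn S2.val]
      rw [Multiset.map_map]
      rfl
    calc ∑ i : Fin k, S2.val.map (fun P => P + Q i)
        = ∑ j : Fin k, ∑ i, ({g i + Q j} : Multiset (ℤ × ℤ)) := by
          refine Finset.sum_congr rfl (fun j _ => ?_)
          rw [step1 j, map_univ_eq_sum_singleton]
      _ = ∑ x : Fin k × Fin S2.val.toList.length, ({F x} : Multiset (ℤ × ℤ)) := by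
          rw [Fintype.sum_prod_type]
      _ = Multiset.map F Finset.univ.val := (map_univ_eq_sum_singleton F).symm
  have key1 : h2Min p a1 b1 a2 b2 (∑ i : Fin k, S2.val.map (fun P => P + Q i))
      = gmin c (listFn (∑ i : Fin k, S2.val.map (fun P => P + Q i))) := rfl
  have key2 : h2Min p a1 b1 a2 b2 S2.val = gmin c g := rfl
  rw [key1, key2]
  have heq : gmin c (listFn (∑ i : Fin k, S2.val.map (fun P => P + Q i))) = gmin c F := by
    apply gmin_eq_of_map_eq
    rw [map_listFn, hB]
  rw [heq]
  exact gmin_prod c g F hF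
end
end

section
/- For every integer k ≥ 1, the number of lattice points of M(Δ) of weight strictly less than k satisfies x_k = k*x_1 + D*k*(k−1)/2. -/
open Finset

noncomputable section

namespace S6

def uu (a2 b2 : ℤ) (P : ℤ × ℤ) : ℤ := a2 * P.2 - b2 * P.1
def vv (a1 b1 : ℤ) (P : ℤ × ℤ) : ℤ := b1 * P.1 - a1 * P.2

section basic

variable (a1 b1 a2 b2 : ℤ)

lemma uu_sub (P Q : ℤ × ℤ) : uu a2 b2 (P - Q) = uu a2 b2 P - uu a2 b2 Q := by
  simp only [uu, Prod.fst_sub, Prod.snd_sub]; ring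

lemma vv_sub (P Q : ℤ × ℤ) : vv a1 b1 (P - Q) = vv a1 b1 P - vv a1 b1 Q := by
  simp only [vv, Prod.fst_sub, Prod.snd_sub]; ring

lemma uu_add (P Q : ℤ × ℤ) : uu a2 b2 (P + Q) = uu a2 b2 P + uu a2 b2 Q := by
  simp only [uu, Prod.fst_add, Prod.snd_add]; ring

lemma vv_add (P Q : ℤ × ℤ) : vv a1 b1 (P + Q) = vv a1 b1 P + vv a1 b1 Q := by
  simp only [vv, Prod.fst_add, Prod.snd_add]; ring

lemma uu_smul (m : ℤ) (P : ℤ × ℤ) : uu a2 b2 (m • P) = m * uu a2 b2 P := by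
  simp only [uu, Prod.smul_fst, Prod.smul_snd, smul_eq_mul]; ring

lemma vv_smul (m : ℤ) (P : ℤ × ℤ) : vv a1 b1 (m • P) = m * vv a1 b1 P := by
  simp only [vv, Prod.smul_fst, Prod.smul_snd, smul_eq_mul]; ring

lemma uu_w1 : uu a2 b2 (a1, b1) = a2 * b1 - a1 * b2 := by
  simp only [uu]; ring

lemma vv_w1 : vv a1 b1 (a1, b1) = 0 := by
  simp only [vv]; ring

lemma uu_w2 : uu a2 b2 (a2, b2) = 0 := by
  simp only [uu]; ring

lemma vv_w2 : vv a1 b1 (a2, b2) = a2 * b1 - a1 * b2 := by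
  simp only [vv]; ring

lemma uv_inj (hD : a2 * b1 - a1 * b2 ≠ 0) {P Q : ℤ × ℤ}
    (hu : uu a2 b2 P = uu a2 b2 Q) (hv : vv a1 b1 P = vv a1 b1 Q) : P = Q := by
  simp only [uu] at hu
  simp only [vv] at hv
  have e1 : (a2 * b1 - a1 * b2) * P.1 = (a2 * b1 - a1 * b2) * Q.1 := by
    linear_combination a1 * hu + a2 * hv
  have e2 : (a2 * b1 - a1 * b2) * P.2 = (a2 * b1 - a1 * b2) * Q.2 := by
    linear_combination b1 * hu + b2 * hv
  exact Prod.ext_iff.mpr ⟨mul_left_cancel₀ hD e1, mul_left_cancel₀ hD e2⟩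

end basic

/-- if `m * d = e` with `-d < e < d` and `0 < d` then `m = 0`. -/
lemma mul_bound_zero {m d e : ℤ} (hd : 0 < d) (h : m * d = e) (h1 : -d < e) (h2 : e < d) :
    m = 0 := by
  rcases lt_trichotomy m 0 with hm | hm | hm
  · exfalso
    have : m ≤ -1 := by omega
    nlinarith
  · exact hm
  · exfalso
    have : 1 ≤ m := by omega
    nlinarith

section finiteness

variable (a1 b1 a2 b2 : ℤ)

lemma fin_bound (hD : a2 * b1 - a1 * b2 ≠ 0) (N : ℤ) :
    {P : ℤ × ℤ | 0 ≤ uu a2 b2 P ∧ 0 ≤ vv a1 b1 P ∧ uu a2 b2 P + vv a1 b1 P < N}.Finite := by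
  have hinj : Function.Injective (fun P : ℤ × ℤ => (uu a2 b2 P, vv a1 b1 P)) := by
    intro P Q h
    exact uv_inj a1 b1 a2 b2 hD (congrArg Prod.fst h) (congrArg Prod.snd h)
  apply Set.Finite.subset
    (Set.Finite.preimage (f := fun P : ℤ × ℤ => (uu a2 b2 P, vv a1 b1 P))
      hinj.injOn (Set.finite_Icc ((0 : ℤ), (0 : ℤ)) (N, N)))
  rintro P ⟨h1, h2, h3⟩
  simp only [Set.mem_preimage, Set.mem_Icc, Prod.mk_le_mk]
  refine ⟨⟨h1, h2⟩, by omega, by omega⟩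

end finiteness

end S6
namespace S6

/-! ### The quotient-counting machinery -/

lemma image_add_mem (c : ℤ × ℤ) (s : Set (ℤ × ℤ)) (P : ℤ × ℤ) :
    P ∈ (fun Q => Q + c) '' s ↔ P - c ∈ s := by
  constructor
  · rintro ⟨Q, hQ, rfl⟩
    simpa using hQ
  · intro h
    exact ⟨P - c, h, by ring⟩

lemma ncard_eq_card_quot (p : Submodule ℤ (ℤ × ℤ)) (S : Set (ℤ × ℤ))
    (hinj : ∀ x ∈ S, ∀ y ∈ S, x - y ∈ p → x = y)
    (hsurj : ∀ x : ℤ × ℤ, ∃ y ∈ S, x - y ∈ p) :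
    S.ncard = Nat.card ((ℤ × ℤ) ⧸ p) := by
  rw [← Nat.card_coe_set_eq]
  apply Nat.card_congr
  refine Equiv.ofBijective (fun y => Submodule.Quotient.mk (y : ℤ × ℤ)) ⟨?_, ?_⟩
  · rintro ⟨x, hx⟩ ⟨y, hy⟩ h
    exact Subtype.ext (hinj x hx y hy ((Submodule.Quotient.eq p).mp h))
  · intro q
    obtain ⟨x, rfl⟩ := Submodule.Quotient.mk_surjective p q
    obtain ⟨y, hy, hxy⟩ := hsurj x
    exact ⟨⟨y, hy⟩, (Submodule.Quotient.eq p).mpr (by rw [← neg_sub]; exact p.neg_mem hxy)⟩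

lemma span_pair_shear (w1 w2 : ℤ × ℤ) (q : ℤ) :
    Submodule.span ℤ {w1, w2} = Submodule.span ℤ {w2 - q • w1, w1} := by
  ext x
  simp only [Submodule.mem_span_pair]
  constructor
  · rintro ⟨m, n, rfl⟩
    exact ⟨n, m + n * q, by module⟩
  · rintro ⟨m, n, rfl⟩
    exact ⟨n - m * q, m, by module⟩

lemma span_pair_neg_left (w1 w2 : ℤ × ℤ) :
    Submodule.span ℤ {w1, w2} = Submodule.span ℤ {-w1, w2} := by
  ext x
  simp only [Submodule.mem_span_pair]
  constructor
  · rintro ⟨m, n, rfl⟩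
    exact ⟨-m, n, by module⟩
  · rintro ⟨m, n, rfl⟩
    exact ⟨-m, n, by module⟩

lemma span_pair_neg_right (w1 w2 : ℤ × ℤ) :
    Submodule.span ℤ {w1, w2} = Submodule.span ℤ {w1, -w2} := by
  ext x
  simp only [Submodule.mem_span_pair]
  constructor
  · rintro ⟨m, n, rfl⟩
    exact ⟨m, -n, by module⟩
  · rintro ⟨m, n, rfl⟩
    exact ⟨m, -n, by module⟩

lemma card_quot_tri_pos (a b c : ℤ) (ha : 0 < a) (hb : 0 < b) :
    Nat.card ((ℤ × ℤ) ⧸ Submodule.span ℤ {((0 : ℤ), b), (a, c)}) = a.toNat * b.toNat := by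
  have hinj : ∀ x ∈ {p : ℤ × ℤ | 0 ≤ p.1 ∧ p.1 < a ∧ 0 ≤ p.2 ∧ p.2 < b},
      ∀ y ∈ {p : ℤ × ℤ | 0 ≤ p.1 ∧ p.1 < a ∧ 0 ≤ p.2 ∧ p.2 < b},
      x - y ∈ Submodule.span ℤ {((0 : ℤ), b), (a, c)} → x = y := by
    rintro x ⟨hx1, hx2, hx3, hx4⟩ y ⟨hy1, hy2, hy3, hy4⟩ hmem
    rw [Submodule.mem_span_pair] at hmem
    obtain ⟨m, n, hmn⟩ := hmem
    have h1 : n * a = x.1 - y.1 := by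
      have := congrArg Prod.fst hmn
      simp only [Prod.fst_add, Prod.smul_mk, smul_eq_mul, Prod.fst_sub, mul_zero,
        zero_add] at this
      exact this
    have h2 : m * b + n * c = x.2 - y.2 := by
      have := congrArg Prod.snd hmn
      simp only [Prod.snd_add, Prod.smul_mk, smul_eq_mul, Prod.snd_sub] at this
      exact this
    have hn : n = 0 := mul_bound_zero ha h1 (by linarith) (by linarith)
    rw [hn, zero_mul, add_zero] at h2
    have hm : m = 0 := mul_bound_zero hb h2 (by linarith) (by linarith)
    rw [hm, hn] at hmn
    simp only [zero_smul, add_zero] at hmn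
    have : x - y = 0 := hmn.symm
    exact sub_eq_zero.mp this
  have hsurj : ∀ x : ℤ × ℤ, ∃ y ∈ {p : ℤ × ℤ | 0 ≤ p.1 ∧ p.1 < a ∧ 0 ≤ p.2 ∧ p.2 < b},
      x - y ∈ Submodule.span ℤ {((0 : ℤ), b), (a, c)} := by
    intro x
    refine ⟨(x.1 % a, (x.2 - (x.1 / a) * c) % b),
      ⟨Int.emod_nonneg _ (ne_of_gt ha), Int.emod_lt_of_pos _ ha,
       Int.emod_nonneg _ (ne_of_gt hb), Int.emod_lt_of_pos _ hb⟩, ?_⟩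
    rw [Submodule.mem_span_pair]
    refine ⟨(x.2 - (x.1 / a) * c) / b, x.1 / a, ?_⟩
    have e1 := Int.mul_ediv_add_emod x.1 a
    have e2 := Int.mul_ediv_add_emod (x.2 - (x.1 / a) * c) b
    rw [Prod.ext_iff]
    constructor
    · simp only [Prod.fst_add, Prod.smul_mk, smul_eq_mul, Prod.fst_sub, mul_zero, zero_add]
      linear_combination e1
    · simp only [Prod.snd_add, Prod.smul_mk, smul_eq_mul, Prod.snd_sub]
      linear_combination e2
  rw [← ncard_eq_card_quot _ _ hinj hsurj]
  have he : {p : ℤ × ℤ | 0 ≤ p.1 ∧ p.1 < a ∧ 0 ≤ p.2 ∧ p.2 < b}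
      = ↑(Finset.Ico (0 : ℤ) a ×ˢ Finset.Ico (0 : ℤ) b) := by
    ext p
    simp only [Set.mem_setOf_eq, Finset.coe_product, Set.mem_prod, Finset.mem_coe,
      Finset.mem_Ico, and_assoc]
  rw [he, Set.ncard_coe_finset, Finset.card_product, Int.card_Ico, Int.card_Ico]
  congr 1 <;> omega

lemma card_quot_tri (a b c : ℤ) (ha : a ≠ 0) (hb : b ≠ 0) :
    Nat.card ((ℤ × ℤ) ⧸ Submodule.span ℤ {((0 : ℤ), b), (a, c)}) = a.natAbs * b.natAbs := by
  rcases ha.lt_or_gt with ha' | ha' <;> rcases hb.lt_or_gt with hb' | hb'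
  · rw [span_pair_neg_left, span_pair_neg_right,
      show -(((0 : ℤ), b) : ℤ × ℤ) = ((0 : ℤ), -b) by simp,
      show -((a, c) : ℤ × ℤ) = (-a, -c) by simp,
      card_quot_tri_pos (-a) (-b) (-c) (by omega) (by omega)]
    have e1 : (-a).toNat = a.natAbs := by omega
    have e2 : (-b).toNat = b.natAbs := by omega
    rw [e1, e2]
  · rw [span_pair_neg_right, show -((a, c) : ℤ × ℤ) = (-a, -c) by simp,
      card_quot_tri_pos (-a) b (-c) (by omega) hb']
    have e1 : (-a).toNat = a.natAbs := by omega
    have e2 : b.toNat = b.natAbs := by omega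
    rw [e1, e2]
  · rw [span_pair_neg_left, show -(((0 : ℤ), b) : ℤ × ℤ) = ((0 : ℤ), -b) by simp,
      card_quot_tri_pos a (-b) c ha' (by omega)]
    have e1 : a.toNat = a.natAbs := by omega
    have e2 : (-b).toNat = b.natAbs := by omega
    rw [e1, e2]
  · rw [card_quot_tri_pos a b c ha' hb']
    have e1 : a.toNat = a.natAbs := by omega
    have e2 : b.toNat = b.natAbs := by omega
    rw [e1, e2]

lemma card_quot_tri' (u2 v1 v2 : ℤ) (hdet : (0 : ℤ) * v2 - u2 * v1 ≠ 0) :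
    Nat.card ((ℤ × ℤ) ⧸ Submodule.span ℤ {((0 : ℤ), u2), (v1, v2)})
      = ((0 : ℤ) * v2 - u2 * v1).natAbs := by
  have hu2 : u2 ≠ 0 := by rintro rfl; simp at hdet
  have hv1 : v1 ≠ 0 := by rintro rfl; simp at hdet
  rw [card_quot_tri v1 u2 v2 hv1 hu2, zero_mul, zero_sub, Int.natAbs_neg, Int.natAbs_mul,
    Nat.mul_comm]

lemma card_quot_aux : ∀ (N : ℕ) (w1 w2 : ℤ × ℤ), w1.1.natAbs ≤ N →
    w1.1 * w2.2 - w1.2 * w2.1 ≠ 0 →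
    Nat.card ((ℤ × ℤ) ⧸ Submodule.span ℤ {w1, w2}) = (w1.1 * w2.2 - w1.2 * w2.1).natAbs := by
  intro N
  induction N with
  | zero =>
    rintro ⟨u1, u2⟩ ⟨v1, v2⟩ hle hdet
    have h0 : u1 = 0 := by simp only at hle; omega
    subst h0
    exact card_quot_tri' u2 v1 v2 hdet
  | succ N ih =>
    rintro ⟨u1, u2⟩ ⟨v1, v2⟩ hle hdet
    by_cases h0 : u1 = 0
    · subst h0
      exact card_quot_tri' u2 v1 v2 hdet
    · rw [span_pair_shear ((u1, u2) : ℤ × ℤ) ((v1, v2) : ℤ × ℤ) (v1 / u1)]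
      have hw : ((v1, v2) : ℤ × ℤ) - (v1 / u1) • ((u1, u2) : ℤ × ℤ)
          = (v1 % u1, v2 - (v1 / u1) * u2) := by
        rw [Prod.ext_iff]
        constructor
        · simp only [Prod.fst_sub, Prod.smul_mk, smul_eq_mul]
          rw [Int.emod_def]
          ring
        · simp only [Prod.snd_sub, Prod.smul_mk, smul_eq_mul]
      rw [hw]
      have hdet' : (v1 % u1) * u2 - (v2 - (v1 / u1) * u2) * u1 = -(u1 * v2 - u2 * v1) := by
        rw [Int.emod_def]
        ring
      have hb : (v1 % u1).natAbs ≤ N := by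
        have h1 : 0 ≤ v1 % u1 := Int.emod_nonneg _ h0
        have h2 : v1 % u1 < |u1| := by rw [Int.abs_eq_natAbs]; exact Int.emod_lt _ h0
        have h3 : |u1| = (u1.natAbs : ℤ) := Int.abs_eq_natAbs u1
        omega
      rw [ih ((v1 % u1), (v2 - (v1 / u1) * u2)) ((u1, u2) : ℤ × ℤ) hb
        (by simp only; rw [hdet']; exact neg_ne_zero.mpr hdet)]
      simp only
      rw [hdet', Int.natAbs_neg]

end S6
namespace S6

section sets

variable (a1 b1 a2 b2 : ℤ)

def SS (n : ℤ) : Set (ℤ × ℤ) :=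
  {P | 0 ≤ uu a2 b2 P ∧ 0 ≤ vv a1 b1 P ∧
    uu a2 b2 P + vv a1 b1 P < n * (a2 * b1 - a1 * b2)}

def ST (n : ℤ) : Set (ℤ × ℤ) :=
  {P | 0 ≤ uu a2 b2 P ∧ 0 ≤ vv a1 b1 P ∧
    n * (a2 * b1 - a1 * b2) ≤ uu a2 b2 P + vv a1 b1 P ∧
    uu a2 b2 P + vv a1 b1 P < (n + 1) * (a2 * b1 - a1 * b2)}

def SQ : Set (ℤ × ℤ) :=
  {P | 0 ≤ uu a2 b2 P ∧ uu a2 b2 P < a2 * b1 - a1 * b2 ∧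
    0 ≤ vv a1 b1 P ∧ vv a1 b1 P < a2 * b1 - a1 * b2}

def BB : Set (ℤ × ℤ) :=
  {P | 0 ≤ uu a2 b2 P ∧ uu a2 b2 P < a2 * b1 - a1 * b2 ∧
    (a2 * b1 - a1 * b2) ≤ uu a2 b2 P + vv a1 b1 P ∧
    uu a2 b2 P + vv a1 b1 P < 2 * (a2 * b1 - a1 * b2)}

variable {a1 b1 a2 b2}

lemma SS_fin (hD : 0 < a2 * b1 - a1 * b2) (n : ℤ) : (SS a1 b1 a2 b2 n).Finite := by
  unfold SS
  exact fin_bound a1 b1 a2 b2 (ne_of_gt hD) _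

lemma ST_fin (hD : 0 < a2 * b1 - a1 * b2) (n : ℤ) : (ST a1 b1 a2 b2 n).Finite := by
  apply (SS_fin hD (n + 1)).subset
  rintro P ⟨h1, h2, h3, h4⟩
  exact ⟨h1, h2, h4⟩

lemma SQ_fin (hD : 0 < a2 * b1 - a1 * b2) : (SQ a1 b1 a2 b2).Finite := by
  apply (fin_bound a1 b1 a2 b2 (ne_of_gt hD) (2 * (a2 * b1 - a1 * b2))).subset
  rintro P ⟨h1, h2, h3, h4⟩
  exact ⟨h1, h3, by linarith⟩

lemma BB_fin (hD : 0 < a2 * b1 - a1 * b2) : (BB a1 b1 a2 b2).Finite := by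
  apply (fin_bound a1 b1 a2 b2 (ne_of_gt hD) (2 * (a2 * b1 - a1 * b2))).subset
  rintro P ⟨h1, h2, h3, h4⟩
  exact ⟨h1, by linarith, h4⟩

/-- The fundamental parallelogram has exactly `D` lattice points. -/
lemma SQ_ncard (hD : 0 < a2 * b1 - a1 * b2) :
    (SQ a1 b1 a2 b2).ncard = (a2 * b1 - a1 * b2).toNat := by
  have hDne : a2 * b1 - a1 * b2 ≠ 0 := ne_of_gt hD
  set p := Submodule.span ℤ {((a1, b1) : ℤ × ℤ), ((a2, b2) : ℤ × ℤ)} with hp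
  have hinj : ∀ x ∈ SQ a1 b1 a2 b2, ∀ y ∈ SQ a1 b1 a2 b2, x - y ∈ p → x = y := by
    rintro x ⟨hx1, hx2, hx3, hx4⟩ y ⟨hy1, hy2, hy3, hy4⟩ hmem
    rw [hp, Submodule.mem_span_pair] at hmem
    obtain ⟨m, n, hmn⟩ := hmem
    have hu : m * (a2 * b1 - a1 * b2) = uu a2 b2 x - uu a2 b2 y := by
      rw [← uu_sub, ← hmn, uu_add, uu_smul, uu_smul, uu_w1, uu_w2]
      ring
    have hv : n * (a2 * b1 - a1 * b2) = vv a1 b1 x - vv a1 b1 y := by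
      rw [← vv_sub, ← hmn, vv_add, vv_smul, vv_smul, vv_w1, vv_w2]
      ring
    have hm0 : m = 0 := mul_bound_zero hD hu (by linarith) (by linarith)
    have hn0 : n = 0 := mul_bound_zero hD hv (by linarith) (by linarith)
    rw [hm0, hn0] at hmn
    simp only [zero_smul, add_zero] at hmn
    exact sub_eq_zero.mp hmn.symm
  have hsurj : ∀ x : ℤ × ℤ, ∃ y ∈ SQ a1 b1 a2 b2, x - y ∈ p := by
    intro x
    set q1 := uu a2 b2 x / (a2 * b1 - a1 * b2) with hq1
    set q2 := vv a1 b1 x / (a2 * b1 - a1 * b2) with hq2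
    set y := x - q1 • ((a1, b1) : ℤ × ℤ) - q2 • ((a2, b2) : ℤ × ℤ) with hy
    have hu : uu a2 b2 y = uu a2 b2 x % (a2 * b1 - a1 * b2) := by
      rw [Int.emod_def, hy, hq1, hq2]
      simp only [uu, vv, Prod.fst_sub, Prod.snd_sub, Prod.smul_fst, Prod.smul_snd, smul_eq_mul]
      ring
    have hv : vv a1 b1 y = vv a1 b1 x % (a2 * b1 - a1 * b2) := by
      rw [Int.emod_def, hy, hq1, hq2]
      simp only [uu, vv, Prod.fst_sub, Prod.snd_sub, Prod.smul_fst, Prod.smul_snd, smul_eq_mul]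
      ring
    have hmem : y ∈ SQ a1 b1 a2 b2 := by
      refine ⟨?_, ?_, ?_, ?_⟩
      · rw [hu]; exact Int.emod_nonneg _ hDne
      · rw [hu]; exact Int.emod_lt_of_pos _ hD
      · rw [hv]; exact Int.emod_nonneg _ hDne
      · rw [hv]; exact Int.emod_lt_of_pos _ hD
    refine ⟨y, hmem, ?_⟩
    rw [hp, Submodule.mem_span_pair]
    exact ⟨q1, q2, by rw [hy]; abel⟩
  rw [ncard_eq_card_quot p _ hinj hsurj, hp,
    card_quot_aux a1.natAbs ((a1, b1) : ℤ × ℤ) ((a2, b2) : ℤ × ℤ) le_rfl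
      (by simp only; intro h; apply hDne; linear_combination -h)]
  simp only
  rw [show a1 * b2 - b1 * a2 = -(a2 * b1 - a1 * b2) by ring, Int.natAbs_neg]
  omega

end sets

end S6
namespace S6

section strips

variable {a1 b1 a2 b2 : ℤ}

lemma BB_ncard (hD : 0 < a2 * b1 - a1 * b2) :
    (BB a1 b1 a2 b2).ncard = (SQ a1 b1 a2 b2).ncard := by
  set C1 : Set (ℤ × ℤ) := {P | 0 ≤ uu a2 b2 P ∧ uu a2 b2 P < a2 * b1 - a1 * b2 ∧
    0 ≤ vv a1 b1 P ∧ vv a1 b1 P < a2 * b1 - a1 * b2 ∧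
    uu a2 b2 P + vv a1 b1 P < a2 * b1 - a1 * b2} with hC1
  set C2 : Set (ℤ × ℤ) := {P | 0 ≤ uu a2 b2 P ∧ uu a2 b2 P < a2 * b1 - a1 * b2 ∧
    0 ≤ vv a1 b1 P ∧ vv a1 b1 P < a2 * b1 - a1 * b2 ∧
    a2 * b1 - a1 * b2 ≤ uu a2 b2 P + vv a1 b1 P} with hC2
  have hfC1 : C1.Finite := by
    apply (SQ_fin hD).subset
    rintro P ⟨h1, h2, h3, h4, h5⟩
    exact ⟨h1, h2, h3, h4⟩
  have hfC2 : C2.Finite := by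
    apply (SQ_fin hD).subset
    rintro P ⟨h1, h2, h3, h4, h5⟩
    exact ⟨h1, h2, h3, h4⟩
  have hBB : BB a1 b1 a2 b2 = C2 ∪ ((fun Q => Q + ((a2, b2) : ℤ × ℤ)) '' C1) := by
    ext P
    rw [Set.mem_union, image_add_mem]
    simp only [BB, hC1, hC2, Set.mem_setOf_eq, uu_sub, vv_sub, uu_w2 a2 b2, vv_w2 a1 b1 a2 b2, sub_zero]
    constructor
    · rintro ⟨h1, h2, h3, h4⟩
      by_cases hv : vv a1 b1 P < a2 * b1 - a1 * b2
      · exact Or.inl ⟨h1, h2, by linarith, hv, h3⟩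
      · push_neg at hv
        exact Or.inr ⟨h1, h2, by linarith, by linarith, by linarith⟩
    · rintro (⟨g1, g2, g3, g4, g5⟩ | ⟨g1, g2, g3, g4, g5⟩)
      · exact ⟨g1, g2, g5, by linarith⟩
      · exact ⟨g1, g2, by linarith, by linarith⟩
  have hSQ : SQ a1 b1 a2 b2 = C1 ∪ C2 := by
    ext P
    simp only [SQ, hC1, hC2, Set.mem_setOf_eq, Set.mem_union]
    constructor
    · rintro ⟨h1, h2, h3, h4⟩
      rcases lt_or_ge (uu a2 b2 P + vv a1 b1 P) (a2 * b1 - a1 * b2) with hc | hc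
      · exact Or.inl ⟨h1, h2, h3, h4, hc⟩
      · exact Or.inr ⟨h1, h2, h3, h4, hc⟩
    · rintro (⟨h1, h2, h3, h4, h5⟩ | ⟨h1, h2, h3, h4, h5⟩) <;> exact ⟨h1, h2, h3, h4⟩
  have hd1 : Disjoint C2 ((fun Q => Q + ((a2, b2) : ℤ × ℤ)) '' C1) := by
    rw [Set.disjoint_left]
    intro P h1 h2
    rw [image_add_mem] at h2
    obtain ⟨-, -, -, g4, -⟩ := h1
    obtain ⟨-, -, g3, -, -⟩ := h2
    rw [vv_sub, vv_w2 a1 b1 a2 b2] at g3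
    linarith
  have hd2 : Disjoint C1 C2 := by
    rw [Set.disjoint_left]
    rintro P ⟨-, -, -, -, h5⟩ ⟨-, -, -, -, g5⟩
    linarith
  rw [hBB, Set.ncard_union_eq hd1 hfC2 (hfC1.image _),
    Set.ncard_image_of_injective _ (add_left_injective _), hSQ,
    Set.ncard_union_eq hd2 hfC1 hfC2]
  omega

lemma ST_succ (hD : 0 < a2 * b1 - a1 * b2) (n : ℤ) (hn : 0 ≤ n) :
    ST a1 b1 a2 b2 (n + 1) =
      ((fun Q => Q + ((a1, b1) : ℤ × ℤ)) '' ST a1 b1 a2 b2 n) ∪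
      ((fun Q => Q + n • ((a2, b2) : ℤ × ℤ)) '' BB a1 b1 a2 b2) := by
  ext P
  rw [Set.mem_union, image_add_mem, image_add_mem]
  simp only [ST, BB, Set.mem_setOf_eq, uu_sub, vv_sub, uu_smul, vv_smul,
    uu_w1 a1 b1 a2 b2, vv_w1 a1 b1, uu_w2 a2 b2, vv_w2 a1 b1 a2 b2, mul_zero, sub_zero]
  constructor
  · rintro ⟨h1, h2, h3, h4⟩
    by_cases hc : a2 * b1 - a1 * b2 ≤ uu a2 b2 P
    · left
      refine ⟨by linarith, by linarith, by linarith, by linarith⟩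
    · right
      push_neg at hc
      refine ⟨h1, hc, by linarith, by linarith⟩
  · rintro (⟨h1, h2, h3, h4⟩ | ⟨h1, h2, h3, h4⟩)
    · exact ⟨by linarith, by linarith, by linarith, by linarith⟩
    · have hnD : 0 ≤ n * (a2 * b1 - a1 * b2) := mul_nonneg hn (by linarith)
      exact ⟨by linarith, by linarith, by linarith, by linarith⟩

lemma ST_succ_disj (hD : 0 < a2 * b1 - a1 * b2) (n : ℤ) :
    Disjoint ((fun Q => Q + ((a1, b1) : ℤ × ℤ)) '' ST a1 b1 a2 b2 n)
      ((fun Q => Q + n • ((a2, b2) : ℤ × ℤ)) '' BB a1 b1 a2 b2) := by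
  rw [Set.disjoint_left]
  intro P h1 h2
  rw [image_add_mem] at h1 h2
  obtain ⟨g1, -, -, -⟩ := h1
  obtain ⟨-, g2, -, -⟩ := h2
  rw [uu_sub, uu_w1 a1 b1 a2 b2] at g1
  rw [uu_sub, uu_smul, uu_w2 a2 b2, mul_zero, sub_zero] at g2
  linarith

lemma ST_ncard (hD : 0 < a2 * b1 - a1 * b2) :
    ∀ n : ℕ, (ST a1 b1 a2 b2 (n : ℤ)).ncard
      = (SS a1 b1 a2 b2 1).ncard + n * (a2 * b1 - a1 * b2).toNat := by
  intro n
  induction n with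
  | zero =>
    have he : ST a1 b1 a2 b2 ((0 : ℕ) : ℤ) = SS a1 b1 a2 b2 1 := by
      ext P
      simp only [ST, SS, Set.mem_setOf_eq, Nat.cast_zero, zero_mul, zero_add, one_mul]
      constructor
      · rintro ⟨h1, h2, h3, h4⟩
        exact ⟨h1, h2, h4⟩
      · rintro ⟨h1, h2, h3⟩
        exact ⟨h1, h2, by linarith, h3⟩
    rw [he]
    omega
  | succ n ih =>
    have he : ((n + 1 : ℕ) : ℤ) = (n : ℤ) + 1 := by push_cast; ring
    rw [he, ST_succ hD (n : ℤ) (by positivity),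
      Set.ncard_union_eq (ST_succ_disj hD (n : ℤ)) ((ST_fin hD _).image _)
        ((BB_fin hD).image _),
      Set.ncard_image_of_injective _ (add_left_injective _),
      Set.ncard_image_of_injective _ (add_left_injective _),
      ih, BB_ncard hD, SQ_ncard hD]
    ring

lemma SS_succ_ncard (hD : 0 < a2 * b1 - a1 * b2) (n : ℤ) :
    (SS a1 b1 a2 b2 (n + 1)).ncard = (SS a1 b1 a2 b2 n).ncard + (ST a1 b1 a2 b2 n).ncard := by
  have he : SS a1 b1 a2 b2 (n + 1) = SS a1 b1 a2 b2 n ∪ ST a1 b1 a2 b2 n := by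
    ext P
    simp only [SS, ST, Set.mem_setOf_eq, Set.mem_union]
    constructor
    · rintro ⟨h1, h2, h3⟩
      rcases lt_or_ge (uu a2 b2 P + vv a1 b1 P) (n * (a2 * b1 - a1 * b2)) with hc | hc
      · exact Or.inl ⟨h1, h2, hc⟩
      · exact Or.inr ⟨h1, h2, hc, h3⟩
    · rintro (⟨h1, h2, h3⟩ | ⟨h1, h2, h3, h4⟩)
      · exact ⟨h1, h2, by nlinarith⟩
      · exact ⟨h1, h2, h4⟩
  have hd : Disjoint (SS a1 b1 a2 b2 n) (ST a1 b1 a2 b2 n) := by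
    rw [Set.disjoint_left]
    rintro P ⟨-, -, h3⟩ ⟨-, -, g3, -⟩
    linarith
  rw [he, Set.ncard_union_eq hd (SS_fin hD n) (ST_fin hD n)]

lemma SS_card (hD : 0 < a2 * b1 - a1 * b2) (n : ℕ) :
    ((SS a1 b1 a2 b2 (n : ℤ)).ncard : ℚ) = (n : ℚ) * (SS a1 b1 a2 b2 1).ncard +
      ((a2 * b1 - a1 * b2 : ℤ) : ℚ) * n * ((n : ℚ) - 1) / 2 := by
  induction n with
  | zero =>
    have he : SS a1 b1 a2 b2 ((0 : ℕ) : ℤ) = ∅ := by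
      rw [Set.eq_empty_iff_forall_notMem]
      rintro P ⟨h1, h2, h3⟩
      simp only [Nat.cast_zero, zero_mul] at h3
      linarith
    rw [he]
    simp
  | succ n ih =>
    have he : ((n + 1 : ℕ) : ℤ) = (n : ℤ) + 1 := by push_cast; ring
    have hDQ : ((a2 * b1 - a1 * b2).toNat : ℚ) = ((a2 * b1 - a1 * b2 : ℤ) : ℚ) := by
      rw [← Int.cast_natCast, Int.toNat_of_nonneg (le_of_lt hD)]
    rw [he, SS_succ_ncard hD (n : ℤ), ST_ncard hD n]
    push_cast [hDQ] at ih ⊢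
    linear_combination ih
end strips

end S6
namespace S6

section translate

variable (a1 b1 a2 b2 : ℤ)

lemma mem_M_iff (hD : 0 < a2 * b1 - a1 * b2) (P : ℤ × ℤ) :
    P ∈ MDelta a1 b1 a2 b2 ↔ 0 ≤ uu a2 b2 P ∧ 0 ≤ vv a1 b1 P := by
  have hDq : (0 : ℚ) < ((a2 * b1 - a1 * b2 : ℤ) : ℚ) := by exact_mod_cast hD
  constructor
  · rintro ⟨s, t, hs, ht, hx, hy⟩
    constructor
    · have hu : ((uu a2 b2 P : ℤ) : ℚ) = s * ((a2 * b1 - a1 * b2 : ℤ) : ℚ) := by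
        simp only [uu]
        push_cast
        linear_combination (a2 : ℚ) * hy - (b2 : ℚ) * hx
      have : (0 : ℚ) ≤ ((uu a2 b2 P : ℤ) : ℚ) := by
        rw [hu]; exact mul_nonneg hs hDq.le
      exact_mod_cast this
    · have hv : ((vv a1 b1 P : ℤ) : ℚ) = t * ((a2 * b1 - a1 * b2 : ℤ) : ℚ) := by
        simp only [vv]
        push_cast
        linear_combination (b1 : ℚ) * hx - (a1 : ℚ) * hy
      have : (0 : ℚ) ≤ ((vv a1 b1 P : ℤ) : ℚ) := by
        rw [hv]; exact mul_nonneg ht hDq.le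
      exact_mod_cast this
  · rintro ⟨hu, hv⟩
    refine ⟨((uu a2 b2 P : ℤ) : ℚ) / ((a2 * b1 - a1 * b2 : ℤ) : ℚ),
      ((vv a1 b1 P : ℤ) : ℚ) / ((a2 * b1 - a1 * b2 : ℤ) : ℚ),
      div_nonneg (by exact_mod_cast hu) hDq.le,
      div_nonneg (by exact_mod_cast hv) hDq.le, ?_, ?_⟩
    · rw [div_mul_eq_mul_div, div_mul_eq_mul_div, ← add_div, eq_div_iff hDq.ne']
      simp only [uu, vv]
      push_cast
      ring
    · rw [div_mul_eq_mul_div, div_mul_eq_mul_div, ← add_div, eq_div_iff hDq.ne']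
      simp only [uu, vv]
      push_cast
      ring

lemma wt_lt_iff (hD : 0 < a2 * b1 - a1 * b2) (P : ℤ × ℤ) (n : ℤ) :
    wt a1 b1 a2 b2 P < (n : ℚ) ↔
      uu a2 b2 P + vv a1 b1 P < n * (a2 * b1 - a1 * b2) := by
  have hDq : (0 : ℚ) < ((a2 * b1 - a1 * b2 : ℤ) : ℚ) := by exact_mod_cast hD
  rw [wt, div_lt_iff₀ hDq,
    show ((b1 - b2) * P.1 + (a2 - a1) * P.2 : ℤ) = uu a2 b2 P + vv a1 b1 P by
      simp only [uu, vv]; ring]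
  constructor <;> intro h <;> exact_mod_cast h

lemma coe_eq_SS (hD : 0 < a2 * b1 - a1 * b2) (n : ℕ) (T : Finset (ℤ × ℤ))
    (hT : (T : Set (ℤ × ℤ)) = {P ∈ MDelta a1 b1 a2 b2 | wt a1 b1 a2 b2 P < (n : ℚ)}) :
    (T : Set (ℤ × ℤ)) = SS a1 b1 a2 b2 (n : ℤ) := by
  rw [hT]
  ext P
  rw [Set.mem_sep_iff, mem_M_iff a1 b1 a2 b2 hD,
    show ((n : ℕ) : ℚ) = (((n : ℕ) : ℤ) : ℚ) by push_cast; ring,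
    wt_lt_iff a1 b1 a2 b2 hD P (n : ℤ)]
  simp only [SS, Set.mem_setOf_eq]
  tauto

end translate

end S6

/-- For every integer `k ≥ 1`, the number `x_k` of lattice points
of `M(Δ)` of weight strictly less than `k` satisfies
`x_k = k·x_1 + D·k·(k-1)/2`. -/
theorem statement6 (a1 b1 a2 b2 : ℤ)
    (ha1 : 0 ≤ a1) (hb1 : 0 ≤ b1) (ha2 : 0 ≤ a2) (hb2 : 0 ≤ b2)
    (hD : 0 < a2 * b1 - a1 * b2)
    (k : ℕ) (hk : 1 ≤ k)
    (Tk T1 : Finset (ℤ × ℤ))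
    (hTk : (Tk : Set (ℤ × ℤ)) =
      {P ∈ MDelta a1 b1 a2 b2 | wt a1 b1 a2 b2 P < (k : ℚ)})
    (hT1 : (T1 : Set (ℤ × ℤ)) =
      {P ∈ MDelta a1 b1 a2 b2 | wt a1 b1 a2 b2 P < 1}) :
    (Tk.card : ℚ) = (k : ℚ) * T1.card +
      ((a2 * b1 - a1 * b2 : ℤ) : ℚ) * k * ((k : ℚ) - 1) / 2 := by
  have hTk' : (Tk : Set (ℤ × ℤ)) = S6.SS a1 b1 a2 b2 (k : ℤ) :=
    S6.coe_eq_SS a1 b1 a2 b2 hD k Tk hTk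
  have hT1' : (T1 : Set (ℤ × ℤ)) = S6.SS a1 b1 a2 b2 ((1 : ℕ) : ℤ) :=
    S6.coe_eq_SS a1 b1 a2 b2 hD 1 T1 (by rw [hT1]; norm_num)
  have hck : Tk.card = (S6.SS a1 b1 a2 b2 (k : ℤ)).ncard := by
    rw [← Set.ncard_coe_finset, hTk']
  have hc1 : T1.card = (S6.SS a1 b1 a2 b2 1).ncard := by
    rw [← Set.ncard_coe_finset, hT1']
    norm_num
  rw [hck, hc1]
  exact S6.SS_card hD k
end
end

section
/- Let g := gcd(a1−a2, b1−b2) and let p be a prime with p > 2*D/g + 1. Let M' be a finite multiset of points of M(Δ) and let ℓ ≤ #M'. Among all sub-multisets of M' of cardinality ℓ, let S_min be one with minimal total weight Σ_{P∈S} w(P). Then for every sub-multiset S̃ of M' of cardinality ℓ: if Σ_{P∈S̃} w(P) = Σ_{P∈S_min} w(P) then h(S̃) = h(S_min), and if Σ_{P∈S̃} w(P) > Σ_{P∈S_min} w(P) then h(S̃) > h(S_min). In other words, the minimum of h over size-ℓ sub-multisets of M' is attained exactly at those sub-multisets whose total weight is minimal. -/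
open Finset

noncomputable section

def wTau' (p : ℤ) {n : ℕ} (v : Fin n → ℚ) (τ : Equiv.Perm (Fin n)) : ℤ :=
  ∑ i, ⌈(p : ℚ) * v (τ i) - v i⌉

def wMin' (p : ℤ) {n : ℕ} (v : Fin n → ℚ) : ℤ :=
  Finset.univ.inf' (Finset.univ_nonempty_iff.mpr ⟨1⟩) (wTau' p v)

lemma strictMono_fin_le {n m : ℕ} (f : Fin n → Fin m) (hf : StrictMono f) :
    ∀ i : Fin n, (i : ℕ) ≤ (f i : ℕ) := by
  intro i
  induction' hi : (i : ℕ) with j ih generalizing i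
  · exact Nat.zero_le _
  · have hj : j < n := by omega
    have h1 : (⟨j, hj⟩ : Fin n) < i := by simp [Fin.lt_def, hi]
    have h2 : ((f ⟨j, hj⟩ : Fin m) : ℕ) < ((f i : Fin m) : ℕ) := hf h1
    have h3 := ih ⟨j, hj⟩ rfl
    omega

lemma wTau'_comp (p : ℤ) {n m : ℕ} (e : Fin n ≃ Fin m) (v : Fin m → ℚ)
    (τ : Equiv.Perm (Fin m)) :
    wTau' p (v ∘ e) ((e.trans τ).trans e.symm) = wTau' p v τ := by
  unfold wTau'
  rw [← Equiv.sum_comp e (fun j => ⌈(p:ℚ) * v (τ j) - v j⌉)]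
  apply Finset.sum_congr rfl
  intro i _
  simp [Equiv.trans_apply]

lemma wMin'_comp (p : ℤ) {n m : ℕ} (e : Fin n ≃ Fin m) (v : Fin m → ℚ) :
    wMin' p (v ∘ e) = wMin' p v := by
  apply le_antisymm
  · apply Finset.le_inf'
    intro τ _
    calc wMin' p (v ∘ e) ≤ wTau' p (v ∘ e) ((e.trans τ).trans e.symm) :=
          Finset.inf'_le _ (Finset.mem_univ _)
      _ = wTau' p v τ := wTau'_comp p e v τ
  · apply Finset.le_inf'
    intro ρ _
    have h2 : (e.trans ((e.symm.trans ρ).trans e)).trans e.symm = ρ := by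
      ext i; simp
    calc wMin' p v ≤ wTau' p v ((e.symm.trans ρ).trans e) :=
          Finset.inf'_le _ (Finset.mem_univ _)
      _ = wTau' p (v ∘ e) ((e.trans ((e.symm.trans ρ).trans e)).trans e.symm) :=
          (wTau'_comp p e v _).symm
      _ = wTau' p (v ∘ e) ρ := by rw [h2]


lemma ceil_le_den (d : ℤ) (hd : 0 < d) (m : ℤ) :
    (⌈(m : ℚ) / (d : ℚ)⌉ : ℚ) ≤ (m : ℚ) / d + 1 - 1 / d := by
  have hd0 : (0 : ℚ) < (d : ℚ) := by exact_mod_cast hd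
  have h1 : (⌈(m : ℚ) / d⌉ : ℚ) < (m : ℚ) / d + 1 := Int.ceil_lt_add_one _
  have hmd : (d : ℚ) * ((m : ℚ) / d) = (m : ℚ) := by field_simp
  have h2 : (d : ℚ) * (⌈(m : ℚ) / d⌉ : ℚ) < (m : ℚ) + d := by
    have h := mul_lt_mul_of_pos_left h1 hd0
    rw [mul_add, mul_one, hmd] at h
    exact h
  have h3 : d * ⌈(m : ℚ) / (d:ℚ)⌉ < m + d := by exact_mod_cast h2
  have h4 : d * ⌈(m : ℚ) / (d:ℚ)⌉ ≤ m + d - 1 := by omega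
  have h5 : (d : ℚ) * (⌈(m : ℚ) / (d:ℚ)⌉ : ℚ) ≤ (m : ℚ) + d - 1 := by exact_mod_cast h4
  rw [show (m : ℚ) / d + 1 - 1 / d = ((m : ℚ) + d - 1) / d by field_simp]
  rw [le_div_iff₀ hd0]
  linarith

lemma key_step (p d : ℤ) (hd : 0 < d) (hp : 2 * (d : ℚ) + 1 < (p : ℚ)) {n : ℕ}
    (v v' : Fin n → ℚ)
    (hv : ∀ i, ∃ m : ℤ, v i = (m : ℚ) / (d : ℚ))
    (hv' : ∀ i, ∃ m : ℤ, v' i = (m : ℚ) / (d : ℚ))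
    (hle : ∀ i, v i ≤ v' i) (hsum : ∑ i, v i < ∑ i, v' i)
    (τ : Equiv.Perm (Fin n)) :
    wTau' p v τ + 1 ≤ wTau' p v' τ := by
  classical
  have hd0 : (0 : ℚ) < (d : ℚ) := by exact_mod_cast hd
  have hd1 : (1 : ℚ) ≤ (d : ℚ) := by exact_mod_cast hd
  set K : Finset (Fin n) := Finset.univ.filter (fun i => v i ≠ v' i) with hK
  set k : ℕ := K.card with hk
  -- each difference on K is at least 1/d
  have hδ : ∀ i ∈ K, 1 / (d : ℚ) ≤ v' i - v i := by
    intro i hi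
    obtain ⟨a, ha⟩ := hv i
    obtain ⟨b, hb⟩ := hv' i
    have hne : v i ≠ v' i := by simpa [hK] using hi
    have hlt : v i < v' i := lt_of_le_of_ne (hle i) hne
    rw [ha, hb] at hlt ⊢
    have hab : (a : ℚ) < (b : ℚ) := by
      have h0 := (div_lt_div_iff_of_pos_right hd0).mp hlt
      exact h0
    have hba : a + 1 ≤ b := by exact_mod_cast hab
    have h8 : (a : ℚ) + 1 ≤ (b : ℚ) := by exact_mod_cast hba
    rw [div_sub_div_same]
    gcongr
    linarith
  -- K is nonempty
  have hKne : K.Nonempty := by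
    by_contra hKe
    rw [Finset.not_nonempty_iff_eq_empty] at hKe
    have hall : ∀ i, v i = v' i := by
      intro i
      by_contra hne
      have hiK : i ∈ K := by simp [hK, hne]
      rw [hKe] at hiK
      simp at hiK
    have : ∑ i, v i = ∑ i, v' i := Finset.sum_congr rfl (fun i _ => hall i)
    linarith
  have hk1 : 1 ≤ k := Finset.card_pos.mpr hKne
  set A : Finset (Fin n) :=
    Finset.univ.filter (fun i => v i ≠ v' i ∨ v (τ i) ≠ v' (τ i)) with hA
  set K' : Finset (Fin n) := Finset.univ.filter (fun i => v (τ i) ≠ v' (τ i)) with hK'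
  have hK'eq : K' = K.map τ.symm.toEmbedding := by
    ext j
    simp only [hK', hK, Finset.mem_filter, Finset.mem_univ, true_and, Finset.mem_map,
      Equiv.coe_toEmbedding]
    constructor
    · intro h; exact ⟨τ j, h, τ.symm_apply_apply j⟩
    · rintro ⟨a, ha, rfl⟩; simpa using ha
  have hK'card : K'.card = k := by rw [hK'eq, Finset.card_map, hk]
  have hAsub : A ⊆ K ∪ K' := by
    intro i hi
    simp only [hA, Finset.mem_filter, Finset.mem_univ, true_and] at hi
    simp only [Finset.mem_union, hK, hK', Finset.mem_filter, Finset.mem_univ, true_and]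
    tauto
  have hAcard : A.card ≤ 2 * k := by
    calc A.card ≤ (K ∪ K').card := Finset.card_le_card hAsub
      _ ≤ K.card + K'.card := Finset.card_union_le _ _
      _ = 2 * k := by rw [hK'card, ← hk]; ring
  -- sum of the differences is at least k/d
  have hs : (k : ℚ) * (1 / d) ≤ ∑ i, (v' i - v i) := by
    have h1 : ∑ i, (v' i - v i) = ∑ i ∈ K, (v' i - v i) := by
      rw [eq_comm]
      apply Finset.sum_subset (Finset.subset_univ K)
      intro i _ hiK
      have : v i = v' i := by
        by_contra hne
        exact hiK (by simp [hK, hne])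
      linarith
    rw [h1]
    calc (k : ℚ) * (1 / d) = ∑ _i ∈ K, (1 / (d : ℚ)) := by
          rw [Finset.sum_const, ← hk, nsmul_eq_mul]
      _ ≤ ∑ i ∈ K, (v' i - v i) := Finset.sum_le_sum hδ
  -- ceiling bounds
  have hceil_lb : ∀ i, ((p : ℚ) * v' (τ i) - v' i) ≤ (⌈((p : ℚ) * v' (τ i) - v' i)⌉ : ℚ) := fun i => Int.le_ceil _
  have hceil_ub : ∀ i, (⌈((p : ℚ) * v (τ i) - v i)⌉ : ℚ) ≤ ((p : ℚ) * v (τ i) - v i) + 1 - 1 / d := by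
    intro i
    obtain ⟨a, ha⟩ := hv (τ i)
    obtain ⟨b, hb⟩ := hv i
    have hXi : (p : ℚ) * v (τ i) - v i = ((p * a - b : ℤ) : ℚ) / d := by
      rw [ha, hb]
      push_cast
      field_simp
    rw [hXi]
    exact ceil_le_den d hd _
  have houtside : ∀ i ∉ A, (⌈((p : ℚ) * v' (τ i) - v' i)⌉ : ℚ) - (⌈((p : ℚ) * v (τ i) - v i)⌉ : ℚ) = 0 := by
    intro i hi
    simp only [hA, Finset.mem_filter, Finset.mem_univ, true_and, not_or, not_not] at hi
    rw [hi.1, hi.2]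
    ring
  have hXout : ∀ i ∉ A, ((p : ℚ) * v' (τ i) - v' i) - ((p : ℚ) * v (τ i) - v i) = 0 := by
    intro i hi
    simp only [hA, Finset.mem_filter, Finset.mem_univ, true_and, not_or, not_not] at hi
    rw [hi.1, hi.2]
    ring
  have hsumX : ∑ i, (((p : ℚ) * v' (τ i) - v' i) - ((p : ℚ) * v (τ i) - v i)) = ((p : ℚ) - 1) * (∑ i, v' i - ∑ i, v i) := by
    have h1 : ∑ i, v' (τ i) = ∑ i, v' i := Equiv.sum_comp τ v'
    have h2 : ∑ i, v (τ i) = ∑ i, v i := Equiv.sum_comp τ v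
    simp only [Finset.sum_sub_distrib, ← Finset.mul_sum, h1, h2]
    ring
  have hcast : (wTau' p v' τ : ℚ) - (wTau' p v τ : ℚ) = ∑ i, ((⌈((p : ℚ) * v' (τ i) - v' i)⌉ : ℚ) - (⌈((p : ℚ) * v (τ i) - v i)⌉ : ℚ)) := by
    unfold wTau'
    push_cast
    rw [← Finset.sum_sub_distrib]
  have hsplit : ∑ i, ((⌈((p : ℚ) * v' (τ i) - v' i)⌉ : ℚ) - (⌈((p : ℚ) * v (τ i) - v i)⌉ : ℚ)) = ∑ i ∈ A, ((⌈((p : ℚ) * v' (τ i) - v' i)⌉ : ℚ) - (⌈((p : ℚ) * v (τ i) - v i)⌉ : ℚ)) := by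
    rw [eq_comm]
    exact Finset.sum_subset (Finset.subset_univ A) (fun i _ hi => houtside i hi)
  have hsplit2 : ∑ i, (((p : ℚ) * v' (τ i) - v' i) - ((p : ℚ) * v (τ i) - v i)) = ∑ i ∈ A, (((p : ℚ) * v' (τ i) - v' i) - ((p : ℚ) * v (τ i) - v i)) := by
    rw [eq_comm]
    exact Finset.sum_subset (Finset.subset_univ A) (fun i _ hi => hXout i hi)
  have hAbound : ∑ i ∈ A, (((p : ℚ) * v' (τ i) - v' i) - ((p : ℚ) * v (τ i) - v i) - (1 - 1 / d)) ≤ ∑ i ∈ A, ((⌈((p : ℚ) * v' (τ i) - v' i)⌉ : ℚ) - (⌈((p : ℚ) * v (τ i) - v i)⌉ : ℚ)) := by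
    apply Finset.sum_le_sum
    intro i _
    have h1 := hceil_lb i
    have h2 := hceil_ub i
    linarith
  have hconst : ∑ i ∈ A, (((p : ℚ) * v' (τ i) - v' i) - ((p : ℚ) * v (τ i) - v i) - (1 - 1 / d))
      = ∑ i ∈ A, (((p : ℚ) * v' (τ i) - v' i) - ((p : ℚ) * v (τ i) - v i)) - A.card * (1 - 1 / d) := by
    rw [Finset.sum_sub_distrib, Finset.sum_const, nsmul_eq_mul]
  have hAq : (A.card : ℚ) ≤ 2 * k := by exact_mod_cast hAcard
  have hkq : (1 : ℚ) ≤ (k : ℚ) := by exact_mod_cast hk1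
  have hssum : ∑ i, (v' i - v i) = ∑ i, v' i - ∑ i, v i := Finset.sum_sub_distrib _ _
  have hfinal : 0 < (wTau' p v' τ : ℚ) - (wTau' p v τ : ℚ) := by
    rw [hcast, hsplit]
    have e1 : ∑ i ∈ A, (((p : ℚ) * v' (τ i) - v' i) - ((p : ℚ) * v (τ i) - v i)) = ((p : ℚ) - 1) * (∑ i, v' i - ∑ i, v i) := by
      rw [← hsplit2, hsumX]
    have hs1 : (k : ℚ) * (1 / d) ≤ ∑ i, v' i - ∑ i, v i := by rw [← hssum]; exact hs
    have hp1 : (0 : ℚ) ≤ (p : ℚ) - 1 := by linarith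
    have c1 : ((p : ℚ) - 1) * ((k : ℚ) * (1 / d)) ≤ ((p : ℚ) - 1) * (∑ i, v' i - ∑ i, v i) :=
      mul_le_mul_of_nonneg_left hs1 hp1
    have hkd_pos : (0 : ℚ) < (k : ℚ) * (1 / d) := by positivity
    have c2 : 2 * (d : ℚ) * ((k : ℚ) * (1 / d)) < ((p : ℚ) - 1) * ((k : ℚ) * (1 / d)) := by
      apply mul_lt_mul_of_pos_right _ hkd_pos
      linarith
    have c3 : 2 * (d : ℚ) * ((k : ℚ) * (1 / d)) = 2 * k := by
      field_simp
    have hd_inv : 1 / (d : ℚ) ≤ 1 := by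
      rw [div_le_one hd0]
      exact hd1
    have c4 : (A.card : ℚ) * (1 - 1 / d) ≤ 2 * (k : ℚ) * (1 - 1 / d) := by
      apply mul_le_mul_of_nonneg_right hAq
      linarith
    have c5 : 2 * (k : ℚ) * (1 - 1 / d) < 2 * k := by
      have h6 : 0 < 2 * (k : ℚ) * (1 / d) := by positivity
      nlinarith
    linarith [hAbound, hconst, e1, c1, c2, c3, c4, c5]
  have hlt : wTau' p v τ < wTau' p v' τ := by
    have := sub_pos.mp hfinal
    exact_mod_cast this
  omega

lemma key (p d : ℤ) (hd : 0 < d) (hp : 2 * (d : ℚ) + 1 < (p : ℚ)) {n : ℕ}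
    (v v' : Fin n → ℚ)
    (hv : ∀ i, ∃ m : ℤ, v i = (m : ℚ) / (d : ℚ))
    (hv' : ∀ i, ∃ m : ℤ, v' i = (m : ℚ) / (d : ℚ))
    (hle : ∀ i, v i ≤ v' i) (hsum : ∑ i, v i < ∑ i, v' i) :
    wMin' p v + 1 ≤ wMin' p v' := by
  obtain ⟨τ, _, hτ⟩ := Finset.exists_mem_eq_inf'
    (Finset.univ_nonempty_iff.mpr ⟨1⟩) (wTau' p v')
  have h1 : wMin' p v ≤ wTau' p v τ := Finset.inf'_le _ (Finset.mem_univ _)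
  have h2 := key_step p d hd hp v v' hv hv' hle hsum τ
  have h3 : wMin' p v' = wTau' p v' τ := hτ
  omega

lemma ofFn_comp_coe {α : Type*} {n m : ℕ} (e : Fin n ≃ Fin m) (g : Fin m → α) :
    (↑(List.ofFn (g ∘ e)) : Multiset α) = ↑(List.ofFn g) := by
  rw [← Fin.univ_val_map, ← Fin.univ_val_map, ← Multiset.map_map]
  congr 1
  have h : Finset.univ.val.map ⇑e = (Finset.univ.map e.toEmbedding).val := by
    rw [Finset.map_val]
    rfl
  rw [h, Finset.map_univ_equiv]

lemma wt_smul_sub (p a1 b1 a2 b2 : ℤ) (hD : ((a2 * b1 - a1 * b2 : ℤ) : ℚ) ≠ 0)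
    (P Q : ℤ × ℤ) :
    wt a1 b1 a2 b2 (p • Q - P) = (p : ℚ) * wt a1 b1 a2 b2 Q - wt a1 b1 a2 b2 P := by
  obtain ⟨x, y⟩ := P
  obtain ⟨z, w⟩ := Q
  unfold wt
  simp only [Prod.smul_mk, Prod.mk_sub_mk, smul_eq_mul]
  push_cast
  field_simp
  ring

lemma hMin_eq_wMin' (p a1 b1 a2 b2 : ℤ) (hD : ((a2 * b1 - a1 * b2 : ℤ) : ℚ) ≠ 0)
    (S : Multiset (ℤ × ℤ)) :
    hMin p a1 b1 a2 b2 S = wMin' p (wt a1 b1 a2 b2 ∘ listFn S) := by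
  unfold hMin wMin'
  congr 1
  funext τ
  unfold hTau wTau'
  apply Finset.sum_congr rfl
  intro i _
  rw [wt_smul_sub p a1 b1 a2 b2 hD]
  rfl

lemma tuple_of_multiset (p a1 b1 a2 b2 : ℤ) (hD : ((a2 * b1 - a1 * b2 : ℤ) : ℚ) ≠ 0)
    (S : Multiset (ℤ × ℤ)) (l : ℕ) (hc : Multiset.card S = l) :
    ∃ (q : Fin l → ℤ × ℤ) (v : Fin l → ℚ),
      v = wt a1 b1 a2 b2 ∘ q ∧ Monotone v ∧
      hMin p a1 b1 a2 b2 S = wMin' p v ∧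
      (↑(List.ofFn q) : Multiset (ℤ × ℤ)) = S ∧
      (↑(List.ofFn v) : Multiset ℚ) = S.map (wt a1 b1 a2 b2) ∧
      (S.map (wt a1 b1 a2 b2)).sum = ∑ i, v i := by
  have hn : l = S.toList.length := by rw [Multiset.length_toList, hc]
  set f : Fin S.toList.length → ℚ := wt a1 b1 a2 b2 ∘ listFn S with hf
  set e : Fin l ≃ Fin S.toList.length := (finCongr hn).trans (Tuple.sort f) with he
  have hofq : (↑(List.ofFn (listFn S ∘ e)) : Multiset (ℤ × ℤ)) = S := by
    rw [ofFn_comp_coe e (listFn S)]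
    unfold listFn
    rw [List.ofFn_get, Multiset.coe_toList]
  have hofv : (↑(List.ofFn (f ∘ e)) : Multiset ℚ) = S.map (wt a1 b1 a2 b2) := by
    rw [ofFn_comp_coe e f, hf, ← List.map_ofFn]
    unfold listFn
    rw [List.ofFn_get]
    rw [← Multiset.map_coe, Multiset.coe_toList]
  refine ⟨listFn S ∘ e, f ∘ e, rfl, ?_, ?_, hofq, hofv, ?_⟩
  · intro i j hij
    have hij' : (finCongr hn) i ≤ (finCongr hn) j := by
      simp only [Fin.le_def, finCongr_apply, Fin.coe_cast]
      exact Fin.le_def.mp hij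
    exact Tuple.monotone_sort f hij'
  · rw [hMin_eq_wMin' p a1 b1 a2 b2 hD S, ← hf]
    exact (wMin'_comp p e f).symm
  · rw [← hofv, Multiset.sum_coe, List.sum_ofFn]

lemma dom_tuple {n m : ℕ} (h : n ≤ m) (v : Fin n → ℚ) (u : Fin m → ℚ)
    (hv : Monotone v) (hu : Monotone u)
    (hsub : (↑(List.ofFn v) : Multiset ℚ) ≤ ↑(List.ofFn u)) :
    ∀ i : Fin n, u (Fin.castLE h i) ≤ v i := by
  have hsp : List.Subperm (List.ofFn v) (List.ofFn u) := Multiset.coe_le.mp hsub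
  have hsl : List.Sublist (List.ofFn v) (List.ofFn u) :=
    List.sublist_of_subperm_of_sortedLE hsp
      (List.sortedLE_ofFn_iff.mpr hv) (List.sortedLE_ofFn_iff.mpr hu)
  obtain ⟨f, hfg⟩ := List.sublist_iff_exists_fin_orderEmbedding_get_eq.mp hsl
  intro i
  have hiv : i.val < (List.ofFn v).length := by simpa using i.isLt
  set i' : Fin (List.ofFn v).length := Fin.cast (by simp) i with hi'
  have h1 : v i = (List.ofFn u).get (f i') := by
    rw [← hfg i', List.get_ofFn]
    congr 1
  have h2 : (List.ofFn u).get (f i') = u (Fin.cast (by simp) (f i')) := List.get_ofFn u _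
  have h3 : (i : ℕ) ≤ ((f i') : ℕ) := by
    have := strictMono_fin_le f f.strictMono i'
    simpa [hi'] using this
  have h4 : Fin.castLE h i ≤ Fin.cast (by simp) (f i') := by
    simp only [Fin.le_def, Fin.coe_castLE, Fin.coe_cast]
    exact h3
  rw [h1, h2]
  exact hu h4

/-- Let `g = gcd(a1-a2, b1-b2)` and let `p` be a prime with
`p > 2·D/g + 1`.  Among the sub-multisets of `M'` of cardinality `ℓ`, the
minimum of `h` is attained exactly at those of minimal total weight. -/
theorem statement9 (p a1 b1 a2 b2 : ℤ)
    (ha1 : 0 ≤ a1) (hb1 : 0 ≤ b1) (ha2 : 0 ≤ a2) (hb2 : 0 ≤ b2)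
    (hD : 0 < a2 * b1 - a1 * b2)
    (hp : Prime p)
    (hpg : 2 * ((a2 * b1 - a1 * b2 : ℤ) : ℚ) /
      (Int.gcd (a1 - a2) (b1 - b2) : ℚ) + 1 < (p : ℚ))
    (M' : Multiset (ℤ × ℤ)) (hM' : ∀ P ∈ M', P ∈ MDelta a1 b1 a2 b2)
    (l : ℕ) (hl : l ≤ Multiset.card M')
    (Smin : Multiset (ℤ × ℤ)) (hsub : Smin ≤ M')
    (hcard : Multiset.card Smin = l)
    (hmin : ∀ S ≤ M', Multiset.card S = l →
      (Smin.map (wt a1 b1 a2 b2)).sum ≤ (S.map (wt a1 b1 a2 b2)).sum)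
    (St : Multiset (ℤ × ℤ)) (hsubt : St ≤ M') (hcardt : Multiset.card St = l) :
    ((St.map (wt a1 b1 a2 b2)).sum = (Smin.map (wt a1 b1 a2 b2)).sum →
      hMin p a1 b1 a2 b2 St = hMin p a1 b1 a2 b2 Smin) ∧
    ((Smin.map (wt a1 b1 a2 b2)).sum < (St.map (wt a1 b1 a2 b2)).sum →
      hMin p a1 b1 a2 b2 Smin < hMin p a1 b1 a2 b2 St) := by
  classical
  have hD0 : ((a2 * b1 - a1 * b2 : ℤ) : ℚ) ≠ 0 := by
    have h := hD.ne'
    exact_mod_cast h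
  set g : ℕ := Int.gcd (a1 - a2) (b1 - b2) with hg
  have hgdvd1 : (g : ℤ) ∣ (a1 - a2) := Int.gcd_dvd_left _ _
  have hgdvd2 : (g : ℤ) ∣ (b1 - b2) := Int.gcd_dvd_right _ _
  have hgD : (g : ℤ) ∣ (a2 * b1 - a1 * b2) := by
    have h1 : a2 * b1 - a1 * b2 = a2 * (b1 - b2) - (a1 - a2) * b2 := by ring
    rw [h1]
    exact dvd_sub (hgdvd2.mul_left a2) (hgdvd1.mul_right b2)
  have hg0 : (g : ℤ) ≠ 0 := by
    intro h0
    have h0' : g = 0 := by exact_mod_cast h0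
    rw [hg] at h0'
    obtain ⟨e1, e2⟩ := Int.gcd_eq_zero_iff.mp h0'
    have e1' : a1 = a2 := by omega
    have e2' : b1 = b2 := by omega
    rw [e1', e2'] at hD
    simp at hD
  set d : ℤ := (a2 * b1 - a1 * b2) / (g : ℤ) with hd
  have hdg : (g : ℤ) * d = a2 * b1 - a1 * b2 := Int.mul_ediv_cancel' hgD
  have hgpos : (0 : ℤ) < (g : ℤ) := lt_of_le_of_ne (Int.natCast_nonneg g) (Ne.symm hg0)
  have hdpos : 0 < d := by nlinarith [hD, hdg, hgpos]
  have hgQ : ((g : ℕ) : ℚ) ≠ 0 := by exact_mod_cast hg0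
  have hp2 : 2 * (d : ℚ) + 1 < (p : ℚ) := by
    have hDd : ((a2 * b1 - a1 * b2 : ℤ) : ℚ) = (g : ℚ) * (d : ℚ) := by exact_mod_cast hdg.symm
    rw [hDd] at hpg
    have he : 2 * ((g : ℚ) * (d : ℚ)) / (g : ℚ) = 2 * (d : ℚ) := by
      field_simp
    rw [he] at hpg
    exact hpg
  have hval : ∀ P : ℤ × ℤ, ∃ m : ℤ, wt a1 b1 a2 b2 P = (m : ℚ) / (d : ℚ) := by
    intro P
    obtain ⟨u1, hu1⟩ := hgdvd2
    obtain ⟨u2, hu2⟩ := hgdvd1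
    refine ⟨u1 * P.1 - u2 * P.2, ?_⟩
    have hnum : (b1 - b2) * P.1 + (a2 - a1) * P.2 = (g : ℤ) * (u1 * P.1 - u2 * P.2) := by
      linear_combination P.1 * hu1 - P.2 * hu2
    unfold wt
    rw [hnum, ← hdg]
    push_cast
    rw [mul_div_mul_left _ _ hgQ]
  -- tuples for M', Smin, St
  obtain ⟨qM, u, hqu, humono, _h1, hqM, hofu, hsumM⟩ :=
    tuple_of_multiset p a1 b1 a2 b2 hD0 M' (Multiset.card M') rfl
  obtain ⟨qm, vm, hvmW, hvmmono, hminSmin, hqSmin, hofvm, hsummin⟩ :=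
    tuple_of_multiset p a1 b1 a2 b2 hD0 Smin l hcard
  obtain ⟨qt, vt, hvtW, hvtmono, hminSt, hqSt, hofvt, hsumt⟩ :=
    tuple_of_multiset p a1 b1 a2 b2 hD0 St l hcardt
  have hlm : l ≤ Multiset.card M' := hl
  -- the realizing submultiset T0 of the l smallest weights
  have hT0le : (↑((List.ofFn qM).take l) : Multiset (ℤ × ℤ)) ≤ M' := by
    have h := Multiset.coe_le.mpr (List.take_sublist l (List.ofFn qM)).subperm
    rwa [hqM] at h
  have hT0card : Multiset.card (↑((List.ofFn qM).take l) : Multiset (ℤ × ℤ)) = l := by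
    rw [Multiset.coe_card, List.length_take, List.length_ofFn]
    exact min_eq_left hlm
  have hT0map : Multiset.map (wt a1 b1 a2 b2) (↑((List.ofFn qM).take l) : Multiset (ℤ × ℤ))
      = (((List.ofFn u).take l : List ℚ) : Multiset ℚ) := by
    rw [Multiset.map_coe, List.map_take, List.map_ofFn, ← hqu]
  have htake : (List.ofFn u).take l = List.ofFn (Fin.take l hlm u) :=
    (Fin.ofFn_take_eq_take_ofFn hlm u).symm
  have hT0sum : (Multiset.map (wt a1 b1 a2 b2) (↑((List.ofFn qM).take l) : Multiset (ℤ × ℤ))).sum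
      = ∑ i : Fin l, u (Fin.castLE hlm i) := by
    rw [hT0map, htake, Multiset.sum_coe, List.sum_ofFn]
    rfl
  have hkey1 : ∑ i, vm i ≤ ∑ i : Fin l, u (Fin.castLE hlm i) := by
    rw [← hsummin, ← hT0sum]
    exact hmin _ hT0le hT0card
  have hdomm : ∀ i : Fin l, u (Fin.castLE hlm i) ≤ vm i := by
    apply dom_tuple hlm vm u hvmmono humono
    rw [hofvm, hofu]
    exact Multiset.map_le_map hsub
  have hvm_eq : ∀ i : Fin l, vm i = u (Fin.castLE hlm i) := by
    have hsum_eq : ∑ i : Fin l, u (Fin.castLE hlm i) = ∑ i, vm i :=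
      le_antisymm (Finset.sum_le_sum (fun i _ => hdomm i)) hkey1
    intro i
    have h := (Finset.sum_eq_sum_iff_of_le (fun i (_ : i ∈ Finset.univ) => hdomm i)).mp hsum_eq
    exact (h i (Finset.mem_univ i)).symm
  have hdomt : ∀ i : Fin l, u (Fin.castLE hlm i) ≤ vt i := by
    apply dom_tuple hlm vt u hvtmono humono
    rw [hofvt, hofu]
    exact Multiset.map_le_map hsubt
  have hptw : ∀ i, vm i ≤ vt i := by
    intro i
    rw [hvm_eq i]
    exact hdomt i
  constructor
  · intro hsumeq
    have hsum' : ∑ i, vm i = ∑ i, vt i := by rw [← hsumt, ← hsummin, hsumeq]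
    have h := (Finset.sum_eq_sum_iff_of_le (fun i (_ : i ∈ Finset.univ) => hptw i)).mp hsum'
    have hvv : vt = vm := funext fun i => (h i (Finset.mem_univ i)).symm
    rw [hminSt, hminSmin, hvv]
  · intro hlt
    have hsum' : ∑ i, vm i < ∑ i, vt i := by
      rw [← hsumt, ← hsummin]
      exact hlt
    have hvals_m : ∀ i, ∃ mm : ℤ, vm i = (mm : ℚ) / (d : ℚ) := by
      intro i
      rw [hvmW]
      exact hval (qm i)
    have hvals_t : ∀ i, ∃ mm : ℤ, vt i = (mm : ℚ) / (d : ℚ) := by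
      intro i
      rw [hvtW]
      exact hval (qt i)
    have hk := key p d hdpos hp2 vm vt hvals_m hvals_t hptw hsum'
    rw [hminSmin, hminSt]
    omega
end
end

section
/- Let g := gcd(a1−a2, b1−b2) and let p be a prime with p ∤ D and p > 2*D/g + 1. For all positive integers n and ℓ, the minimum of h(S) over all finite multisets S of points of M(Δ) of cardinality n*ℓ in which every point occurs with multiplicity at most n, equals n times the minimum of h(S) over all subsets S ⊆ M(Δ) of cardinality ℓ. -/
open Finset

noncomputable section

variable (C : ℤ → ℤ → ℤ)

/-- minimum of assignment cost over permutations -/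
def rmin {L : ℕ} (x : Fin L → ℤ) : ℤ :=
  Finset.univ.inf' (Finset.univ_nonempty_iff.mpr ⟨1⟩)
    fun σ : Equiv.Perm (Fin L) => ∑ i, C (x i) (x (σ i))

lemma rmin_le {L : ℕ} (x : Fin L → ℤ) (σ : Equiv.Perm (Fin L)) :
    rmin C x ≤ ∑ i, C (x i) (x (σ i)) :=
  Finset.inf'_le _ (Finset.mem_univ σ)

lemma le_rmin {L : ℕ} (x : Fin L → ℤ) (m : ℤ)
    (h : ∀ σ : Equiv.Perm (Fin L), m ≤ ∑ i, C (x i) (x (σ i))) :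
    m ≤ rmin C x :=
  Finset.le_inf' _ _ fun σ _ => h σ

lemma exists_rmin {L : ℕ} (x : Fin L → ℤ) :
    ∃ σ : Equiv.Perm (Fin L), rmin C x = ∑ i, C (x i) (x (σ i)) := by
  obtain ⟨σ, -, h⟩ := Finset.exists_mem_eq_inf' (α := ℤ)
    (Finset.univ_nonempty_iff.mpr ⟨(1 : Equiv.Perm (Fin L))⟩)
    (fun σ : Equiv.Perm (Fin L) => ∑ i, C (x i) (x (σ i)))
  exact ⟨σ, h⟩

lemma sum_comp_perm {L : ℕ} (x : Fin L → ℤ) (e σ : Equiv.Perm (Fin L)) :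
    ∑ i, C (x (e i)) (x (e (σ i))) = ∑ j, C (x j) (x ((e * σ * e⁻¹) j)) := by
  rw [← Equiv.sum_comp e (fun j => C (x j) (x ((e * σ * e⁻¹) j)))]
  refine Finset.sum_congr rfl fun i _ => ?_
  simp [Equiv.Perm.mul_apply]

lemma rmin_le_comp_perm {L : ℕ} (x : Fin L → ℤ) (e : Equiv.Perm (Fin L)) :
    rmin C x ≤ rmin C (x ∘ e) := by
  apply le_rmin
  intro σ
  have h := (sum_comp_perm C x e σ).symm
  calc rmin C x ≤ ∑ j, C (x j) (x ((e * σ * e⁻¹) j)) := rmin_le _ _ _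
    _ = ∑ i, C ((x ∘ e) i) ((x ∘ e) (σ i)) := by
        rw [h]; rfl

lemma rmin_comp_perm {L : ℕ} (x : Fin L → ℤ) (e : Equiv.Perm (Fin L)) :
    rmin C (x ∘ e) = rmin C x := by
  refine le_antisymm ?_ (rmin_le_comp_perm C x e)
  have h := rmin_le_comp_perm C (x ∘ e) e⁻¹
  have : (x ∘ e) ∘ (e⁻¹ : Equiv.Perm (Fin L)) = x := by
    funext i; simp
  rwa [this] at h


/-- multiset of values of a tuple -/
def msOf {α : Type*} {L : ℕ} (x : Fin L → α) : Multiset α := Multiset.map x Finset.univ.val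

lemma msOf_eq_coe {α : Type*} {L : ℕ} (x : Fin L → α) : msOf x = ↑(List.ofFn x) := by
  classical
  rw [List.ofFn_eq_map]
  rfl

lemma msOf_card {α : Type*} {L : ℕ} (x : Fin L → α) : Multiset.card (msOf x) = L := by
  simp [msOf]

lemma msOf_comp_perm {α : Type*} {L : ℕ} (x : Fin L → α) (e : Equiv.Perm (Fin L)) :
    msOf (x ∘ e) = msOf x := by
  classical
  have h : (Finset.univ.val.map (e : Fin L → Fin L)) = Finset.univ.val := by
    have h2 := Finset.map_univ_equiv e
    calc Finset.univ.val.map (e : Fin L → Fin L)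
        = (Finset.univ.map e.toEmbedding).val := by rw [Finset.map_val]; rfl
      _ = Finset.univ.val := by rw [h2]
  calc msOf (x ∘ e) = (Finset.univ.val.map (e : Fin L → Fin L)).map x := by
        rw [Multiset.map_map]; rfl
    _ = Finset.univ.val.map x := by rw [h]

lemma rmin_congr {L L' : ℕ} (x : Fin L → ℤ) (y : Fin L' → ℤ)
    (h : msOf x = msOf y) : rmin C x = rmin C y := by
  have hL : L = L' := by
    have := congrArg Multiset.card h
    rwa [msOf_card, msOf_card] at this
  subst hL
  set sx := Tuple.sort x with hsx
  set sy := Tuple.sort y with hsy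
  have hmx : Monotone (x ∘ sx) := Tuple.monotone_sort x
  have hmy : Monotone (y ∘ sy) := Tuple.monotone_sort y
  have hms : msOf (x ∘ sx) = msOf (y ∘ sy) := by
    rw [msOf_comp_perm, msOf_comp_perm, h]
  have hperm : (List.ofFn (x ∘ sx)).Perm (List.ofFn (y ∘ sy)) := by
    rw [← Multiset.coe_eq_coe, ← msOf_eq_coe, ← msOf_eq_coe]
    exact hms
  have hlists : List.ofFn (x ∘ sx) = List.ofFn (y ∘ sy) :=
    List.Perm.eq_of_sortedLE
      (List.sortedLE_ofFn_iff.mpr hmx) (List.sortedLE_ofFn_iff.mpr hmy) hperm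
  have hfun : x ∘ sx = y ∘ sy := List.ofFn_injective hlists
  have : y = x ∘ (sx * sy⁻¹ : Equiv.Perm (Fin L)) := by
    funext i
    have := congrFun hfun (sy⁻¹ i)
    simpa using this.symm
  rw [this, rmin_comp_perm]

lemma exists_perm_pos {l : ℕ} (s : ℕ) (hs : 0 < s) (M : Fin l → Fin l → ℤ)
    (hM : ∀ a b, 0 ≤ M a b)
    (hrow : ∀ a, ∑ b, M a b = (s : ℤ)) (hcol : ∀ b, ∑ a, M a b = (s : ℤ)) :
    ∃ σ : Equiv.Perm (Fin l), ∀ a, 0 < M a (σ a) := by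
  classical
  set t : Fin l → Finset (Fin l) := fun a => Finset.univ.filter (fun b => 0 < M a b) with ht
  have hall : ∀ A : Finset (Fin l), A.card ≤ (A.biUnion t).card := by
    intro A
    set B := A.biUnion t with hB
    have key : (s : ℤ) * A.card ≤ (s : ℤ) * B.card := by
      have h1 : ∀ a ∈ A, ∑ b ∈ B, M a b = (s : ℤ) := by
        intro a ha
        rw [← hrow a]
        apply Finset.sum_subset (Finset.subset_univ B)
        intro b _ hb
        by_contra hne
        have : b ∈ t a := by
          rw [ht]
          simp only [Finset.mem_filter, Finset.mem_univ, true_and]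
          rcases lt_or_eq_of_le (hM a b) with h' | h'
          · exact h'
          · exact absurd h'.symm hne
        exact hb (Finset.mem_biUnion.mpr ⟨a, ha, this⟩)
      calc (s : ℤ) * A.card = ∑ a ∈ A, (s : ℤ) := by
            rw [Finset.sum_const, nsmul_eq_mul, mul_comm]
        _ = ∑ a ∈ A, ∑ b ∈ B, M a b := by
            exact (Finset.sum_congr rfl h1).symm
        _ = ∑ b ∈ B, ∑ a ∈ A, M a b := Finset.sum_comm
        _ ≤ ∑ b ∈ B, ∑ a, M a b := by
            apply Finset.sum_le_sum
            intro b _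
            exact Finset.sum_le_sum_of_subset_of_nonneg (Finset.subset_univ A)
              (fun a _ _ => hM a b)
        _ = ∑ b ∈ B, (s : ℤ) := Finset.sum_congr rfl (fun b _ => hcol b)
        _ = (s : ℤ) * B.card := by rw [Finset.sum_const, nsmul_eq_mul, mul_comm]
    have hsle : (A.card : ℤ) ≤ (B.card : ℤ) :=
      le_of_mul_le_mul_left key (by exact_mod_cast hs)
    exact_mod_cast hsle
  obtain ⟨f, hfinj, hft⟩ := (Finset.all_card_le_biUnion_card_iff_exists_injective t).mp hall
  have hbij : Function.Bijective f := Finite.injective_iff_bijective.mp hfinj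
  refine ⟨Equiv.ofBijective f hbij, fun a => ?_⟩
  have := hft a
  rw [ht] at this
  simp only [Finset.mem_filter] at this
  exact this.2

lemma hall_scale {l : ℕ} (s : ℕ) (M : Fin l → Fin l → ℤ)
    (hM : ∀ a b, 0 ≤ M a b)
    (hrow : ∀ a, ∑ b, M a b = (s : ℤ)) (hcol : ∀ b, ∑ a, M a b = (s : ℤ))
    (Cl : Fin l → Fin l → ℤ) (mv : ℤ)
    (hmv : ∀ σ : Equiv.Perm (Fin l), mv ≤ ∑ a, Cl a (σ a)) :
    (s : ℤ) * mv ≤ ∑ a, ∑ b, M a b * Cl a b := by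
  classical
  induction s generalizing M with
  | zero =>
      have hz : ∀ a b, M a b = 0 := by
        intro a b
        have h1 : ∑ b, M a b = 0 := by rw [hrow a]; norm_num
        have := (Finset.sum_eq_zero_iff_of_nonneg (fun b _ => hM a b)).mp h1
        exact this b (Finset.mem_univ b)
      simp [hz]
  | succ s ih =>
      obtain ⟨σ, hσ⟩ := exists_perm_pos (s + 1) (Nat.succ_pos s) M hM hrow hcol
      set P : Fin l → Fin l → ℤ := fun a b => if b = σ a then 1 else 0 with hP
      set M' : Fin l → Fin l → ℤ := fun a b => M a b - P a b with hM'
      have hM'nonneg : ∀ a b, 0 ≤ M' a b := by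
        intro a b
        rw [hM', hP]
        by_cases hc : b = σ a
        · simp only [hc, if_pos rfl]
          have := hσ a
          omega
        · simp only [if_neg hc]
          have := hM a b
          omega
      have hProw : ∀ a, ∑ b, P a b = 1 := by
        intro a
        rw [hP]
        simp
      have hPcol : ∀ b, ∑ a, P a b = 1 := by
        intro b
        rw [hP]
        have h1 : ∀ a : Fin l, (if b = σ a then (1:ℤ) else 0) = (if a = σ⁻¹ b then 1 else 0) := by
          intro a
          refine if_congr ?_ rfl rfl
          constructor
          · intro h; simp [h]
          · intro h; simp [h]
        simp only [h1]
        simp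
      have hrow' : ∀ a, ∑ b, M' a b = (s : ℤ) := by
        intro a
        rw [hM']
        push_cast
        rw [Finset.sum_sub_distrib, hrow a, hProw a]
        push_cast
        ring
      have hcol' : ∀ b, ∑ a, M' a b = (s : ℤ) := by
        intro b
        rw [hM']
        rw [Finset.sum_sub_distrib, hcol b, hPcol b]
        push_cast
        ring
      have hPC : ∑ a, ∑ b, P a b * Cl a b = ∑ a, Cl a (σ a) := by
        apply Finset.sum_congr rfl
        intro a _
        rw [hP]
        simp
      have hsplit : ∑ a, ∑ b, M a b * Cl a b
          = (∑ a, ∑ b, M' a b * Cl a b) + ∑ a, ∑ b, P a b * Cl a b := by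
        rw [← Finset.sum_add_distrib]
        apply Finset.sum_congr rfl
        intro a _
        rw [← Finset.sum_add_distrib]
        apply Finset.sum_congr rfl
        intro b _
        rw [hM']
        ring
      have := ih M' hM'nonneg hrow' hcol'
      rw [hsplit, hPC]
      push_cast
      have h2 := hmv σ
      nlinarith [this, h2]

section Scale

variable {l n : ℕ}

lemma divNat_finProdFinEquiv (a : Fin l) (j : Fin n) :
    (finProdFinEquiv (a, j) : Fin (l * n)).divNat = a := by
  have h := finProdFinEquiv.symm_apply_apply (a, j)
  have h2 : finProdFinEquiv.symm (finProdFinEquiv (a, j))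
      = ((finProdFinEquiv (a, j) : Fin (l * n)).divNat,
         (finProdFinEquiv (a, j) : Fin (l * n)).modNat) := rfl
  rw [h2] at h
  exact congrArg Prod.fst h

lemma eq_finProdFinEquiv (k : Fin (l * n)) :
    k = finProdFinEquiv (k.divNat, k.modNat) :=
  (finProdFinEquiv.apply_symm_apply k).symm

lemma card_divNat_fiber (a : Fin l) :
    (Finset.univ.filter (fun k : Fin (l * n) => k.divNat = a)).card = n := by
  classical
  have hinj : Function.Injective (fun j : Fin n => finProdFinEquiv (a, j)) := by
    intro j1 j2 h
    have := finProdFinEquiv.injective h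
    exact (Prod.ext_iff.mp this).2
  have himg : Finset.univ.filter (fun k : Fin (l * n) => k.divNat = a)
      = Finset.image (fun j : Fin n => finProdFinEquiv (a, j)) Finset.univ := by
    ext k
    simp only [Finset.mem_filter, Finset.mem_univ, true_and, Finset.mem_image]
    constructor
    · intro h
      exact ⟨k.modNat, by rw [← h]; exact (eq_finProdFinEquiv k).symm⟩
    · rintro ⟨j, -, rfl⟩
      exact divNat_finProdFinEquiv a j
  rw [himg, Finset.card_image_of_injective _ hinj, Finset.card_univ, Fintype.card_fin]

lemma sum_fiber_pairs (key : Fin (l * n) → Fin l × Fin l) (h : Fin l → Fin l → ℤ) :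
    ∑ k, h (key k).1 (key k).2
      = ∑ a, ∑ b, ((Finset.univ.filter (fun k => key k = (a, b))).card : ℤ) * h a b := by
  classical
  rw [← Finset.sum_fiberwise Finset.univ key (fun k => h (key k).1 (key k).2)]
  rw [Fintype.sum_prod_type]
  apply Finset.sum_congr rfl; intro a _
  apply Finset.sum_congr rfl; intro b _
  calc ∑ k ∈ Finset.univ.filter (fun k => key k = (a, b)), h (key k).1 (key k).2
      = ∑ _k ∈ Finset.univ.filter (fun k => key k = (a, b)), h a b :=
        Finset.sum_congr rfl (fun k hk => by
          simp only [Finset.mem_filter] at hk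
          rw [hk.2])
    _ = _ := by rw [Finset.sum_const, nsmul_eq_mul]

lemma rmin_scale (C : ℤ → ℤ → ℤ) (y : Fin l → ℤ) :
    rmin C (fun k : Fin (l * n) => y k.divNat) = (n : ℤ) * rmin C y := by
  classical
  set Y : Fin (l * n) → ℤ := fun k => y k.divNat with hY
  apply le_antisymm
  · obtain ⟨σs, hσs⟩ := exists_rmin C y
    set σb : Equiv.Perm (Fin (l * n)) :=
      ((finProdFinEquiv.symm).trans ((Equiv.prodCongr σs (Equiv.refl (Fin n))).trans
        finProdFinEquiv)) with hσb
    have happ : ∀ (a : Fin l) (j : Fin n),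
        σb (finProdFinEquiv (a, j)) = finProdFinEquiv (σs a, j) := by
      intro a j
      rw [hσb]
      simp [Equiv.trans_apply]
    calc rmin C Y ≤ ∑ k, C (Y k) (Y (σb k)) := rmin_le C Y σb
      _ = ∑ x : Fin l × Fin n, C (Y (finProdFinEquiv x)) (Y (σb (finProdFinEquiv x))) :=
          (Equiv.sum_comp finProdFinEquiv _).symm
      _ = ∑ x : Fin l × Fin n, C (y x.1) (y (σs x.1)) := by
          apply Finset.sum_congr rfl
          rintro ⟨a, j⟩ _
          rw [happ a j, hY]
          simp only []
          rw [divNat_finProdFinEquiv, divNat_finProdFinEquiv]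
      _ = ∑ a : Fin l, ∑ _j : Fin n, C (y a) (y (σs a)) := by
          rw [Fintype.sum_prod_type]
      _ = ∑ a : Fin l, (n : ℤ) * C (y a) (y (σs a)) := by
          apply Finset.sum_congr rfl
          intro a _
          rw [Finset.sum_const, nsmul_eq_mul]
          simp
      _ = (n : ℤ) * ∑ a, C (y a) (y (σs a)) := by rw [Finset.mul_sum]
      _ = (n : ℤ) * rmin C y := by rw [hσs]
  · apply le_rmin
    intro σ'
    set key : Fin (l * n) → Fin l × Fin l := fun k => (k.divNat, (σ' k).divNat) with hkey
    have hrowN : ∀ a, ∑ b, (Finset.univ.filter (fun k => key k = (a, b))).card = n := by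
      intro a
      have hmap : ∀ k ∈ Finset.univ.filter (fun k : Fin (l * n) => k.divNat = a),
          (σ' k).divNat ∈ (Finset.univ : Finset (Fin l)) := fun k _ => Finset.mem_univ _
      have hpart := Finset.card_eq_sum_card_fiberwise hmap
      have hfilt : ∀ b, (Finset.univ.filter (fun k : Fin (l * n) => k.divNat = a)).filter
            (fun k => (σ' k).divNat = b)
          = Finset.univ.filter (fun k => key k = (a, b)) := by
        intro b
        ext k
        simp only [Finset.mem_filter, Finset.mem_univ, true_and, hkey, Prod.mk.injEq]
        try tauto
      rw [card_divNat_fiber a] at hpart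
      calc ∑ b, (Finset.univ.filter (fun k => key k = (a, b))).card
          = ∑ b, ((Finset.univ.filter (fun k : Fin (l * n) => k.divNat = a)).filter
              (fun k => (σ' k).divNat = b)).card :=
            Finset.sum_congr rfl (fun b _ => by rw [hfilt b])
        _ = n := hpart.symm
    have hcolN : ∀ b, ∑ a, (Finset.univ.filter (fun k => key k = (a, b))).card = n := by
      intro b
      have hmap : ∀ k ∈ Finset.univ.filter (fun k : Fin (l * n) => (σ' k).divNat = b),
          k.divNat ∈ (Finset.univ : Finset (Fin l)) := fun k _ => Finset.mem_univ _
      have hpart := Finset.card_eq_sum_card_fiberwise hmap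
      have hfilt : ∀ a, (Finset.univ.filter (fun k : Fin (l * n) => (σ' k).divNat = b)).filter
            (fun k => k.divNat = a)
          = Finset.univ.filter (fun k => key k = (a, b)) := by
        intro a
        ext k
        simp only [Finset.mem_filter, Finset.mem_univ, true_and, hkey, Prod.mk.injEq]
        try tauto
      have hcard : (Finset.univ.filter (fun k : Fin (l * n) => (σ' k).divNat = b)).card
          = (Finset.univ.filter (fun k : Fin (l * n) => k.divNat = b)).card := by
        have himg : Finset.image (σ' : Fin (l * n) → Fin (l * n))
              (Finset.univ.filter (fun k : Fin (l * n) => (σ' k).divNat = b))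
            = Finset.univ.filter (fun k : Fin (l * n) => k.divNat = b) := by
          ext k
          simp only [Finset.mem_image, Finset.mem_filter, Finset.mem_univ, true_and]
          constructor
          · rintro ⟨m, hm, rfl⟩
            exact hm
          · intro hk
            exact ⟨σ'⁻¹ k, by simp [hk], by simp⟩
        rw [← himg, Finset.card_image_of_injective _ σ'.injective]
      rw [hcard, card_divNat_fiber b] at hpart
      calc ∑ a, (Finset.univ.filter (fun k => key k = (a, b))).card
          = ∑ a, ((Finset.univ.filter (fun k : Fin (l * n) => (σ' k).divNat = b)).filter
              (fun k => k.divNat = a)).card :=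
            Finset.sum_congr rfl (fun a _ => by rw [hfilt a])
        _ = n := hpart.symm
    have hident : ∑ k, C (Y k) (Y (σ' k))
        = ∑ a, ∑ b, ((Finset.univ.filter (fun k => key k = (a, b))).card : ℤ)
            * C (y a) (y b) := by
      have := sum_fiber_pairs key (fun a b => C (y a) (y b))
      simpa [hkey] using this
    rw [hident]
    refine hall_scale n _ (fun a b => Int.natCast_nonneg _) ?_ ?_ _ _ (fun σ => rmin_le C y σ)
    · intro a
      rw [← Nat.cast_sum]
      exact_mod_cast congrArg (Nat.cast : ℕ → ℤ) (hrowN a)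
    · intro b
      rw [← Nat.cast_sum]
      exact_mod_cast congrArg (Nat.cast : ℕ → ℤ) (hcolN b)

end Scale

section Geom

/-- integer weight numerator ("quanta") of a lattice point -/
def vq (a1 b1 a2 b2 : ℤ) (P : ℤ × ℤ) : ℤ := (b1 - b2) * P.1 + (a2 - a1) * P.2

/-- the cost function on quanta -/
def costC (p a1 b1 a2 b2 : ℤ) (a b : ℤ) : ℤ :=
  ⌈((p * b - a : ℤ) : ℚ) / ((a2 * b1 - a1 * b2 : ℤ) : ℚ)⌉

/-- the finite fiber of points of the cone with quanta at most `X` -/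
def Fb (a1 b1 a2 b2 : ℤ) (X : ℤ) : Finset (ℤ × ℤ) :=
  @Finset.filter _ (fun P => P ∈ MDelta a1 b1 a2 b2 ∧ vq a1 b1 a2 b2 P ≤ X)
    (Classical.decPred _)
    (Finset.Icc (0, 0) (max X 0 * (a1 + a2 + b1 + b2 + 1), max X 0 * (a1 + a2 + b1 + b2 + 1)))

def Fcnt (a1 b1 a2 b2 : ℤ) (X : ℤ) : ℕ := (Fb a1 b1 a2 b2 X).card

variable {a1 b1 a2 b2 : ℤ}

lemma vq_coe (P : ℤ × ℤ) (s t : ℚ) (hx : (P.1 : ℚ) = s * a1 + t * a2)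
    (hy : (P.2 : ℚ) = s * b1 + t * b2) :
    ((vq a1 b1 a2 b2 P : ℤ) : ℚ) = (s + t) * ((a2 * b1 - a1 * b2 : ℤ) : ℚ) := by
  unfold vq
  push_cast
  rw [hx, hy]
  ring

lemma vq_nonneg (hD : 0 < a2 * b1 - a1 * b2) {P : ℤ × ℤ} (hP : P ∈ MDelta a1 b1 a2 b2) :
    0 ≤ vq a1 b1 a2 b2 P := by
  obtain ⟨s, t, hs, ht, hx, hy⟩ := hP
  have h := vq_coe P s t hx hy
  have hDq : (0 : ℚ) < ((a2 * b1 - a1 * b2 : ℤ) : ℚ) := by exact_mod_cast hD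
  have : (0 : ℚ) ≤ ((vq a1 b1 a2 b2 P : ℤ) : ℚ) := by
    rw [h]; positivity
  exact_mod_cast this

lemma mem_Fb (ha1 : 0 ≤ a1) (hb1 : 0 ≤ b1) (ha2 : 0 ≤ a2) (hb2 : 0 ≤ b2)
    (hD : 0 < a2 * b1 - a1 * b2) {X : ℤ} {P : ℤ × ℤ} :
    P ∈ Fb a1 b1 a2 b2 X ↔ P ∈ MDelta a1 b1 a2 b2 ∧ vq a1 b1 a2 b2 P ≤ X := by
  have hraw : P ∈ Fb a1 b1 a2 b2 X ↔ P ∈ Finset.Icc ((0:ℤ),(0:ℤ))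
      (max X 0 * (a1 + a2 + b1 + b2 + 1), max X 0 * (a1 + a2 + b1 + b2 + 1)) ∧
      (P ∈ MDelta a1 b1 a2 b2 ∧ vq a1 b1 a2 b2 P ≤ X) :=
    @Finset.mem_filter _ _ (Classical.decPred _) _ _
  constructor
  · intro h
    exact (hraw.mp h).2
  · rintro ⟨hP, hv⟩
    refine hraw.mpr ⟨?_, hP, hv⟩
    obtain ⟨s, t, hs, ht, hx, hy⟩ := hP
    have hDq : (0 : ℚ) < ((a2 * b1 - a1 * b2 : ℤ) : ℚ) := by exact_mod_cast hD
    have hDq1 : (1 : ℚ) ≤ ((a2 * b1 - a1 * b2 : ℤ) : ℚ) := by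
      have : (1 : ℤ) ≤ a2 * b1 - a1 * b2 := hD
      exact_mod_cast this
    have hst : (s + t) * ((a2 * b1 - a1 * b2 : ℤ) : ℚ) ≤ (X : ℚ) := by
      rw [← vq_coe P s t hx hy]
      exact_mod_cast hv
    have hstX : s + t ≤ (max X 0 : ℤ) := by
      have h1 : s + t ≤ (s + t) * ((a2 * b1 - a1 * b2 : ℤ) : ℚ) := by
        nlinarith
      have h2 : (X : ℚ) ≤ ((max X 0 : ℤ) : ℚ) := by
        exact_mod_cast le_max_left X 0
      linarith
    have hM0 : (0 : ℚ) ≤ ((max X 0 : ℤ) : ℚ) := by exact_mod_cast le_max_right X 0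
    have ha1q : (0:ℚ) ≤ (a1 : ℚ) := by exact_mod_cast ha1
    have ha2q : (0:ℚ) ≤ (a2 : ℚ) := by exact_mod_cast ha2
    have hb1q : (0:ℚ) ≤ (b1 : ℚ) := by exact_mod_cast hb1
    have hb2q : (0:ℚ) ≤ (b2 : ℚ) := by exact_mod_cast hb2
    set K : ℚ := (a1 : ℚ) + a2 + b1 + b2 + 1 with hK
    have hKpos : (0:ℚ) < K := by rw [hK]; linarith
    have hx1 : (0 : ℚ) ≤ (P.1 : ℚ) := by rw [hx]; positivity
    have hy1 : (0 : ℚ) ≤ (P.2 : ℚ) := by rw [hy]; positivity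
    have hx2 : (P.1 : ℚ) ≤ ((max X 0 : ℤ) : ℚ) * K := by
      rw [hx]
      have : s * a1 + t * a2 ≤ (s + t) * K := by rw [hK]; nlinarith
      nlinarith
    have hy2 : (P.2 : ℚ) ≤ ((max X 0 : ℤ) : ℚ) * K := by
      rw [hy]
      have : s * b1 + t * b2 ≤ (s + t) * K := by rw [hK]; nlinarith
      nlinarith
    rw [Finset.mem_Icc]
    constructor
    · constructor
      · exact_mod_cast hx1
      · exact_mod_cast hy1
    · constructor
      · show P.1 ≤ max X 0 * (a1 + a2 + b1 + b2 + 1)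
        have : (P.1 : ℚ) ≤ ((max X 0 * (a1 + a2 + b1 + b2 + 1) : ℤ) : ℚ) := by
          push_cast
          convert hx2 using 1
          rw [hK]; push_cast; ring
        exact_mod_cast this
      · show P.2 ≤ max X 0 * (a1 + a2 + b1 + b2 + 1)
        have : (P.2 : ℚ) ≤ ((max X 0 * (a1 + a2 + b1 + b2 + 1) : ℤ) : ℚ) := by
          push_cast
          convert hy2 using 1
          rw [hK]; push_cast; ring
        exact_mod_cast this

lemma Fcnt_mono (ha1 : 0 ≤ a1) (hb1 : 0 ≤ b1) (ha2 : 0 ≤ a2) (hb2 : 0 ≤ b2)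
    (hD : 0 < a2 * b1 - a1 * b2) {X Y : ℤ} (hXY : X ≤ Y) :
    Fcnt a1 b1 a2 b2 X ≤ Fcnt a1 b1 a2 b2 Y := by
  apply Finset.card_le_card
  intro P hP
  rw [mem_Fb ha1 hb1 ha2 hb2 hD] at *
  exact ⟨hP.1, le_trans hP.2 hXY⟩

lemma b1_pos (ha1 : 0 ≤ a1) (ha2 : 0 ≤ a2) (hb2 : 0 ≤ b2)
    (hD : 0 < a2 * b1 - a1 * b2) : 0 < b1 := by
  by_contra h
  push_neg at h
  nlinarith [mul_nonneg ha1 hb2]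

lemma a2_pos (ha1 : 0 ≤ a1) (hb1 : 0 ≤ b1) (hb2 : 0 ≤ b2)
    (hD : 0 < a2 * b1 - a1 * b2) : 0 < a2 := by
  by_contra h
  push_neg at h
  nlinarith [mul_nonneg ha1 hb2]

lemma Fcnt_large (ha1 : 0 ≤ a1) (hb1 : 0 ≤ b1) (ha2 : 0 ≤ a2) (hb2 : 0 ≤ b2)
    (hD : 0 < a2 * b1 - a1 * b2) (k : ℕ) :
    k + 1 ≤ Fcnt a1 b1 a2 b2 ((k : ℤ) * (a2 * b1 - a1 * b2)) := by
  classical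
  have hb1p := b1_pos ha1 ha2 hb2 hD
  set ι : Fin (k + 1) → ℤ × ℤ := fun j => ((j : ℤ) * a1, (j : ℤ) * b1) with hι
  have hmaps : ∀ j : Fin (k + 1), ι j ∈ Fb a1 b1 a2 b2 ((k : ℤ) * (a2 * b1 - a1 * b2)) := by
    intro j
    rw [mem_Fb ha1 hb1 ha2 hb2 hD]
    constructor
    · refine ⟨(j : ℚ), 0, by positivity, le_refl 0, ?_, ?_⟩
      · show (((j : ℤ) * a1 : ℤ) : ℚ) = (j : ℚ) * a1 + 0 * a2
        push_cast; ring
      · show (((j : ℤ) * b1 : ℤ) : ℚ) = (j : ℚ) * b1 + 0 * b2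
        push_cast; ring
    · show (b1 - b2) * ((j : ℤ) * a1) + (a2 - a1) * ((j : ℤ) * b1) ≤ _
      have h1 : (b1 - b2) * ((j : ℤ) * a1) + (a2 - a1) * ((j : ℤ) * b1)
          = (j : ℤ) * (a2 * b1 - a1 * b2) := by ring
      rw [h1]
      have : (j : ℤ) ≤ (k : ℤ) := by exact_mod_cast Nat.lt_succ_iff.mp j.isLt
      nlinarith
  have hinj : Set.InjOn ι (Finset.univ : Finset (Fin (k + 1))) := by
    intro j1 _ j2 _ h
    have h2 : (j1 : ℤ) * b1 = (j2 : ℤ) * b1 := congrArg Prod.snd h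
    have : (j1 : ℤ) = (j2 : ℤ) := by
      exact mul_right_cancel₀ (by omega) h2
    exact Fin.ext (by exact_mod_cast this)
  have := Finset.card_le_card_of_injOn ι (fun j _ => hmaps j) hinj
  simpa [Fcnt] using this

lemma vq_dvd (P : ℤ × ℤ) : (Int.gcd (a1 - a2) (b1 - b2) : ℤ) ∣ vq a1 b1 a2 b2 P := by
  unfold vq
  have h1 : (Int.gcd (a1 - a2) (b1 - b2) : ℤ) ∣ (b1 - b2) := Int.gcd_dvd_right _ _
  have h2 : (Int.gcd (a1 - a2) (b1 - b2) : ℤ) ∣ (a2 - a1) := by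
    have h := Int.gcd_dvd_left (a := a1 - a2) (b := b1 - b2)
    have h' : (Int.gcd (a1 - a2) (b1 - b2) : ℤ) ∣ -(a1 - a2) := dvd_neg.mpr h
    rwa [neg_sub] at h'
  exact dvd_add (h1.mul_right P.1) (h2.mul_right P.2)

lemma gcd_dvd_D : (Int.gcd (a1 - a2) (b1 - b2) : ℤ) ∣ (a2 * b1 - a1 * b2) := by
  have h : a2 * b1 - a1 * b2 = vq a1 b1 a2 b2 (a1, b1) := by
    unfold vq; ring
  rw [h]
  exact vq_dvd _

lemma gcd_pos (hD : 0 < a2 * b1 - a1 * b2) : 0 < (Int.gcd (a1 - a2) (b1 - b2) : ℤ) := by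
  rcases Nat.eq_zero_or_pos (Int.gcd (a1 - a2) (b1 - b2)) with h | h
  · rw [Int.gcd_eq_zero_iff] at h
    obtain ⟨h1, h2⟩ := h
    have ha : a1 = a2 := by omega
    have hb : b1 = b2 := by omega
    rw [ha, hb] at hD
    nlinarith
  · exact_mod_cast h

end Geom

section Subst

/-- abstract cost with denominator D -/
def cstD (p D a b : ℤ) : ℤ := ⌈((p * b - a : ℤ) : ℚ) / ((D : ℤ) : ℚ)⌉

lemma costC_eq_cstD (p a1 b1 a2 b2 : ℤ) :
    costC p a1 b1 a2 b2 = cstD p (a2 * b1 - a1 * b2) := rfl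

lemma ceil_mul_le {z D g : ℤ} (hD : 0 < D) (hg : 0 < g) (hzg : g ∣ z) (hgD : g ∣ D) :
    ⌈((z : ℤ) : ℚ) / ((D : ℤ) : ℚ)⌉ * D ≤ z + D - g := by
  set c := ⌈((z : ℤ) : ℚ) / ((D : ℤ) : ℚ)⌉ with hc
  have hDq : (0 : ℚ) < ((D : ℤ) : ℚ) := by exact_mod_cast hD
  have h1 : (c : ℚ) < ((z : ℤ) : ℚ) / ((D : ℤ) : ℚ) + 1 := Int.ceil_lt_add_one _
  have h2 : (c : ℚ) * D < z + D := by
    have := mul_lt_mul_of_pos_right h1 hDq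
    rw [add_mul, div_mul_cancel₀ _ (ne_of_gt hDq), one_mul] at this
    exact this
  have h3 : c * D < z + D := by exact_mod_cast h2
  have h4 : g ∣ z + D - c * D := by
    exact dvd_sub (dvd_add hzg hgD) (Dvd.dvd.mul_left hgD c)
  have h5 : 0 < z + D - c * D := by omega
  have h6 : g ≤ z + D - c * D := Int.le_of_dvd h5 h4
  omega

lemma le_ceil_mul {z D : ℤ} (hD : 0 < D) :
    z ≤ ⌈((z : ℤ) : ℚ) / ((D : ℤ) : ℚ)⌉ * D := by
  have hDq : (0 : ℚ) < ((D : ℤ) : ℚ) := by exact_mod_cast hD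
  have h1 : ((z : ℤ) : ℚ) / ((D : ℤ) : ℚ) ≤ ⌈((z : ℤ) : ℚ) / ((D : ℤ) : ℚ)⌉ := Int.le_ceil _
  have h2 : ((z : ℤ) : ℚ) ≤ (⌈((z : ℤ) : ℚ) / ((D : ℤ) : ℚ)⌉ : ℚ) * D := by
    rw [← div_le_iff₀ hDq]
    exact h1
  exact_mod_cast h2

lemma subst_le {L : ℕ} (p D g : ℤ) (hD : 0 < D) (hg : 0 < g) (hgD : g ∣ D)
    (hp1 : 1 ≤ p) (hmain : 2 * D ≤ (p - 1) * g)
    (x x' : Fin L → ℤ) (hle : ∀ i, x' i ≤ x i)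
    (hdx : ∀ i, g ∣ x i) (hdx' : ∀ i, g ∣ x' i)
    (σ : Equiv.Perm (Fin L)) :
    ∑ i, cstD p D (x' i) (x' (σ i)) ≤ ∑ i, cstD p D (x i) (x (σ i)) := by
  classical
  set χ : Fin L → ℤ := fun i => if x i = x' i then 0 else 1 with hχ
  have hχ01 : ∀ i, 0 ≤ χ i ∧ χ i ≤ 1 := by
    intro i; rw [hχ]; dsimp only; split_ifs <;> omega
  have hgχ : ∀ i, g * χ i ≤ x i - x' i := by
    intro i
    rw [hχ]; dsimp only
    split_ifs with h
    · omega
    · have h1 : 0 < x i - x' i := by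
        have := hle i; omega
      have h2 : g ∣ x i - x' i := dvd_sub (hdx i) (hdx' i)
      have := Int.le_of_dvd h1 h2
      omega
  have hgD' : g ≤ D := Int.le_of_dvd hD hgD
  have per_edge : ∀ i, cstD p D (x' i) (x' (σ i)) * D ≤ cstD p D (x i) (x (σ i)) * D +
      (p * (x' (σ i) - x (σ i)) - (x' i - x i) + (D - g) * (χ i + χ (σ i))) := by
    intro i
    by_cases h1 : x i = x' i
    · by_cases h2 : x (σ i) = x' (σ i)
      · have e1 : χ i = 0 := by rw [hχ]; simp [h1]
        have e2 : χ (σ i) = 0 := by rw [hχ]; simp [h2]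
        rw [← h1, ← h2, e1, e2]
        ring_nf
        omega
      · -- changed at σ i
        have hA : cstD p D (x' i) (x' (σ i)) * D ≤ (p * x' (σ i) - x' i) + D - g :=
          ceil_mul_le hD hg (dvd_sub ((hdx' (σ i)).mul_left p) (hdx' i)) hgD
        have hB : p * x (σ i) - x i ≤ cstD p D (x i) (x (σ i)) * D := le_ceil_mul hD
        have hχ2 : χ (σ i) = 1 := by rw [hχ]; simp [h2]
        have hχ1 : 0 ≤ χ i := (hχ01 i).1
        nlinarith [hχ1, hχ2]
    · have hA : cstD p D (x' i) (x' (σ i)) * D ≤ (p * x' (σ i) - x' i) + D - g :=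
        ceil_mul_le hD hg (dvd_sub ((hdx' (σ i)).mul_left p) (hdx' i)) hgD
      have hB : p * x (σ i) - x i ≤ cstD p D (x i) (x (σ i)) * D := le_ceil_mul hD
      have hχ1 : χ i = 1 := by rw [hχ]; simp [h1]
      have hχ2 : 0 ≤ χ (σ i) := (hχ01 (σ i)).1
      nlinarith [hχ1, hχ2]
  have hsum := Finset.sum_le_sum (fun i (_ : i ∈ Finset.univ) => per_edge i)
  rw [Finset.sum_add_distrib] at hsum
  rw [← Finset.sum_mul, ← Finset.sum_mul] at hsum
  set S' := ∑ i, cstD p D (x' i) (x' (σ i)) with hS'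
  set S := ∑ i, cstD p D (x i) (x (σ i)) with hS
  have hsplit : ∑ i, (p * (x' (σ i) - x (σ i)) - (x' i - x i) + (D - g) * (χ i + χ (σ i)))
      = - (p - 1) * (∑ i, (x i - x' i)) + 2 * (D - g) * (∑ i, χ i) := by
    rw [Finset.sum_add_distrib, Finset.sum_sub_distrib]
    have e1 : ∑ i, p * (x' (σ i) - x (σ i)) = p * ∑ i, (x' i - x i) := by
      rw [← Finset.mul_sum]
      congr 1
      exact Equiv.sum_comp σ (fun j => x' j - x j)
    have e2 : ∑ i, (D - g) * (χ i + χ (σ i)) = 2 * (D - g) * ∑ i, χ i := by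
      rw [← Finset.mul_sum, Finset.sum_add_distrib]
      rw [Equiv.sum_comp σ χ]
      ring
    rw [e1, e2]
    rw [show (∑ i, (x i - x' i)) = (∑ i, x i) - ∑ i, x' i from Finset.sum_sub_distrib _ _]
    rw [show (∑ i, (x' i - x i)) = (∑ i, x' i) - ∑ i, x i from Finset.sum_sub_distrib _ _]
    ring
  rw [hsplit] at hsum
  set Δ := ∑ i, (x i - x' i) with hΔ
  set K := ∑ i, χ i with hK
  have hKnn : 0 ≤ K := Finset.sum_nonneg (fun i _ => (hχ01 i).1)
  have hgK : g * K ≤ Δ := by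
    rw [hK, hΔ, Finset.mul_sum]
    exact Finset.sum_le_sum (fun i _ => hgχ i)
  -- conclude S' * D ≤ S * D
  have hfin : S' * D ≤ S * D := by
    nlinarith [hgK, hKnn, hmain, hg, hgD']
  exact le_of_mul_le_mul_right hfin hD

end Subst

section Bridge

lemma msOf_listFn (T : Multiset (ℤ × ℤ)) : msOf (listFn T) = T := by
  rw [msOf_eq_coe]
  unfold listFn
  rw [List.ofFn_get]
  exact T.coe_toList

lemma msOf_comp {α β : Type*} (v : α → β) {L : ℕ} (x : Fin L → α) :
    msOf (fun i => v (x i)) = (msOf x).map v := by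
  unfold msOf
  rw [Multiset.map_map]
  rfl

lemma msOf_transport {L1 L2 : ℕ} (h : L1 = L2) (f : ℕ → ℤ) :
    msOf (fun k : Fin L1 => f k) = msOf (fun k : Fin L2 => f k) := by
  subst h; rfl

lemma countP_msOf (q : ℤ → Prop) [DecidablePred q] {L : ℕ} (x : Fin L → ℤ) :
    Multiset.countP q (msOf x) = (Finset.univ.filter (fun i => q (x i))).card := by
  unfold msOf
  rw [Multiset.countP_map]
  rw [← Finset.filter_val]
  rfl

lemma countP_split (M : Multiset ℤ) (z : ℤ) :
    M.countP (fun v => v ≤ z) = M.countP (fun v => v ≤ z - 1) + M.count z := by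
  induction M using Multiset.induction_on with
  | empty => simp
  | cons a s ih =>
      rw [Multiset.countP_cons, Multiset.countP_cons, Multiset.count_cons]
      rw [ih]
      split_ifs <;> omega

lemma ms_eq_of_cum (M N : Multiset ℤ)
    (h : ∀ z, M.countP (fun v => v ≤ z) = N.countP (fun v => v ≤ z)) : M = N := by
  rw [Multiset.ext]
  intro z
  have h1 := countP_split M z
  have h2 := countP_split N z
  have h3 := h z
  have h4 := h (z - 1)
  omega

lemma card_filter_lt_fin (l m : ℕ) :
    (Finset.univ.filter (fun a : Fin l => (a : ℕ) < m)).card = min m l := by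
  classical
  rw [show min m l = (Finset.univ : Finset (Fin (min m l))).card by simp]
  refine Finset.card_bij' (fun a (ha : a ∈ Finset.univ.filter (fun a : Fin l => (a : ℕ) < m)) =>
      (⟨(a : ℕ), by
        simp only [Finset.mem_filter, Finset.mem_univ, true_and] at ha
        have := a.isLt
        omega⟩ : Fin (min m l)))
    (fun b _ => (⟨(b : ℕ), lt_of_lt_of_le b.isLt (min_le_right m l)⟩ : Fin l))
    ?_ ?_ ?_ ?_
  · intro a ha
    exact Finset.mem_univ _
  · intro b hb
    simp only [Finset.mem_filter, Finset.mem_univ, true_and]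
    exact lt_of_lt_of_le b.isLt (min_le_left m l)
  · intro a ha
    rfl
  · intro b hb
    rfl

lemma msOf_divNat {l n : ℕ} (y : Fin l → ℤ) :
    msOf (fun k : Fin (l * n) => y k.divNat) = n • msOf y := by
  classical
  rw [Multiset.ext]
  intro z
  rw [Multiset.count_nsmul]
  unfold msOf
  rw [Multiset.count_map, Multiset.count_map]
  have e1 : ∀ (γ : Type) (w : Multiset γ) (q : γ → Prop) [DecidablePred q],
      Multiset.card (Multiset.filter q w) = Multiset.card (Multiset.filter q w) := fun _ _ _ _ => rfl
  rw [show Multiset.filter (fun a => z = (fun k : Fin (l * n) => y k.divNat) a) Finset.univ.val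
      = (Finset.univ.filter (fun k : Fin (l * n) => z = y k.divNat)).val by
        rw [Finset.filter_val]]
  rw [show Multiset.filter (fun a => z = y a) Finset.univ.val
      = (Finset.univ.filter (fun a : Fin l => z = y a)).val by rw [Finset.filter_val]]
  show (Finset.univ.filter (fun k : Fin (l * n) => z = y k.divNat)).card
      = n * (Finset.univ.filter (fun a : Fin l => z = y a)).card
  have hmap : ∀ k ∈ Finset.univ.filter (fun k : Fin (l * n) => z = y k.divNat),
      k.divNat ∈ (Finset.univ : Finset (Fin l)) := fun k _ => Finset.mem_univ _
  rw [Finset.card_eq_sum_card_fiberwise hmap]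
  have hfib : ∀ a : Fin l,
      ((Finset.univ.filter (fun k : Fin (l * n) => z = y k.divNat)).filter
        (fun k => k.divNat = a)).card = if z = y a then n else 0 := by
    intro a
    split_ifs with hz
    · rw [show (Finset.univ.filter (fun k : Fin (l * n) => z = y k.divNat)).filter
          (fun k => k.divNat = a) = Finset.univ.filter (fun k : Fin (l * n) => k.divNat = a) from ?_]
      · exact card_divNat_fiber a
      · ext k
        simp only [Finset.mem_filter, Finset.mem_univ, true_and]
        constructor
        · rintro ⟨-, h2⟩; exact h2
        · intro h; exact ⟨by rw [h]; exact hz, h⟩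
    · rw [Finset.card_eq_zero]
      ext k
      simp only [Finset.mem_filter, Finset.mem_univ, true_and, Finset.notMem_empty,
        iff_false, not_and]
      intro h1 h2
      rw [h2] at h1
      exact hz h1
  rw [Finset.sum_congr rfl (fun a _ => hfib a)]
  calc (∑ a : Fin l, if z = y a then n else 0)
      = ∑ _a ∈ Finset.univ.filter (fun a : Fin l => z = y a), n :=
        (Finset.sum_filter _ _).symm
    _ = (Finset.univ.filter (fun a : Fin l => z = y a)).card * n := by
        rw [Finset.sum_const, smul_eq_mul]
    _ = n * (Finset.univ.filter (fun a : Fin l => z = y a)).card := mul_comm _ _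

lemma hMin_eq_rmin (p a1 b1 a2 b2 : ℤ) (S : Multiset (ℤ × ℤ)) :
    hMin p a1 b1 a2 b2 S
      = rmin (costC p a1 b1 a2 b2) (fun i => vq a1 b1 a2 b2 (listFn S i)) := by
  unfold hMin rmin hTau
  apply congrArg
  funext τ
  apply Finset.sum_congr rfl
  intro i _
  unfold costC
  congr 1
  unfold wt vq
  have h1 : ((p : ℤ) • listFn S (τ i) - listFn S i).1
      = p * (listFn S (τ i)).1 - (listFn S i).1 := rfl
  have h2 : ((p : ℤ) • listFn S (τ i) - listFn S i).2
      = p * (listFn S (τ i)).2 - (listFn S i).2 := rfl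
  rw [h1, h2]
  congr 1
  push_cast
  ring

lemma count_le_Fcnt {a1 b1 a2 b2 : ℤ} (ha1 : 0 ≤ a1) (hb1 : 0 ≤ b1) (ha2 : 0 ≤ a2)
    (hb2 : 0 ≤ b2) (hD : 0 < a2 * b1 - a1 * b2)
    {T : Multiset (ℤ × ℤ)} (hmem : ∀ P ∈ T, P ∈ MDelta a1 b1 a2 b2)
    {n : ℕ} (hcnt : ∀ P, T.count P ≤ n) (X : ℤ) :
    Multiset.countP (fun v => v ≤ X) (T.map (vq a1 b1 a2 b2)) ≤ n * Fcnt a1 b1 a2 b2 X := by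
  classical
  rw [Multiset.countP_map]
  set T' := T.filter (fun P => vq a1 b1 a2 b2 P ≤ X) with hT'
  have hsub : T'.toFinset ⊆ Fb a1 b1 a2 b2 X := by
    intro P hP
    rw [Multiset.mem_toFinset, hT', Multiset.mem_filter] at hP
    rw [mem_Fb ha1 hb1 ha2 hb2 hD]
    exact ⟨hmem P hP.1, hP.2⟩
  calc Multiset.card T' = ∑ P ∈ T'.toFinset, T'.count P :=
        (Multiset.toFinset_sum_count_eq T').symm
    _ ≤ ∑ P ∈ T'.toFinset, n := by
        apply Finset.sum_le_sum
        intro P _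
        exact le_trans (Multiset.count_le_of_le P (Multiset.filter_le _ T)) (hcnt P)
    _ = T'.toFinset.card * n := by rw [Finset.sum_const, smul_eq_mul]
    _ ≤ Fcnt a1 b1 a2 b2 X * n := by
        exact Nat.mul_le_mul_right n (Finset.card_le_card hsub)
    _ = n * Fcnt a1 b1 a2 b2 X := mul_comm _ _

end Bridge

/-- Let `g = gcd(a1-a2, b1-b2)` and `p` a prime with `p ∤ D` and
`p > 2·D/g + 1`.  For all positive `n, ℓ`, the minimum of `h(S)` over finite
multisets of points of `M(Δ)` of cardinality `n·ℓ` with every multiplicity at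
most `n` equals `n` times the minimum of `h(S)` over subsets of `M(Δ)` of
cardinality `ℓ`. -/
theorem statement10 (p a1 b1 a2 b2 : ℤ)
    (ha1 : 0 ≤ a1) (hb1 : 0 ≤ b1) (ha2 : 0 ≤ a2) (hb2 : 0 ≤ b2)
    (hD : 0 < a2 * b1 - a1 * b2)
    (hp : Prime p) (hpD : ¬ p ∣ (a2 * b1 - a1 * b2))
    (hpg : 2 * ((a2 * b1 - a1 * b2 : ℤ) : ℚ) /
      (Int.gcd (a1 - a2) (b1 - b2) : ℚ) + 1 < (p : ℚ))
    (n l : ℕ) (hn : 0 < n) (hl : 0 < l) :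
    ∃ m : ℤ,
      IsLeast {h : ℤ | ∃ S : Finset (ℤ × ℤ),
        (S : Set (ℤ × ℤ)) ⊆ MDelta a1 b1 a2 b2 ∧ S.card = l ∧
        h = hMin p a1 b1 a2 b2 S.val} m ∧
      IsLeast {h : ℤ | ∃ S : Multiset (ℤ × ℤ),
        (∀ P ∈ S, P ∈ MDelta a1 b1 a2 b2) ∧ Multiset.card S = n * l ∧
        (∀ P : ℤ × ℤ, S.count P ≤ n) ∧
        h = hMin p a1 b1 a2 b2 S} ((n : ℤ) * m) := by
  classical
  set gg : ℤ := (Int.gcd (a1 - a2) (b1 - b2) : ℤ) with hggdef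
  have hggpos : 0 < gg := gcd_pos hD
  have hggD : gg ∣ (a2 * b1 - a1 * b2) := gcd_dvd_D
  have hDq : (0 : ℚ) < ((a2 * b1 - a1 * b2 : ℤ) : ℚ) := by exact_mod_cast hD
  have hggq : (0 : ℚ) < (gg : ℚ) := by exact_mod_cast hggpos
  have hggcast : ((gg : ℤ) : ℚ) = ((Int.gcd (a1 - a2) (b1 - b2) : ℕ) : ℚ) := by
    rw [hggdef]; push_cast; ring
  have hp1 : 1 ≤ p := by
    have h0 : (0 : ℚ) < 2 * ((a2 * b1 - a1 * b2 : ℤ) : ℚ) / (gg : ℚ) := by positivity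
    have h1 : (1 : ℚ) < (p : ℚ) := by
      rw [hggcast] at h0
      linarith
    have : (1 : ℤ) < p := by exact_mod_cast h1
    omega
  have hmain : 2 * (a2 * b1 - a1 * b2) ≤ (p - 1) * gg := by
    have h1 : 2 * ((a2 * b1 - a1 * b2 : ℤ) : ℚ) / (gg : ℚ) < (p : ℚ) - 1 := by
      rw [hggcast]
      linarith [hpg]
    rw [div_lt_iff₀ hggq] at h1
    have h3 : (2 * (a2 * b1 - a1 * b2) : ℤ) < ((p - 1) * gg : ℤ) := by
      exact_mod_cast h1
    omega
  -- the greedy sequence G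
  have hGex : ∀ k : ℕ, ∃ lb : ℤ, (k + 1 ≤ Fcnt a1 b1 a2 b2 lb) ∧
      ∀ X : ℤ, (k + 1 ≤ Fcnt a1 b1 a2 b2 X) → lb ≤ X := by
    intro k
    apply Int.exists_least_of_bdd
    · refine ⟨0, fun X hX => ?_⟩
      have hne : (Fb a1 b1 a2 b2 X).Nonempty := by
        rw [← Finset.card_pos]
        show 0 < Fcnt a1 b1 a2 b2 X
        omega
      obtain ⟨P, hP⟩ := hne
      rw [mem_Fb ha1 hb1 ha2 hb2 hD] at hP
      have := vq_nonneg hD hP.1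
      linarith [hP.2]
    · exact ⟨(k : ℤ) * (a2 * b1 - a1 * b2), Fcnt_large ha1 hb1 ha2 hb2 hD k⟩
  choose G hG1 hG2 using hGex
  have hGiff : ∀ (k : ℕ) (X : ℤ), G k ≤ X ↔ k + 1 ≤ Fcnt a1 b1 a2 b2 X := by
    intro k X
    constructor
    · intro h
      exact le_trans (hG1 k) (Fcnt_mono ha1 hb1 ha2 hb2 hD h)
    · exact hG2 k X
  have hGattain : ∀ k : ℕ, ∃ P ∈ MDelta a1 b1 a2 b2, vq a1 b1 a2 b2 P = G k := by
    intro k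
    have h1 : k + 1 ≤ Fcnt a1 b1 a2 b2 (G k) := hG1 k
    have h2 : ¬ (k + 1 ≤ Fcnt a1 b1 a2 b2 (G k - 1)) := by
      intro h
      have := hG2 k _ h
      omega
    have hex : ∃ P ∈ Fb a1 b1 a2 b2 (G k), P ∉ Fb a1 b1 a2 b2 (G k - 1) := by
      by_contra hcon
      push_neg at hcon
      have hsub2 : Fb a1 b1 a2 b2 (G k) ⊆ Fb a1 b1 a2 b2 (G k - 1) := hcon
      have := Finset.card_le_card hsub2
      have : Fcnt a1 b1 a2 b2 (G k) ≤ Fcnt a1 b1 a2 b2 (G k - 1) := this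
      omega
    obtain ⟨P, hPin, hPout⟩ := hex
    rw [mem_Fb ha1 hb1 ha2 hb2 hD] at hPin
    refine ⟨P, hPin.1, ?_⟩
    have hout2 : ¬ (vq a1 b1 a2 b2 P ≤ G k - 1) := by
      intro h
      exact hPout ((mem_Fb ha1 hb1 ha2 hb2 hD).mpr ⟨hPin.1, h⟩)
    have := hPin.2
    omega
  have hGdvd : ∀ k : ℕ, gg ∣ G k := by
    intro k
    obtain ⟨P, _, hv⟩ := hGattain k
    rw [← hv]
    exact vq_dvd P
  -- the cost function and greedy tuple
  set cst : ℤ → ℤ → ℤ := costC p a1 b1 a2 b2 with hcst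
  set Gl : Fin l → ℤ := fun a => G (a : ℕ) with hGl
  set mv : ℤ := rmin cst Gl with hmv
  -- ======================= key lower bound =======================
  have keylb : ∀ (N : ℕ), 0 < N → ∀ T : Multiset (ℤ × ℤ),
      (∀ P ∈ T, P ∈ MDelta a1 b1 a2 b2) → Multiset.card T = N * l →
      (∀ P : ℤ × ℤ, T.count P ≤ N) → (N : ℤ) * mv ≤ hMin p a1 b1 a2 b2 T := by
    intro N hN T hTmem hTcard hTcnt
    have hL : T.toList.length = N * l := by rw [Multiset.length_toList, hTcard]
    set x : Fin T.toList.length → ℤ := fun i => vq a1 b1 a2 b2 (listFn T i) with hx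
    rw [hMin_eq_rmin, ← hcst, ← hx]
    obtain ⟨σ, hσ⟩ := exists_rmin cst x
    rw [hσ]
    set es : Equiv.Perm (Fin T.toList.length) := Tuple.sort x with hes
    have hu : Monotone (fun j => x (es j)) := Tuple.monotone_sort x
    set x' : Fin T.toList.length → ℤ := fun i => G (((es.symm i : Fin _) : ℕ) / N) with hx'
    have hmsx : msOf x = Multiset.map (vq a1 b1 a2 b2) T := by
      rw [hx]
      rw [msOf_comp (vq a1 b1 a2 b2) (listFn T), msOf_listFn]
    have hdom : ∀ k : Fin T.toList.length, G ((k : ℕ) / N) ≤ x (es k) := by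
      intro k
      rw [hGiff]
      have h1 : (k : ℕ) + 1 ≤
          (Finset.univ.filter (fun j : Fin T.toList.length => x (es j) ≤ x (es k))).card := by
        have hinj : Set.InjOn (fun j : Fin ((k : ℕ) + 1) =>
            (⟨(j : ℕ), lt_of_le_of_lt (Nat.lt_succ_iff.mp j.isLt) k.isLt⟩ : Fin T.toList.length))
            (Finset.univ : Finset (Fin ((k : ℕ) + 1))) := by
          intro j1 _ j2 _ h
          have h2 : (j1 : ℕ) = (j2 : ℕ) := by
            have := congrArg Fin.val h
            simpa using this
          exact Fin.ext h2
        have hmaps : ∀ j : Fin ((k : ℕ) + 1),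
            (⟨(j : ℕ), lt_of_le_of_lt (Nat.lt_succ_iff.mp j.isLt) k.isLt⟩ : Fin T.toList.length)
            ∈ Finset.univ.filter (fun j : Fin T.toList.length => x (es j) ≤ x (es k)) := by
          intro j
          rw [Finset.mem_filter]
          refine ⟨Finset.mem_univ _, ?_⟩
          apply hu
          show ((⟨(j : ℕ), _⟩ : Fin T.toList.length)) ≤ k
          exact Nat.lt_succ_iff.mp j.isLt
        have := Finset.card_le_card_of_injOn _ (fun j _ => hmaps j) hinj
        simpa using this
      have h2 : (Finset.univ.filter
            (fun j : Fin T.toList.length => x (es j) ≤ x (es k))).card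
          = Multiset.countP (fun v => v ≤ x (es k)) (msOf (fun j => x (es j))) := by
        rw [countP_msOf]
      have h3 : msOf (fun j => x (es j)) = msOf x := msOf_comp_perm x es
      have h4 : Multiset.countP (fun v => v ≤ x (es k)) (Multiset.map (vq a1 b1 a2 b2) T)
          ≤ N * Fcnt a1 b1 a2 b2 (x (es k)) :=
        count_le_Fcnt ha1 hb1 ha2 hb2 hD hTmem hTcnt _
      have h5 : (k : ℕ) + 1 ≤ N * Fcnt a1 b1 a2 b2 (x (es k)) := by
        rw [h2, h3, hmsx] at h1
        omega
      have h6 : (k : ℕ) / N < Fcnt a1 b1 a2 b2 (x (es k)) := by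
        rw [Nat.div_lt_iff_lt_mul hN]
        calc (k : ℕ) < (k : ℕ) + 1 := Nat.lt_succ_self _
          _ ≤ N * Fcnt a1 b1 a2 b2 (x (es k)) := h5
          _ = Fcnt a1 b1 a2 b2 (x (es k)) * N := mul_comm _ _
      omega
    have hle : ∀ i, x' i ≤ x i := by
      intro i
      have := hdom (es.symm i)
      rw [Equiv.apply_symm_apply] at this
      exact this
    have hdx : ∀ i, gg ∣ x i := fun i => vq_dvd _
    have hdx' : ∀ i, gg ∣ x' i := fun i => hGdvd _
    have hchain1 : ∑ i, cstD p (a2 * b1 - a1 * b2) (x' i) (x' (σ i))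
        ≤ ∑ i, cstD p (a2 * b1 - a1 * b2) (x i) (x (σ i)) :=
      subst_le p (a2 * b1 - a1 * b2) gg hD hggpos hggD hp1 hmain x x' hle hdx hdx' σ
    rw [← costC_eq_cstD, ← hcst] at hchain1
    have h7 : rmin cst x' ≤ ∑ i, cst (x' i) (x' (σ i)) := rmin_le cst x' σ
    have h8 : rmin cst x' = rmin cst (fun k : Fin (l * N) => Gl k.divNat) := by
      apply rmin_congr
      have e1 : msOf x' = msOf (fun k : Fin T.toList.length => G ((k : ℕ) / N)) := by
        have : x' = (fun k : Fin T.toList.length => G ((k : ℕ) / N)) ∘ es.symm := rfl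
        rw [this]
        exact msOf_comp_perm _ (es.symm : Equiv.Perm (Fin T.toList.length))
      have e2 : msOf (fun k : Fin T.toList.length => G ((k : ℕ) / N))
          = msOf (fun k : Fin (l * N) => G ((k : ℕ) / N)) := by
        have hlen : T.toList.length = l * N := by rw [hL]; ring
        exact msOf_transport hlen (fun m => G (m / N))
      have e3 : (fun k : Fin (l * N) => Gl k.divNat)
          = (fun k : Fin (l * N) => G ((k : ℕ) / N)) := by
        funext k
        rw [hGl]
        show G ((k.divNat : ℕ)) = G ((k : ℕ) / N)
        rw [Fin.coe_divNat]
      rw [e1, e2, e3]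
    have h9 : rmin cst (fun k : Fin (l * N) => Gl k.divNat) = (N : ℤ) * rmin cst Gl :=
      rmin_scale cst Gl
    rw [hmv]
    linarith
  -- ======================= the optimal set S* =======================
  set V : ℤ := G (l - 1) with hV
  have hl1 : (l - 1) + 1 = l := Nat.succ_pred_eq_of_pos hl
  have hFV : l ≤ Fcnt a1 b1 a2 b2 V := by
    have := hG1 (l - 1)
    rw [hl1] at this
    exact this
  have hβ : Fcnt a1 b1 a2 b2 (V - 1) < l := by
    by_contra hcon
    push_neg at hcon
    have h2 : (l - 1) + 1 ≤ Fcnt a1 b1 a2 b2 (V - 1) := by omega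
    have := hG2 (l - 1) _ h2
    rw [← hV] at this
    omega
  have hsubV : Fb a1 b1 a2 b2 (V - 1) ⊆ Fb a1 b1 a2 b2 V := by
    intro P hP
    rw [mem_Fb ha1 hb1 ha2 hb2 hD] at *
    exact ⟨hP.1, by omega⟩
  have hsd : l - Fcnt a1 b1 a2 b2 (V - 1) ≤ (Fb a1 b1 a2 b2 V \ Fb a1 b1 a2 b2 (V - 1)).card := by
    rw [Finset.card_sdiff_of_subset hsubV]
    have : Fcnt a1 b1 a2 b2 (V - 1) ≤ Fcnt a1 b1 a2 b2 V := by
      exact Fcnt_mono ha1 hb1 ha2 hb2 hD (by omega)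
    show l - Fcnt a1 b1 a2 b2 (V - 1) ≤ Fcnt a1 b1 a2 b2 V - Fcnt a1 b1 a2 b2 (V - 1)
    omega
  obtain ⟨Cs, hCsub, hCcard⟩ := Finset.exists_subset_card_eq hsd
  set Sstar : Finset (ℤ × ℤ) := Fb a1 b1 a2 b2 (V - 1) ∪ Cs with hSstar
  have hdisj : Disjoint (Fb a1 b1 a2 b2 (V - 1)) Cs := by
    rw [Finset.disjoint_left]
    intro P hP hPC
    have := hCsub hPC
    rw [Finset.mem_sdiff] at this
    exact this.2 hP
  have hScard : Sstar.card = l := by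
    rw [hSstar, Finset.card_union_of_disjoint hdisj, hCcard]
    show Fcnt a1 b1 a2 b2 (V - 1) + (l - Fcnt a1 b1 a2 b2 (V - 1)) = l
    omega
  have hSsubM : (Sstar : Set (ℤ × ℤ)) ⊆ MDelta a1 b1 a2 b2 := by
    intro P hP
    rw [Finset.mem_coe, hSstar, Finset.mem_union] at hP
    rcases hP with h | h
    · exact ((mem_Fb ha1 hb1 ha2 hb2 hD).mp h).1
    · have := hCsub h
      rw [Finset.mem_sdiff] at this
      exact ((mem_Fb ha1 hb1 ha2 hb2 hD).mp this.1).1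
  have hSv : ∀ P ∈ Sstar, vq a1 b1 a2 b2 P ≤ V := by
    intro P hP
    rw [hSstar, Finset.mem_union] at hP
    rcases hP with h | h
    · have := ((mem_Fb ha1 hb1 ha2 hb2 hD).mp h).2
      omega
    · have := hCsub h
      rw [Finset.mem_sdiff] at this
      exact ((mem_Fb ha1 hb1 ha2 hb2 hD).mp this.1).2
  -- cumulative counts of S*
  have key1 : ∀ X : ℤ, (Sstar.filter (fun P => vq a1 b1 a2 b2 P ≤ X)).card
      = min (Fcnt a1 b1 a2 b2 X) l := by
    intro X
    rcases le_or_gt X (V - 1) with hX | hX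
    · have hfe : Sstar.filter (fun P => vq a1 b1 a2 b2 P ≤ X) = Fb a1 b1 a2 b2 X := by
        ext P
        rw [Finset.mem_filter, mem_Fb ha1 hb1 ha2 hb2 hD]
        constructor
        · rintro ⟨hPS, hPv⟩
          exact ⟨hSsubM hPS, hPv⟩
        · rintro ⟨hPM, hPv⟩
          constructor
          · rw [hSstar, Finset.mem_union]
            left
            rw [mem_Fb ha1 hb1 ha2 hb2 hD]
            exact ⟨hPM, by omega⟩
          · exact hPv
      rw [hfe]
      have h1 : Fcnt a1 b1 a2 b2 X ≤ Fcnt a1 b1 a2 b2 (V - 1) :=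
        Fcnt_mono ha1 hb1 ha2 hb2 hD hX
      show Fcnt a1 b1 a2 b2 X = min (Fcnt a1 b1 a2 b2 X) l
      omega
    · have hXV : V ≤ X := by omega
      have hfe : Sstar.filter (fun P => vq a1 b1 a2 b2 P ≤ X) = Sstar := by
        apply Finset.filter_true_of_mem
        intro P hP
        have := hSv P hP
        omega
      rw [hfe, hScard]
      have h1 : l ≤ Fcnt a1 b1 a2 b2 X :=
        le_trans hFV (Fcnt_mono ha1 hb1 ha2 hb2 hD hXV)
      omega
  have key2 : ∀ X : ℤ, Multiset.countP (fun v => v ≤ X) (msOf Gl)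
      = min (Fcnt a1 b1 a2 b2 X) l := by
    intro X
    rw [countP_msOf]
    have hfe : Finset.univ.filter (fun a : Fin l => Gl a ≤ X)
        = Finset.univ.filter (fun a : Fin l => (a : ℕ) < Fcnt a1 b1 a2 b2 X) := by
      ext a
      rw [Finset.mem_filter, Finset.mem_filter]
      rw [hGl]
      simp only [Finset.mem_univ, true_and]
      rw [hGiff]
      omega
    rw [hfe, card_filter_lt_fin]
  have hquanta : Multiset.map (vq a1 b1 a2 b2) Sstar.val = msOf Gl := by
    apply ms_eq_of_cum
    intro X
    rw [key2 X]
    rw [Multiset.countP_map]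
    rw [← key1 X]
    congr 1
  have hquanta' : ∀ (S : Multiset (ℤ × ℤ)), msOf (fun i => vq a1 b1 a2 b2 (listFn S i))
      = Multiset.map (vq a1 b1 a2 b2) S := by
    intro S
    rw [msOf_comp (vq a1 b1 a2 b2) (listFn S), msOf_listFn]
  have hSmin : hMin p a1 b1 a2 b2 Sstar.val = mv := by
    rw [hMin_eq_rmin, hmv]
    apply rmin_congr
    rw [hquanta' Sstar.val, hquanta]
  -- ======================= the optimal multiset T* =======================
  set Tstar : Multiset (ℤ × ℤ) := n • Sstar.val with hTstar
  have hTcard : Multiset.card Tstar = n * l := by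
    rw [hTstar, Multiset.card_nsmul]
    show n * Sstar.card = n * l
    rw [hScard]
  have hTmem : ∀ P ∈ Tstar, P ∈ MDelta a1 b1 a2 b2 := by
    intro P hP
    rw [hTstar] at hP
    exact hSsubM (Multiset.mem_of_mem_nsmul hP)
  have hTcount : ∀ P : ℤ × ℤ, Tstar.count P ≤ n := by
    intro P
    rw [hTstar, Multiset.count_nsmul]
    have h1 : Sstar.val.count P ≤ 1 :=
      Multiset.nodup_iff_count_le_one.mp Sstar.nodup P
    calc n * Sstar.val.count P ≤ n * 1 := Nat.mul_le_mul_left n h1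
      _ = n := mul_one n
  have hTmin : hMin p a1 b1 a2 b2 Tstar = (n : ℤ) * mv := by
    rw [hMin_eq_rmin]
    have e1 : msOf (fun i => vq a1 b1 a2 b2 (listFn Tstar i))
        = msOf (fun k : Fin (l * n) => Gl k.divNat) := by
      rw [hquanta' Tstar, hTstar, Multiset.map_nsmul, hquanta, msOf_divNat]
    rw [rmin_congr cst _ _ e1, rmin_scale cst Gl, hmv]
  -- ======================= conclusion =======================
  refine ⟨mv, ⟨⟨Sstar, hSsubM, hScard, hSmin.symm⟩, ?_⟩, ⟨⟨Tstar, hTmem, hTcard, hTcount,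
    hTmin.symm⟩, ?_⟩⟩
  · rintro h ⟨S, hS1, hS2, rfl⟩
    have h1 := keylb 1 (by omega) S.val
      (fun P hP => hS1 hP) (by rw [one_mul]; exact hS2)
      (fun P => Multiset.nodup_iff_count_le_one.mp S.nodup P)
    simpa using h1
  · rintro h ⟨T, hT1, hT2, hT3, rfl⟩
    exact keylb n hn T hT1 hT2 hT3
end
end
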